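/- arXiv:2007.03499 — 10 statements merged into one kernel-verified Lean document; each statement's English description precedes it below -/
import Mathlib

section
/- Let T > 0 and d > 0. There exists a constant C > 0 such that for every integer N ≥ 1 and every t > 0 one has (2π/(NT)) · ∑_{j ∈ J_N, j ≠ 0} exp(−2d ξ_j² t) ≤ C (1+t)^{−1/2}, where ξ_j = 2πj/(NT). -/
open Real Finset

/-- The index set `J_N = {j ∈ ℤ : -N/2 ≤ j < N/2}` of Bloch frequencies. -/
noncomputable def JN (N : ℕ) : Finset ℤ := Finset.Ico ⌈-(N : ℝ) / 2⌉ ⌈(N : ℝ) / 2⌉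

-- key sum bound
lemma sum_bound (c : ℝ) (hc : 0 < c) (N : ℕ) :
    ∑ j ∈ (JN N).erase 0, Real.exp (-c * (j : ℝ) ^ 2)
      ≤ 2 * min (N : ℝ) (Real.sqrt (π / c)) := by
  -- subset into Icc (-N) N erase 0
  have hsub : (JN N).erase 0 ⊆ (Finset.Icc (-(N:ℤ)) N).erase 0 := by
    intro j hj
    rw [Finset.mem_erase] at hj ⊢
    refine ⟨hj.1, ?_⟩
    have hj2 := Finset.mem_Ico.mp hj.2
    rw [Finset.mem_Icc]
    constructor
    · have : (-(N:ℝ)) ≤ -(N:ℝ)/2 := by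
        have : (0:ℝ) ≤ (N:ℝ) := Nat.cast_nonneg _
        linarith
      have h1 : (-(N:ℤ) : ℝ) ≤ ((⌈-(N:ℝ)/2⌉ : ℤ) : ℝ) := le_trans this (Int.le_ceil _)
      exact_mod_cast le_trans (by exact_mod_cast h1) hj2.1
    · have h2 : ((⌈(N:ℝ)/2⌉ : ℤ) : ℝ) < (N:ℝ) + 1 := by
        calc ((⌈(N:ℝ)/2⌉ : ℤ) : ℝ) < (N:ℝ)/2 + 1 := Int.ceil_lt_add_one _
          _ ≤ (N:ℝ) + 1 := by
            have : (0:ℝ) ≤ (N:ℝ) := Nat.cast_nonneg _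
            linarith
      have : ⌈(N:ℝ)/2⌉ ≤ (N:ℤ) := by exact_mod_cast Int.lt_add_one_iff.mp (by exact_mod_cast h2)
      omega
  have hpos : ∀ j : ℤ, 0 ≤ Real.exp (-c * (j : ℝ) ^ 2) := fun j => (Real.exp_pos _).le
  have h1 : ∑ j ∈ (JN N).erase 0, Real.exp (-c * (j : ℝ) ^ 2)
      ≤ ∑ j ∈ (Finset.Icc (-(N:ℤ)) N).erase 0, Real.exp (-c * (j : ℝ) ^ 2) :=
    Finset.sum_le_sum_of_subset_of_nonneg hsub (fun j _ _ => hpos j)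
  -- split symmetric set
  have hset : (Finset.Icc (-(N:ℤ)) N).erase 0
      = Finset.Icc (-(N:ℤ)) (-1) ∪ Finset.Icc 1 N := by
    ext j
    simp only [Finset.mem_erase, Finset.mem_Icc, Finset.mem_union]
    omega
  have hdisj : Disjoint (Finset.Icc (-(N:ℤ)) (-1)) (Finset.Icc 1 (N:ℤ)) := by
    rw [Finset.disjoint_left]
    intro j h1 h2
    rw [Finset.mem_Icc] at h1 h2
    omega
  have hneg : ∑ j ∈ Finset.Icc (-(N:ℤ)) (-1), Real.exp (-c * (j : ℝ) ^ 2)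
      = ∑ j ∈ Finset.Icc 1 (N:ℤ), Real.exp (-c * (j : ℝ) ^ 2) := by
    apply Finset.sum_nbij' (fun j => -j) (fun j => -j)
    · intro a ha; rw [Finset.mem_Icc] at ha ⊢; omega
    · intro a ha; rw [Finset.mem_Icc] at ha ⊢; omega
    · intro a _; ring
    · intro a _; ring
    · intro a _; push_cast; ring_nf
  have h2 : ∑ j ∈ (Finset.Icc (-(N:ℤ)) N).erase 0, Real.exp (-c * (j : ℝ) ^ 2)
      = 2 * ∑ j ∈ Finset.Icc 1 (N:ℤ), Real.exp (-c * (j : ℝ) ^ 2) := by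
    rw [hset, Finset.sum_union hdisj, hneg]; ring
  -- positive sum as range-sum
  have h3 : ∑ j ∈ Finset.Icc 1 (N:ℤ), Real.exp (-c * (j : ℝ) ^ 2)
      = ∑ i ∈ Finset.range N, Real.exp (-c * ((0:ℝ) + (i + 1 : ℕ)) ^ 2) := by
    refine Finset.sum_nbij' (i := fun j => (j - 1).toNat) (j := fun i => (i : ℤ) + 1)
      (f := fun j : ℤ => Real.exp (-c * (j : ℝ) ^ 2))
      (g := fun i : ℕ => Real.exp (-c * ((0:ℝ) + (i + 1 : ℕ)) ^ 2)) ?_ ?_ ?_ ?_ ?_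
    · intro a ha; rw [Finset.mem_Icc] at ha; rw [Finset.mem_range]; omega
    · intro a ha; rw [Finset.mem_range] at ha; rw [Finset.mem_Icc]; omega
    · intro a ha; rw [Finset.mem_Icc] at ha; omega
    · intro a _; omega
    · intro a ha
      rw [Finset.mem_Icc] at ha
      have h0 : ((a - 1).toNat : ℤ) = a - 1 := Int.toNat_of_nonneg (by omega)
      have h1 : (((a - 1).toNat : ℕ) : ℝ) = (a : ℝ) - 1 := by
        have := congrArg (fun z : ℤ => (z : ℝ)) h0
        push_cast at this
        exact this
      congr 2
      rw [Nat.cast_add, Nat.cast_one, h1]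
      ring
  -- two bounds on positive sum
  have hb1 : ∑ i ∈ Finset.range N, Real.exp (-c * ((0:ℝ) + (i + 1 : ℕ)) ^ 2) ≤ (N : ℝ) := by
    calc ∑ i ∈ Finset.range N, Real.exp (-c * ((0:ℝ) + (i + 1 : ℕ)) ^ 2)
        ≤ ∑ i ∈ Finset.range N, 1 := by
          apply Finset.sum_le_sum
          intro i _
          rw [Real.exp_le_one_iff]
          nlinarith [sq_nonneg ((0:ℝ) + (i + 1 : ℕ)), hc.le]
      _ = (N : ℝ) := by simp
  have hb2 : ∑ i ∈ Finset.range N, Real.exp (-c * ((0:ℝ) + (i + 1 : ℕ)) ^ 2)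
      ≤ Real.sqrt (π / c) := by
    have hanti : AntitoneOn (fun x : ℝ => Real.exp (-c * x ^ 2)) (Set.Icc (0:ℝ) (0 + N)) := by
      intro x hx y hy hxy
      dsimp only
      apply Real.exp_le_exp.mpr
      nlinarith [pow_le_pow_left₀ hx.1 hxy 2]
    refine hanti.sum_le_integral.trans ?_
    rw [intervalIntegral.integral_of_le (by positivity)]
    calc ∫ x in Set.Ioc (0:ℝ) (0 + N), Real.exp (-c * x ^ 2)
        ≤ ∫ x : ℝ, Real.exp (-c * x ^ 2) := by
          apply MeasureTheory.setIntegral_le_integral (integrable_exp_neg_mul_sq hc)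
          filter_upwards with x using (Real.exp_pos _).le
      _ = Real.sqrt (π / c) := integral_gaussian c
  calc ∑ j ∈ (JN N).erase 0, Real.exp (-c * (j : ℝ) ^ 2)
      ≤ 2 * ∑ i ∈ Finset.range N, Real.exp (-c * ((0:ℝ) + (i + 1 : ℕ)) ^ 2) := by
        rw [← h3, ← h2]; exact h1
    _ ≤ 2 * min (N : ℝ) (Real.sqrt (π / c)) := by
        have := le_min hb1 hb2
        linarith

/-- Proposition 4.1(i): uniform-in-`N` diffusive decay of the Riemann sum
`(2π/(NT)) ∑_{j ∈ J_N, j ≠ 0} e^{-2d ξ_j² t}`, where `ξ_j = 2πj/(NT)`. -/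
theorem uniform_sum_decay_half (T d : ℝ) (hT : 0 < T) (hd : 0 < d) :
    ∃ C : ℝ, 0 < C ∧ ∀ N : ℕ, 1 ≤ N → ∀ t : ℝ, 0 < t →
      2 * π / (N * T) *
          ∑ j ∈ (JN N).erase 0,
            Real.exp (-2 * d * (2 * π * (j : ℝ) / (N * T)) ^ 2 * t)
        ≤ C * (1 + t) ^ (-(1 / 2) : ℝ) := by
  have hπ := Real.pi_pos
  set K : ℝ := 2 * Real.sqrt π / Real.sqrt (2 * d) with hK
  have hKpos : 0 < K := by
    apply div_pos (by positivity) (Real.sqrt_pos.mpr (by linarith))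
  refine ⟨Real.sqrt 2 * (4 * π / T + K), by positivity, ?_⟩
  intro N hN t ht
  have hNpos : (0:ℝ) < N := by exact_mod_cast hN
  set a : ℝ := 2 * π / (N * T) with haa
  have hapos : 0 < a := by positivity
  set c : ℝ := 2 * d * a ^ 2 * t with hcc
  have hcpos : 0 < c := by positivity
  have hterm : ∀ j : ℤ, Real.exp (-2 * d * (2 * π * (j : ℝ) / (N * T)) ^ 2 * t)
      = Real.exp (-c * (j : ℝ) ^ 2) := by
    intro j
    congr 1
    rw [hcc, haa]
    ring
  rw [Finset.sum_congr rfl (fun j _ => hterm j)]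
  have hsum := sum_bound c hcpos N
  -- bound A : LHS ≤ 4π/T
  have hSnn : (0:ℝ) ≤ ∑ j ∈ (JN N).erase 0, Real.exp (-c * (j : ℝ) ^ 2) :=
    Finset.sum_nonneg fun j _ => (Real.exp_pos _).le
  have hA : a * ∑ j ∈ (JN N).erase 0, Real.exp (-c * (j : ℝ) ^ 2) ≤ 4 * π / T := by
    have h1 : a * ∑ j ∈ (JN N).erase 0, Real.exp (-c * (j : ℝ) ^ 2) ≤ a * (2 * N) := by
      apply mul_le_mul_of_nonneg_left _ hapos.le
      exact hsum.trans (by nlinarith [min_le_left (N:ℝ) (Real.sqrt (π / c))])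
    refine h1.trans (le_of_eq ?_)
    rw [haa]
    field_simp
    ring
  -- bound B : LHS ≤ K / √t
  have hB : a * ∑ j ∈ (JN N).erase 0, Real.exp (-c * (j : ℝ) ^ 2) ≤ K / Real.sqrt t := by
    have h1 : a * ∑ j ∈ (JN N).erase 0, Real.exp (-c * (j : ℝ) ^ 2)
        ≤ a * (2 * Real.sqrt (π / c)) := by
      apply mul_le_mul_of_nonneg_left _ hapos.le
      exact hsum.trans (by nlinarith [min_le_right (N:ℝ) (Real.sqrt (π / c))])
    refine h1.trans (le_of_eq ?_)
    have hc' : c = (2 * d * t) * a ^ 2 := by rw [hcc]; ring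
    have h2 : Real.sqrt (π / c) = Real.sqrt π / (Real.sqrt (2 * d * t) * a) := by
      rw [hc', Real.sqrt_div Real.pi_pos.le, Real.sqrt_mul (by positivity),
        Real.sqrt_sq hapos.le]
    rw [h2]
    have h3 : Real.sqrt (2 * d * t) = Real.sqrt (2 * d) * Real.sqrt t := by
      rw [Real.sqrt_mul (by linarith)]
    rw [h3, hK]
    have h4 : Real.sqrt (2*d) ≠ 0 := ne_of_gt (Real.sqrt_pos.mpr (by linarith))
    have h5 : Real.sqrt t ≠ 0 := ne_of_gt (Real.sqrt_pos.mpr ht)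
    field_simp
  -- combine
  have hrpow : (1 + t) ^ (-(1 / 2) : ℝ) = (Real.sqrt (1 + t))⁻¹ := by
    rw [Real.rpow_neg (by linarith), Real.sqrt_eq_rpow]
  rw [hrpow]
  have hs1t : 0 < Real.sqrt (1 + t) := Real.sqrt_pos.mpr (by linarith)
  rcases le_total t 1 with h | h
  · have h2 : Real.sqrt (1 + t) ≤ Real.sqrt 2 := Real.sqrt_le_sqrt (by linarith)
    have h3 : (Real.sqrt 2)⁻¹ ≤ (Real.sqrt (1 + t))⁻¹ :=
      inv_anti₀ hs1t h2
    calc a * ∑ j ∈ (JN N).erase 0, Real.exp (-c * (j : ℝ) ^ 2)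
        ≤ 4 * π / T := hA
      _ = Real.sqrt 2 * (4 * π / T + K) * (Real.sqrt 2)⁻¹ - K := by
          have : Real.sqrt 2 ≠ 0 := by positivity
          field_simp
          ring
      _ ≤ Real.sqrt 2 * (4 * π / T + K) * (Real.sqrt (1 + t))⁻¹ := by
          have hmul : Real.sqrt 2 * (4 * π / T + K) * (Real.sqrt 2)⁻¹
              ≤ Real.sqrt 2 * (4 * π / T + K) * (Real.sqrt (1 + t))⁻¹ := by
            apply mul_le_mul_of_nonneg_left h3 (by positivity)
          linarith
  · have h2 : Real.sqrt (1 + t) ≤ Real.sqrt 2 * Real.sqrt t := by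
      rw [← Real.sqrt_mul (by norm_num)]
      exact Real.sqrt_le_sqrt (by linarith)
    have hst : 0 < Real.sqrt t := Real.sqrt_pos.mpr ht
    have h3 : (Real.sqrt 2 * Real.sqrt t)⁻¹ ≤ (Real.sqrt (1 + t))⁻¹ :=
      inv_anti₀ hs1t h2
    calc a * ∑ j ∈ (JN N).erase 0, Real.exp (-c * (j : ℝ) ^ 2)
        ≤ K / Real.sqrt t := hB
      _ ≤ (4 * π / T + K) / Real.sqrt t := by
          exact (div_le_div_iff_of_pos_right hst).mpr (by nlinarith)
      _ = Real.sqrt 2 * (4 * π / T + K) * (Real.sqrt 2 * Real.sqrt t)⁻¹ := by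
          have h4 : Real.sqrt 2 ≠ 0 := by positivity
          field_simp
      _ ≤ Real.sqrt 2 * (4 * π / T + K) * (Real.sqrt (1 + t))⁻¹ := by
          apply mul_le_mul_of_nonneg_left h3 (by positivity)
end

section
/- Let T > 0 and d > 0. There exists a constant C > 0 such that for every integer N ≥ 1 and every t > 0 one has (2π/(NT)) · ∑_{j ∈ J_N} ξ_j² exp(−2d ξ_j² t) ≤ C (1+t)^{−3/2}, where ξ_j = 2πj/(NT). -/
open Real Finset

set_option maxHeartbeats 1000000


lemma pow_div_le_exp (u : ℝ) (hu : 0 ≤ u) (n : ℕ) : (u/n)^n ≤ Real.exp u := by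
  rcases Nat.eq_zero_or_pos n with h | h
  · simp [h]; positivity
  have h2 : u/n + 1 ≤ Real.exp (u/n) := by
    have := Real.add_one_le_exp (u/n); linarith
  have h3 : (u/n)^n ≤ (u/n+1)^n := by
    apply pow_le_pow_left₀ (by positivity); linarith
  have h4 : (u/n+1)^n ≤ (Real.exp (u/n))^n := by
    apply pow_le_pow_left₀ (by positivity) h2
  have h5 : (Real.exp (u/n))^n = Real.exp u := by
    rw [← Real.exp_nat_mul]
    congr 1; field_simp
  linarith

lemma exp_neg_le_pow (u : ℝ) (hu : 0 < u) (n : ℕ) (hn : 0 < n) :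
    Real.exp (-u) ≤ (n:ℝ)^n / u^n := by
  have h := pow_div_le_exp u hu.le n
  rw [div_pow] at h
  have hexp : 0 < Real.exp u := Real.exp_pos u
  have hun : 0 < u^n := by positivity
  have hnn : 0 < (n:ℝ)^n := by positivity
  rw [Real.exp_neg, inv_le_iff_one_le_mul₀ hexp, div_mul_eq_mul_div, le_div_iff₀ hun]
  rw [div_le_iff₀ hnn] at h
  nlinarith

lemma tele_aux (m : ℕ) (hm : 1 ≤ m) :
    ∀ N, m ≤ N → ∑ k ∈ Finset.Icc (m+1) N, (1:ℝ)/(k:ℝ)^2 ≤ 1/m - 1/N := by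
  refine Nat.le_induction ?_ ?_
  · simp
  · intro N hN ih
    rw [Finset.sum_Icc_succ_top (by omega)]
    have hN0 : (0:ℝ) < N := by exact_mod_cast (by omega : 0 < N)
    have hN1 : (0:ℝ) < (N:ℝ)+1 := by positivity
    have key : (1:ℝ)/((N:ℝ)+1)^2 ≤ 1/N - 1/(N+1) := by
      rw [div_sub_div _ _ (ne_of_gt hN0) (ne_of_gt hN1)]
      rw [div_le_div_iff₀ (by positivity) (by positivity)]
      ring_nf
      nlinarith
    push_cast
    linarith

lemma tele (m N : ℕ) (hm : 1 ≤ m) :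
    ∑ k ∈ Finset.Icc (m+1) N, (1:ℝ)/(k:ℝ)^2 ≤ 1/m := by
  rcases le_or_gt m N with h | h
  · have hN0 : (0:ℝ) < N := by exact_mod_cast (by omega : 0 < N)
    have h1 : (0:ℝ) ≤ 1/N := by positivity
    linarith [tele_aux m hm N h]
  · rw [Finset.Icc_eq_empty (by omega)]
    simp

lemma sum_inv_sq_aux (N : ℕ) :
    ∑ i ∈ Finset.range N, (1:ℝ)/((i:ℝ)+1)^2 ≤ 2 - 1/(N:ℝ) := by
  induction N with
  | zero => norm_num
  | succ N ih =>
    rw [Finset.sum_range_succ]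
    rcases Nat.eq_zero_or_pos N with h | h
    · subst h; norm_num
    have hN : (0:ℝ) < (N:ℝ) := by exact_mod_cast h
    have key : (1:ℝ)/((N:ℝ)+1)^2 ≤ 1/(N:ℝ) - 1/((N:ℝ)+1) := by
      rw [div_sub_div _ _ (ne_of_gt hN) (by positivity)]
      rw [div_le_div_iff₀ (by positivity) (by positivity)]
      nlinarith
    push_cast
    linarith

lemma sum_inv_sq (N : ℕ) : ∑ i ∈ Finset.range N, (1:ℝ)/((i:ℝ)+1)^2 ≤ 2 := by
  have := sum_inv_sq_aux N
  rcases Nat.eq_zero_or_pos N with h | h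
  · subst h; simp
  have hN : (0:ℝ) < (N:ℝ) := by exact_mod_cast h
  have h2 : (0:ℝ) ≤ 1/(N:ℝ) := by positivity
  linarith

lemma core (b : ℝ) (hb : 0 < b) (N : ℕ) :
    ∑ k ∈ Finset.range (N+1), (k:ℝ)^2 * Real.exp (-(b*(k:ℝ)^2))
      ≤ (10:ℝ)^11 / (b * Real.sqrt b) := by
  have hsb : 0 < Real.sqrt b := Real.sqrt_pos.mpr hb
  have hs2 : Real.sqrt b ^ 2 = b := Real.sq_sqrt hb.le
  have hbsb : 0 < b * Real.sqrt b := by positivity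
  rcases le_or_gt b 1 with hb1 | hb1
  · -- small b : split at m = ⌈1/√b⌉
    set m : ℕ := ⌈1/Real.sqrt b⌉₊ with hmdef
    have hm1 : 1 ≤ m := Nat.one_le_ceil_iff.mpr (by positivity)
    have hm1r : (1:ℝ) ≤ (m:ℝ) := by exact_mod_cast hm1
    have hmpos : (0:ℝ) < m := by linarith
    have hmlb : 1/Real.sqrt b ≤ (m:ℝ) := Nat.le_ceil _
    have hsb1 : Real.sqrt b ≤ 1 := by nlinarith
    have hmub : (m:ℝ) ≤ 2/Real.sqrt b := by
      have h1 : (m:ℝ) < 1/Real.sqrt b + 1 := Nat.ceil_lt_add_one (by positivity)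
      have h2 : (1:ℝ) ≤ 1/Real.sqrt b := by rw [le_div_iff₀ hsb]; linarith
      have h3 : (2:ℝ)/Real.sqrt b = 1/Real.sqrt b + 1/Real.sqrt b := by ring
      linarith
    rw [← Finset.sum_filter_add_sum_filter_not (Finset.range (N+1)) (· ≤ m)]
    have part1 : ∑ k ∈ (Finset.range (N+1)).filter (· ≤ m), (k:ℝ)^2 * Real.exp (-(b*(k:ℝ)^2))
        ≤ ((m:ℝ)+1) * (m:ℝ)^2 := by
      calc ∑ k ∈ (Finset.range (N+1)).filter (· ≤ m), (k:ℝ)^2 * Real.exp (-(b*(k:ℝ)^2))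
          ≤ ∑ _k ∈ (Finset.range (N+1)).filter (· ≤ m), (m:ℝ)^2 := by
            apply Finset.sum_le_sum
            intro k hk
            rw [Finset.mem_filter] at hk
            have hkm : (k:ℝ) ≤ (m:ℝ) := by exact_mod_cast hk.2
            have hk0 : (0:ℝ) ≤ (k:ℝ) := Nat.cast_nonneg k
            have he : Real.exp (-(b*(k:ℝ)^2)) ≤ 1 := by
              apply Real.exp_le_one_iff.mpr
              have : (0:ℝ) ≤ b*(k:ℝ)^2 := by positivity
              linarith
            have hk2 : (k:ℝ)^2 ≤ (m:ℝ)^2 := by nlinarith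
            nlinarith [Real.exp_pos (-(b*(k:ℝ)^2)), sq_nonneg (k:ℝ)]
        _ ≤ ((m:ℝ)+1) * (m:ℝ)^2 := by
            rw [Finset.sum_const, nsmul_eq_mul]
            have hcard : ((Finset.range (N+1)).filter (· ≤ m)).card ≤ m+1 := by
              have hsub : (Finset.range (N+1)).filter (· ≤ m) ⊆ Finset.range (m+1) := by
                intro k hk
                rw [Finset.mem_filter] at hk
                exact Finset.mem_range.mpr (by omega)
              simpa using Finset.card_le_card hsub
            have hcr : (((Finset.range (N+1)).filter (· ≤ m)).card : ℝ) ≤ (m:ℝ)+1 := by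
              exact_mod_cast hcard
            nlinarith [sq_nonneg (m:ℝ)]
    have part2 : ∑ k ∈ (Finset.range (N+1)).filter (¬ · ≤ m), (k:ℝ)^2 * Real.exp (-(b*(k:ℝ)^2))
        ≤ 27/(b^3 * (m:ℝ)^2) * (1/(m:ℝ)) := by
      calc ∑ k ∈ (Finset.range (N+1)).filter (¬ · ≤ m), (k:ℝ)^2 * Real.exp (-(b*(k:ℝ)^2))
          ≤ ∑ k ∈ (Finset.range (N+1)).filter (¬ · ≤ m), 27/(b^3 * (m:ℝ)^2) * (1/(k:ℝ)^2) := by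
            apply Finset.sum_le_sum
            intro k hk
            rw [Finset.mem_filter] at hk
            have hkm : m < k := by omega
            have hkm' : (m:ℝ) ≤ (k:ℝ) := by exact_mod_cast hkm.le
            have hkpos : (0:ℝ) < k := lt_of_lt_of_le hmpos hkm'
            have hbk : 0 < b * (k:ℝ)^2 := by positivity
            have he : Real.exp (-(b*(k:ℝ)^2)) ≤ 27/(b*(k:ℝ)^2)^3 := by
              have h27 := exp_neg_le_pow (b*(k:ℝ)^2) hbk 3 (by norm_num)
              norm_num at h27 ⊢
              exact h27
            calc (k:ℝ)^2 * Real.exp (-(b*(k:ℝ)^2)) ≤ (k:ℝ)^2 * (27/(b*(k:ℝ)^2)^3) := by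
                  apply mul_le_mul_of_nonneg_left he (by positivity)
              _ = 27/(b^3 * (k:ℝ)^4) := by field_simp
              _ ≤ 27/(b^3 * (m:ℝ)^2) * (1/(k:ℝ)^2) := by
                  rw [div_mul_div_comm, mul_one]
                  apply div_le_div_of_nonneg_left (by norm_num) (by positivity)
                  have hsq : (m:ℝ)^2 ≤ (k:ℝ)^2 := by nlinarith
                  nlinarith [mul_nonneg (pow_pos hb 3).le
                    (mul_nonneg (sq_nonneg ((k:ℝ))) (sub_nonneg.mpr hsq))]
        _ = 27/(b^3 * (m:ℝ)^2) * ∑ k ∈ (Finset.range (N+1)).filter (¬ · ≤ m), (1/(k:ℝ)^2) := by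
            rw [Finset.mul_sum]
        _ ≤ 27/(b^3 * (m:ℝ)^2) * (1/(m:ℝ)) := by
            apply mul_le_mul_of_nonneg_left _ (by positivity)
            calc ∑ k ∈ (Finset.range (N+1)).filter (¬ · ≤ m), (1/(k:ℝ)^2)
                ≤ ∑ k ∈ Finset.Icc (m+1) N, (1/(k:ℝ)^2) := by
                  apply Finset.sum_le_sum_of_subset_of_nonneg
                  · intro k hk
                    rw [Finset.mem_filter, Finset.mem_range] at hk
                    rw [Finset.mem_Icc]
                    omega
                  · intro k _ _; positivity
              _ ≤ 1/(m:ℝ) := tele m N hm1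
    have hmcube : ((m:ℝ)+1) * (m:ℝ)^2 ≤ 16 / (b * Real.sqrt b) := by
      have h1 : ((m:ℝ)+1) * (m:ℝ)^2 ≤ 2*(m:ℝ)^3 := by
        nlinarith [mul_le_mul_of_nonneg_left hm1r (sq_nonneg (m:ℝ))]
      have h2 : (m:ℝ)^3 ≤ (2/Real.sqrt b)^3 := pow_le_pow_left₀ (by positivity) hmub 3
      have h3 : (2/Real.sqrt b)^3 = 8/(b*Real.sqrt b) := by
        rw [div_pow]
        congr 1
        · norm_num
        · rw [pow_succ, hs2]
      rw [h3] at h2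
      have h5 : (16:ℝ)/(b*Real.sqrt b) = 2*(8/(b*Real.sqrt b)) := by ring
      linarith
    have hpart2' : 27/(b^3 * (m:ℝ)^2) * (1/(m:ℝ)) ≤ 27 / (b * Real.sqrt b) := by
      rw [div_mul_div_comm, mul_one]
      apply div_le_div_of_nonneg_left (by norm_num) hbsb
      have hm3 : 1/(b*Real.sqrt b) ≤ (m:ℝ)^3 := by
        have h4 : (1/Real.sqrt b)^3 ≤ (m:ℝ)^3 := pow_le_pow_left₀ (by positivity) hmlb 3
        calc 1/(b*Real.sqrt b) = (1/Real.sqrt b)^3 := by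
              rw [div_pow, one_pow, pow_succ, hs2]
          _ ≤ (m:ℝ)^3 := h4
      rw [div_le_iff₀ hbsb] at hm3
      nlinarith [mul_le_mul_of_nonneg_left hm3 hbsb.le, sq_nonneg (Real.sqrt b)]
    have hfin : (16:ℝ)/(b*Real.sqrt b) + 27/(b*Real.sqrt b) ≤ (10:ℝ)^11/(b*Real.sqrt b) := by
      rw [← add_div]
      gcongr
      norm_num
    linarith
  · -- large b
    have hA : (0:ℝ) < 11943936 := by norm_num
    calc ∑ k ∈ Finset.range (N+1), (k:ℝ)^2 * Real.exp (-(b*(k:ℝ)^2))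
        ≤ ∑ k ∈ Finset.range (N+1), 11943936 * Real.exp (-(b/2)) * (1/((k:ℝ)+1)^2) := by
          apply Finset.sum_le_sum
          intro k _
          rcases Nat.eq_zero_or_pos k with hk0 | hk0
          · subst hk0
            simp
            positivity
          have hk1r : (1:ℝ) ≤ (k:ℝ) := by exact_mod_cast hk0
          have hkpos : (0:ℝ) < (k:ℝ) := by linarith
          have hk2 : (1:ℝ) ≤ (k:ℝ)^2 := by nlinarith
          have step1 : Real.exp (-(b*(k:ℝ)^2)) ≤ Real.exp (-(b/2)) * Real.exp (-((k:ℝ)/2)) := by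
            rw [← Real.exp_add]
            apply Real.exp_le_exp.mpr
            have e1 : b ≤ b*(k:ℝ)^2 := le_mul_of_one_le_right hb.le hk2
            have hbk1 : (1:ℝ) ≤ b*(k:ℝ) := by nlinarith
            have e2 : (k:ℝ) ≤ b*(k:ℝ)^2 := by nlinarith [mul_nonneg hkpos.le (sub_nonneg.mpr hbk1)]
            linarith
          have step2 : Real.exp (-((k:ℝ)/2)) ≤ 2985984/(k:ℝ)^6 := by
            have h6 := exp_neg_le_pow ((k:ℝ)/2) (by positivity) 6 (by norm_num)
            have heq : ((6:ℕ):ℝ)^6 / ((k:ℝ)/2)^6 = 2985984/(k:ℝ)^6 := by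
              rw [div_pow]
              rw [div_div_eq_mul_div]
              norm_num
            rwa [heq] at h6
          have step3 : (k:ℝ)^2 * (2985984/(k:ℝ)^6) ≤ 11943936 * (1/((k:ℝ)+1)^2) := by
            have e1 : (k:ℝ)^2 * (2985984/(k:ℝ)^6) = 2985984/(k:ℝ)^4 := by
              field_simp
            have e2 : (2985984:ℝ)/(k:ℝ)^4 ≤ 2985984/(k:ℝ)^2 := by
              apply div_le_div_of_nonneg_left (by norm_num) (by positivity)
              nlinarith
            have e3 : (2985984:ℝ)/(k:ℝ)^2 ≤ 11943936 * (1/((k:ℝ)+1)^2) := by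
              rw [mul_one_div, div_le_div_iff₀ (by positivity) (by positivity)]
              nlinarith
            linarith [e1 ▸ le_refl ((k:ℝ)^2 * (2985984/(k:ℝ)^6)), e2, e3, e1.le]
          calc (k:ℝ)^2 * Real.exp (-(b*(k:ℝ)^2))
              ≤ (k:ℝ)^2 * (Real.exp (-(b/2)) * Real.exp (-((k:ℝ)/2))) := by
                apply mul_le_mul_of_nonneg_left step1 (by positivity)
            _ ≤ (k:ℝ)^2 * (Real.exp (-(b/2)) * (2985984/(k:ℝ)^6)) := by
                apply mul_le_mul_of_nonneg_left _ (by positivity)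
                exact mul_le_mul_of_nonneg_left step2 (Real.exp_pos _).le
            _ = Real.exp (-(b/2)) * ((k:ℝ)^2 * (2985984/(k:ℝ)^6)) := by ring
            _ ≤ Real.exp (-(b/2)) * (11943936 * (1/((k:ℝ)+1)^2)) := by
                apply mul_le_mul_of_nonneg_left step3 (Real.exp_pos _).le
            _ = 11943936 * Real.exp (-(b/2)) * (1/((k:ℝ)+1)^2) := by ring
      _ = 11943936 * Real.exp (-(b/2)) * ∑ k ∈ Finset.range (N+1), (1/((k:ℝ)+1)^2) := by
          rw [Finset.mul_sum]
      _ ≤ 11943936 * Real.exp (-(b/2)) * 2 := by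
          apply mul_le_mul_of_nonneg_left (sum_inv_sq (N+1)) (by positivity)
      _ ≤ (10:ℝ)^11 / (b * Real.sqrt b) := by
          have hexp : Real.exp (-(b/2)) ≤ 216/b^3 := by
            have h3 := exp_neg_le_pow (b/2) (by positivity) 3 (by norm_num)
            have heq : ((3:ℕ):ℝ)^3 / (b/2)^3 = 216/b^3 := by
              rw [div_pow, div_div_eq_mul_div]
              norm_num
            rwa [heq] at h3
          have hs1 : 1 ≤ Real.sqrt b := by nlinarith
          have hsbb : Real.sqrt b ≤ b := by nlinarith [mul_le_mul_of_nonneg_left hs1 hsb.le]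
          have hcube : b * Real.sqrt b ≤ b^3 := by
            nlinarith [mul_le_mul_of_nonneg_left hsbb hb.le,
              mul_nonneg (sq_nonneg b) (by linarith : (0:ℝ) ≤ b - 1)]
          have hb3 : (0:ℝ) < b^3 := by positivity
          have h216 : (216:ℝ)/b^3 ≤ 216/(b*Real.sqrt b) :=
            div_le_div_of_nonneg_left (by norm_num) hbsb hcube
          have hexp2 : Real.exp (-(b/2)) ≤ 216/(b*Real.sqrt b) := le_trans hexp h216
          calc 11943936 * Real.exp (-(b/2)) * 2 ≤ 11943936 * (216/(b*Real.sqrt b)) * 2 := by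
                have := mul_le_mul_of_nonneg_left hexp2 (by norm_num : (0:ℝ) ≤ 11943936)
                linarith
            _ = 5159780352/(b*Real.sqrt b) := by ring
            _ ≤ (10:ℝ)^11 / (b * Real.sqrt b) := by
                gcongr
                norm_num

lemma fold_sum (N : ℕ) (g : ℕ → ℝ) (hg : ∀ k, 0 ≤ g k) :
    ∑ j ∈ Finset.Icc (-(N:ℤ)) (N:ℤ), g j.natAbs ≤ 2 * ∑ k ∈ Finset.range (N+1), g k := by
  rw [Finset.sum_comp g Int.natAbs]
  have himg : (Finset.Icc (-(N:ℤ)) (N:ℤ)).image Int.natAbs ⊆ Finset.range (N+1) := by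
    intro k hk
    rw [Finset.mem_image] at hk
    obtain ⟨j, hj, rfl⟩ := hk
    rw [Finset.mem_Icc] at hj
    rw [Finset.mem_range]
    omega
  calc ∑ k ∈ (Finset.Icc (-(N:ℤ)) (N:ℤ)).image Int.natAbs,
        ((Finset.Icc (-(N:ℤ)) (N:ℤ)).filter (Int.natAbs · = k)).card • g k
      ≤ ∑ k ∈ (Finset.Icc (-(N:ℤ)) (N:ℤ)).image Int.natAbs, 2 * g k := by
        apply Finset.sum_le_sum
        intro k _
        rw [nsmul_eq_mul]
        have hcard : ((Finset.Icc (-(N:ℤ)) (N:ℤ)).filter (Int.natAbs · = k)).card ≤ 2 := by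
          have hsub : (Finset.Icc (-(N:ℤ)) (N:ℤ)).filter (Int.natAbs · = k)
              ⊆ insert ((k:ℤ)) {(-(k:ℤ))} := by
            intro j hj
            rw [Finset.mem_filter] at hj
            have := hj.2
            simp only [Finset.mem_insert, Finset.mem_singleton]
            omega
          calc ((Finset.Icc (-(N:ℤ)) (N:ℤ)).filter (Int.natAbs · = k)).card
              ≤ (insert ((k:ℤ)) ({(-(k:ℤ))} : Finset ℤ)).card := Finset.card_le_card hsub
            _ ≤ 2 := by
              apply le_trans (Finset.card_insert_le _ _)
              simp
        have : (((Finset.Icc (-(N:ℤ)) (N:ℤ)).filter (Int.natAbs · = k)).card : ℝ) ≤ 2 := by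
          exact_mod_cast hcard
        exact mul_le_mul_of_nonneg_right this (hg k)
    _ = 2 * ∑ k ∈ (Finset.Icc (-(N:ℤ)) (N:ℤ)).image Int.natAbs, g k := by
        rw [Finset.mul_sum]
    _ ≤ 2 * ∑ k ∈ Finset.range (N+1), g k := by
        apply mul_le_mul_of_nonneg_left _ (by norm_num)
        exact Finset.sum_le_sum_of_subset_of_nonneg himg (fun k _ _ => hg k)

/-- Proposition 4.1(ii): uniform-in-`N` diffusive decay of the weighted Riemann sum
`(2π/(NT)) ∑_{j ∈ J_N} ξ_j² e^{-2d ξ_j² t}`, where `ξ_j = 2πj/(NT)`. -/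
theorem uniform_sum_decay_threehalves (T d : ℝ) (hT : 0 < T) (hd : 0 < d) :
    ∃ C : ℝ, 0 < C ∧ ∀ N : ℕ, 1 ≤ N → ∀ t : ℝ, 0 < t →
      2 * π / (N * T) *
          ∑ j ∈ JN N,
            (2 * π * (j : ℝ) / (N * T)) ^ 2 *
              Real.exp (-2 * d * (2 * π * (j : ℝ) / (N * T)) ^ 2 * t)
        ≤ C * (1 + t) ^ (-(3 / 2) : ℝ) := by
  have hπ := Real.pi_pos
  have h2d : (0:ℝ) < 2*d := by linarith
  set K : ℝ := 2*(10:ℝ)^11 / (2*d*Real.sqrt (2*d)) with hKdef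
  have hK : 0 < K := by
    apply div_pos (by norm_num)
    positivity
  set F : ℝ := 4*π^3/T^3 with hFdef
  have hF : 0 < F := by positivity
  refine ⟨3*(F + K), by positivity, ?_⟩
  intro N hN t ht
  set h : ℝ := 2*π/((N:ℝ)*T) with hhdef
  have hN0 : (0:ℝ) < (N:ℝ) := by exact_mod_cast hN
  have hh : 0 < h := by positivity
  set b : ℝ := 2*d*t*h^2 with hbdef
  have hb : 0 < b := by positivity
  -- subset and cardinality facts for JN
  have hceil1 : ⌈(N:ℝ)/2⌉ ≤ (N:ℤ) := by
    apply Int.ceil_le.mpr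
    push_cast
    linarith
  have hceil2 : -(N:ℤ) ≤ ⌈-(N:ℝ)/2⌉ := by
    have : (((-N : ℤ)):ℝ) ≤ -(N:ℝ)/2 := by push_cast; linarith
    calc (-(N:ℤ)) = ⌈(((-N:ℤ)):ℝ)⌉ := (Int.ceil_intCast _).symm
      _ ≤ ⌈-(N:ℝ)/2⌉ := Int.ceil_le_ceil this
  have hsub : JN N ⊆ Finset.Icc (-(N:ℤ)) (N:ℤ) := by
    intro j hj
    rw [JN, Finset.mem_Ico] at hj
    rw [Finset.mem_Icc]
    omega
  -- pointwise rewrite of the summand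
  have hterm : ∀ j : ℤ,
      (2 * π * (j : ℝ) / ((N:ℝ) * T)) ^ 2 *
        Real.exp (-2 * d * (2 * π * (j : ℝ) / ((N:ℝ) * T)) ^ 2 * t)
      = h^2 * (((j.natAbs:ℝ))^2 * Real.exp (-(b*((j.natAbs:ℝ))^2))) := by
    intro j
    have hj2 : ((j.natAbs:ℝ))^2 = ((j:ℝ))^2 := by
      rw [Nat.cast_natAbs, Int.cast_abs, sq_abs]
    rw [hj2]
    rw [show 2*π*(j:ℝ)/((N:ℝ)*T) = h*(j:ℝ) by rw [hhdef]; ring]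
    rw [show -2*d*(h*(j:ℝ))^2*t = -(b*((j:ℝ))^2) by rw [hbdef]; ring]
    ring
  -- the two bounds on the sum
  set g : ℕ → ℝ := fun k => ((k:ℝ))^2 * Real.exp (-(b*((k:ℝ))^2)) with hgdef
  have hg : ∀ k, 0 ≤ g k := by intro k; positivity
  have hsum : ∑ j ∈ JN N,
      (2 * π * (j : ℝ) / ((N:ℝ) * T)) ^ 2 *
        Real.exp (-2 * d * (2 * π * (j : ℝ) / ((N:ℝ) * T)) ^ 2 * t)
      = h^2 * ∑ j ∈ JN N, g j.natAbs := by
    rw [Finset.mul_sum]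
    exact Finset.sum_congr rfl (fun j _ => hterm j)
  -- decay bound
  have hdecay : 2*π/((N:ℝ)*T) * ∑ j ∈ JN N,
      (2 * π * (j : ℝ) / ((N:ℝ) * T)) ^ 2 *
        Real.exp (-2 * d * (2 * π * (j : ℝ) / ((N:ℝ) * T)) ^ 2 * t)
      ≤ K / (t * Real.sqrt t) := by
    rw [hsum]
    have h1 : ∑ j ∈ JN N, g j.natAbs ≤ ∑ j ∈ Finset.Icc (-(N:ℤ)) (N:ℤ), g j.natAbs :=
      Finset.sum_le_sum_of_subset_of_nonneg hsub (fun j _ _ => hg j.natAbs)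
    have h2 := fold_sum N g hg
    have h3 := core b hb N
    have h4 : ∑ j ∈ JN N, g j.natAbs ≤ 2 * ((10:ℝ)^11 / (b * Real.sqrt b)) := by
      have := mul_le_mul_of_nonneg_left h3 (by norm_num : (0:ℝ) ≤ 2)
      calc ∑ j ∈ JN N, g j.natAbs ≤ 2 * ∑ k ∈ Finset.range (N+1), g k := le_trans h1 h2
        _ ≤ 2 * ((10:ℝ)^11 / (b * Real.sqrt b)) := this
    have hbsb : b * Real.sqrt b = (2*d*Real.sqrt (2*d))*(t*Real.sqrt t)*h^3 := by
      have hsb : Real.sqrt b = Real.sqrt (2*d) * Real.sqrt t * h := by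
        rw [hbdef, show 2*d*t*h^2 = (2*d)*(t*h^2) by ring,
          Real.sqrt_mul h2d.le, Real.sqrt_mul ht.le, Real.sqrt_sq hh.le]
        ring
      rw [hbdef, hsb]
      ring
    have key : 2*π/((N:ℝ)*T) * (h^2 * (2 * ((10:ℝ)^11 / (b * Real.sqrt b))))
        = K / (t * Real.sqrt t) := by
      rw [show 2*π/((N:ℝ)*T) = h from rfl, hbsb, hKdef]
      have hst : (0:ℝ) < Real.sqrt t := Real.sqrt_pos.mpr ht
      have hsd : (0:ℝ) < Real.sqrt (2*d) := Real.sqrt_pos.mpr h2d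
      field_simp
    calc 2*π/((N:ℝ)*T) * (h^2 * ∑ j ∈ JN N, g j.natAbs)
        ≤ 2*π/((N:ℝ)*T) * (h^2 * (2 * ((10:ℝ)^11 / (b * Real.sqrt b)))) := by
          apply mul_le_mul_of_nonneg_left _ (by positivity)
          exact mul_le_mul_of_nonneg_left h4 (by positivity)
      _ = K / (t * Real.sqrt t) := key
  -- flat bound
  have hflat : 2*π/((N:ℝ)*T) * ∑ j ∈ JN N,
      (2 * π * (j : ℝ) / ((N:ℝ) * T)) ^ 2 *
        Real.exp (-2 * d * (2 * π * (j : ℝ) / ((N:ℝ) * T)) ^ 2 * t)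
      ≤ F := by
    have hcard : ((JN N).card : ℝ) ≤ 2*(N:ℝ) := by
      have h5 : (JN N).card ≤ 2*N := by
        rw [JN, Int.card_Ico]
        omega
      calc ((JN N).card : ℝ) ≤ ((2*N : ℕ) : ℝ) := by exact_mod_cast h5
        _ = 2*(N:ℝ) := by push_cast; ring
    have hterm2 : ∀ j ∈ JN N,
        (2 * π * (j : ℝ) / ((N:ℝ) * T)) ^ 2 *
          Real.exp (-2 * d * (2 * π * (j : ℝ) / ((N:ℝ) * T)) ^ 2 * t) ≤ π^2/T^2 := by
      intro j hj
      rw [JN, Finset.mem_Ico] at hj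
      have hjub : (j:ℝ) ≤ (N:ℝ)/2 := by
        have h6 : (j:ℝ) ≤ (⌈(N:ℝ)/2⌉:ℝ) - 1 := by
          have : j ≤ ⌈(N:ℝ)/2⌉ - 1 := by omega
          exact_mod_cast this
        have h7 : (⌈(N:ℝ)/2⌉:ℝ) < (N:ℝ)/2 + 1 := Int.ceil_lt_add_one _
        linarith
      have hjlb : -((N:ℝ)/2) ≤ (j:ℝ) := by
        have h8 : (⌈-(N:ℝ)/2⌉:ℝ) ≤ (j:ℝ) := by exact_mod_cast hj.1
        have h9 : -(N:ℝ)/2 ≤ (⌈-(N:ℝ)/2⌉:ℝ) := Int.le_ceil _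
        linarith
      have hj2 : (j:ℝ)^2 ≤ ((N:ℝ)/2)^2 := by nlinarith
      have hxi : (2 * π * (j : ℝ) / ((N:ℝ) * T)) ^ 2 ≤ π^2/T^2 := by
        rw [div_pow, div_le_div_iff₀ (by positivity) (by positivity)]
        have expand : (2*π*(j:ℝ))^2 = 4*π^2*(j:ℝ)^2 := by ring
        rw [expand, mul_pow]
        nlinarith [mul_le_mul_of_nonneg_left hj2 (by positivity : (0:ℝ) ≤ 4*π^2*T^2)]
      have hexp1 : Real.exp (-2 * d * (2 * π * (j : ℝ) / ((N:ℝ) * T)) ^ 2 * t) ≤ 1 := by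
        apply Real.exp_le_one_iff.mpr
        have : (0:ℝ) ≤ 2 * d * (2 * π * (j : ℝ) / ((N:ℝ) * T)) ^ 2 * t := by positivity
        nlinarith
      nlinarith [Real.exp_pos (-2 * d * (2 * π * (j : ℝ) / ((N:ℝ) * T)) ^ 2 * t),
        sq_nonneg (2 * π * (j : ℝ) / ((N:ℝ) * T))]
    have hsum2 : ∑ j ∈ JN N,
        (2 * π * (j : ℝ) / ((N:ℝ) * T)) ^ 2 *
          Real.exp (-2 * d * (2 * π * (j : ℝ) / ((N:ℝ) * T)) ^ 2 * t)
        ≤ 2*(N:ℝ) * (π^2/T^2) := by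
      calc ∑ j ∈ JN N, (2 * π * (j : ℝ) / ((N:ℝ) * T)) ^ 2 *
            Real.exp (-2 * d * (2 * π * (j : ℝ) / ((N:ℝ) * T)) ^ 2 * t)
          ≤ ∑ _j ∈ JN N, π^2/T^2 := Finset.sum_le_sum hterm2
        _ = ((JN N).card : ℝ) * (π^2/T^2) := by rw [Finset.sum_const, nsmul_eq_mul]
        _ ≤ 2*(N:ℝ) * (π^2/T^2) := by
            apply mul_le_mul_of_nonneg_right hcard (by positivity)
    calc 2*π/((N:ℝ)*T) * ∑ j ∈ JN N,
          (2 * π * (j : ℝ) / ((N:ℝ) * T)) ^ 2 *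
            Real.exp (-2 * d * (2 * π * (j : ℝ) / ((N:ℝ) * T)) ^ 2 * t)
        ≤ 2*π/((N:ℝ)*T) * (2*(N:ℝ) * (π^2/T^2)) := by
          apply mul_le_mul_of_nonneg_left hsum2 (by positivity)
      _ = F := by
          rw [hFdef]
          field_simp
          ring
  -- rpow facts
  have hp1 : (0:ℝ) < 1 + t := by linarith
  have hrw : (1+t) ^ (-(3/2) : ℝ) = ((1+t) ^ ((3:ℝ)/2))⁻¹ := by
    rw [← Real.rpow_neg hp1.le]
  have hrpos : (0:ℝ) < (1+t) ^ ((3:ℝ)/2) := Real.rpow_pos_of_pos hp1 _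
  have hsqrt8 : (2:ℝ) ^ ((3:ℝ)/2) ≤ 3 := by
    rw [show ((3:ℝ)/2) = (3:ℕ)*((1:ℝ)/2) by push_cast; ring,
      Real.rpow_natCast_mul (by norm_num)]
    have : ((2:ℝ)^(3:ℕ) : ℝ) = 8 := by norm_num
    rw [show ((2:ℝ) ^ (3:ℕ) : ℝ) ^ ((1:ℝ)/2) = (8:ℝ) ^ ((1:ℝ)/2) by norm_num,
      show (8:ℝ) ^ ((1:ℝ)/2) = Real.sqrt 8 by rw [Real.sqrt_eq_rpow]]
    calc Real.sqrt 8 ≤ Real.sqrt 9 := Real.sqrt_le_sqrt (by norm_num)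
      _ = 3 := by
          rw [show (9:ℝ) = 3^2 by norm_num, Real.sqrt_sq (by norm_num)]
  rcases le_or_gt t 1 with ht1 | ht1
  · -- small t
    have h32 : (1+t) ^ ((3:ℝ)/2) ≤ 3 := by
      calc (1+t) ^ ((3:ℝ)/2) ≤ (2:ℝ) ^ ((3:ℝ)/2) :=
            Real.rpow_le_rpow hp1.le (by linarith) (by norm_num)
        _ ≤ 3 := hsqrt8
    have hC : F ≤ 3*(F+K) * ((1+t) ^ ((3:ℝ)/2))⁻¹ := by
      rw [← div_eq_mul_inv, le_div_iff₀ hrpos]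
      nlinarith [mul_le_mul_of_nonneg_left h32 hF.le]
    rw [hrw]
    linarith
  · -- large t
    have hst : (0:ℝ) < Real.sqrt t := Real.sqrt_pos.mpr ht
    have ht32 : t ^ ((3:ℝ)/2) = t * Real.sqrt t := by
      rw [show ((3:ℝ)/2) = 1 + (1:ℝ)/2 by norm_num, Real.rpow_add ht, Real.rpow_one,
        ← Real.sqrt_eq_rpow]
    have h32 : (1+t) ^ ((3:ℝ)/2) ≤ 3 * (t * Real.sqrt t) := by
      calc (1+t) ^ ((3:ℝ)/2) ≤ (2*t) ^ ((3:ℝ)/2) :=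
            Real.rpow_le_rpow hp1.le (by linarith) (by norm_num)
        _ = (2:ℝ) ^ ((3:ℝ)/2) * t ^ ((3:ℝ)/2) := Real.mul_rpow (by norm_num) ht.le
        _ ≤ 3 * (t * Real.sqrt t) := by
            rw [ht32]
            apply mul_le_mul_of_nonneg_right hsqrt8 (by positivity)
    have hC : K / (t * Real.sqrt t) ≤ 3*(F+K) * ((1+t) ^ ((3:ℝ)/2))⁻¹ := by
      rw [← div_eq_mul_inv, div_le_div_iff₀ (by positivity) hrpos]
      have htpos : (0:ℝ) < t * Real.sqrt t := by positivity
      calc K * (1+t) ^ ((3:ℝ)/2) ≤ K * (3 * (t * Real.sqrt t)) :=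
            mul_le_mul_of_nonneg_left h32 hK.le
        _ = 3*K * (t * Real.sqrt t) := by ring
        _ ≤ 3*(F+K) * (t * Real.sqrt t) := by nlinarith
    rw [hrw]
    linarith
end

section
/- Let T > 0 and d > 0. There exists a constant C > 0 such that for every integer N ≥ 1 and every t > 0 one has | (2π/(NT)) · ∑_{j ∈ J_N, j ≠ 0} exp(−2d ξ_j² t) − ∫_{−π/T}^{π/T} exp(−2d ξ² t) dξ | ≤ C / N, where ξ_j = 2πj/(NT). -/
open Real Finset

private lemma gauss_anti {c : ℝ} (hc : 0 < c) :
    AntitoneOn (fun x : ℝ => Real.exp (-c * x ^ 2)) (Set.Ici 0) := by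
  intro x hx y hy hxy
  simp only [Set.mem_Ici] at hx hy
  have hsq : x ^ 2 ≤ y ^ 2 := by nlinarith
  exact Real.exp_le_exp.2 (by nlinarith)

/-- Key one-sided Riemann sum estimate for a Gaussian, uniform in `c > 0`. -/
private lemma gauss_key {c : ℝ} (hc : 0 < c) (m : ℕ) (B : ℝ) (h1 : (m : ℝ) ≤ B)
    (h2 : B ≤ (m : ℝ) + 1) :
    |(∑ i ∈ Finset.range m, Real.exp (-c * ((i : ℝ) + 1) ^ 2)) -
      ∫ x in (0:ℝ)..B, Real.exp (-c * x ^ 2)| ≤ 1 := by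
  set g : ℝ → ℝ := fun x => Real.exp (-c * x ^ 2) with hg
  have hcont : Continuous g := by fun_prop
  have hBnn : (0:ℝ) ≤ B := le_trans (by positivity) h1
  have hintab : ∀ a b : ℝ, IntervalIntegrable g MeasureTheory.volume a b :=
    fun a b => hcont.intervalIntegrable a b
  -- upper bound: sum ≤ ∫_0^m g ≤ ∫_0^B g
  have hup : (∑ i ∈ Finset.range m, g ((i : ℝ) + 1)) ≤ ∫ x in (0:ℝ)..B, g x := by
    have h := AntitoneOn.sum_le_integral (x₀ := 0) (a := m) (f := g)
      ((gauss_anti hc).mono (by intro x hx; exact hx.1))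
    have heq : (∑ i ∈ Finset.range m, g (0 + ((i + 1 : ℕ) : ℝ)))
        = ∑ i ∈ Finset.range m, g ((i : ℝ) + 1) := by
      apply Finset.sum_congr rfl; intro i _; push_cast; ring_nf
    have hsplit : (∫ x in (0:ℝ)..B, g x)
        = (∫ x in (0:ℝ)..(m:ℝ), g x) + ∫ x in (m:ℝ)..B, g x :=
      (intervalIntegral.integral_add_adjacent_intervals (hintab _ _) (hintab _ _)).symm
    have hnn : (0:ℝ) ≤ ∫ x in (m:ℝ)..B, g x :=
      intervalIntegral.integral_nonneg h1 (fun x _ => (Real.exp_pos _).le)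
    rw [heq, zero_add] at h
    rw [hsplit]
    linarith
  -- lower bound: ∫_0^B g ≤ ∫_0^{m+1} g ≤ 1 + sum
  have hdown : (∫ x in (0:ℝ)..B, g x) ≤ 1 + ∑ i ∈ Finset.range m, g ((i : ℝ) + 1) := by
    have h := AntitoneOn.integral_le_sum (x₀ := 0) (a := m + 1) (f := g)
      ((gauss_anti hc).mono (by intro x hx; exact hx.1))
    have heq : (∑ i ∈ Finset.range (m + 1), g (0 + (i : ℕ)))
        = g 0 + ∑ i ∈ Finset.range m, g ((i : ℝ) + 1) := by
      rw [Finset.sum_range_succ']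
      have : ∀ i ∈ Finset.range m, g (0 + ((i + 1 : ℕ) : ℝ)) = g ((i : ℝ) + 1) := by
        intro i _; push_cast; ring_nf
      rw [Finset.sum_congr rfl this]
      simp [add_comm]
    have hg0 : g 0 = 1 := by simp [hg]
    have hsplit : (∫ x in (0:ℝ)..((m:ℝ)+1), g x)
        = (∫ x in (0:ℝ)..B, g x) + ∫ x in B..((m:ℝ)+1), g x :=
      (intervalIntegral.integral_add_adjacent_intervals (hintab _ _) (hintab _ _)).symm
    have hnn : (0:ℝ) ≤ ∫ x in B..((m:ℝ)+1), g x :=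
      intervalIntegral.integral_nonneg h2 (fun x _ => (Real.exp_pos _).le)
    have hcast : ((0:ℝ) + ((m + 1 : ℕ) : ℝ)) = (m:ℝ) + 1 := by push_cast; ring
    rw [heq, hg0, hcast] at h
    rw [hsplit] at h
    linarith
  rw [abs_le]
  constructor <;> linarith

/-- Reindexing of a sum over positive integers. -/
private lemma sum_Ico_pos (F : ℤ → ℝ) (m : ℕ) :
    ∑ j ∈ Finset.Ico (1:ℤ) ((m:ℤ) + 1), F j = ∑ i ∈ Finset.range m, F ((i:ℤ) + 1) := by
  symm
  refine Finset.sum_nbij' (i := fun a : ℕ => (a:ℤ) + 1) (j := fun b : ℤ => (b - 1).toNat)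
    ?_ ?_ ?_ ?_ ?_
  · intro a ha
    simp only [Finset.mem_range] at ha
    simp only [Finset.mem_Ico]
    omega
  · intro b hb
    simp only [Finset.mem_Ico] at hb
    simp only [Finset.mem_range]
    omega
  · intro a _; omega
  · intro b hb; simp only [Finset.mem_Ico] at hb; omega
  · intro a _; rfl

/-- Reindexing of a sum over negative integers. -/
private lemma sum_Ico_neg (F : ℤ → ℝ) (m : ℕ) :
    ∑ j ∈ Finset.Ico (-(m:ℤ)) 0, F j = ∑ i ∈ Finset.range m, F (-((i:ℤ) + 1)) := by
  symm
  refine Finset.sum_nbij' (i := fun a : ℕ => -((a:ℤ) + 1)) (j := fun b : ℤ => (-b - 1).toNat)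
    ?_ ?_ ?_ ?_ ?_
  · intro a ha
    simp only [Finset.mem_range] at ha
    simp only [Finset.mem_Ico]
    omega
  · intro b hb
    simp only [Finset.mem_Ico] at hb
    simp only [Finset.mem_range]
    omega
  · intro a _; omega
  · intro b hb; simp only [Finset.mem_Ico] at hb; omega
  · intro a _; rfl

/-- First estimate of Proposition 5.1: the Riemann sum
`(2π/(NT)) ∑_{j ∈ J_N, j ≠ 0} e^{-2d ξ_j² t}` approximates the Gaussian integral
`∫_{-π/T}^{π/T} e^{-2dξ²t} dξ` with error at most `C/N`, uniformly in `t > 0`. -/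
theorem sharp_sum_integral_comparison (T d : ℝ) (hT : 0 < T) (hd : 0 < d) :
    ∃ C : ℝ, 0 < C ∧ ∀ N : ℕ, 1 ≤ N → ∀ t : ℝ, 0 < t →
      |2 * π / (N * T) *
            ∑ j ∈ (JN N).erase 0,
              Real.exp (-2 * d * (2 * π * (j : ℝ) / (N * T)) ^ 2 * t) -
          ∫ ξ in (-(π / T))..(π / T), Real.exp (-2 * d * ξ ^ 2 * t)|
        ≤ C / N := by
  refine ⟨4 * π / T, by positivity, ?_⟩
  intro N hN t ht
  have hNpos : (0:ℝ) < N := by exact_mod_cast hN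
  set h : ℝ := 2 * π / (N * T) with hh
  have hhpos : 0 < h := by positivity
  set c : ℝ := 2 * d * h ^ 2 * t with hc
  have hcpos : 0 < c := by positivity
  set g : ℝ → ℝ := fun x => Real.exp (-c * x ^ 2) with hgdef
  set B : ℝ := (N : ℝ) / 2 with hB
  -- endpoints of JN
  set lo : ℤ := ⌈-(N : ℝ) / 2⌉ with hlo
  set hi : ℤ := ⌈(N : ℝ) / 2⌉ with hhi
  have hipos : 1 ≤ hi := by
    have : (0:ℤ) < ⌈(N:ℝ)/2⌉ := Int.lt_ceil.mpr (by push_cast; linarith)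
    omega
  have hlole : lo ≤ 0 := by
    rw [hlo]
    refine Int.ceil_le.mpr ?_
    push_cast
    linarith
  set mpos : ℕ := (hi - 1).toNat with hmpos
  set mneg : ℕ := (-lo).toNat with hmneg
  have hmposZ : (mpos : ℤ) = hi - 1 := by omega
  have hmnegZ : (mneg : ℤ) = -lo := by omega
  -- the summand equals g
  have hFg : ∀ j : ℤ, Real.exp (-2 * d * (2 * π * (j : ℝ) / (N * T)) ^ 2 * t) = g (j : ℝ) := by
    intro j
    simp only [hgdef, hc, hh]
    congr 1
    field_simp
  -- split the sum
  have hzero_mem : (0:ℤ) ∈ Finset.Ico lo hi := by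
    simp only [Finset.mem_Ico]; omega
  have hsum_split :
      (∑ j ∈ (JN N).erase 0,
        Real.exp (-2 * d * (2 * π * (j : ℝ) / (N * T)) ^ 2 * t))
      = (∑ i ∈ Finset.range mneg, g ((i:ℝ) + 1))
        + ∑ i ∈ Finset.range mpos, g ((i:ℝ) + 1) := by
    have hJN : JN N = Finset.Ico lo hi := rfl
    set F : ℤ → ℝ := fun j => Real.exp (-2 * d * (2 * π * (j : ℝ) / (N * T)) ^ 2 * t) with hF
    have h1 : ∑ j ∈ (Finset.Ico lo hi).erase 0, F j
        = (∑ j ∈ Finset.Ico lo 0, F j) + ∑ j ∈ Finset.Ico 1 hi, F j := by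
      have hdisj : Disjoint (Finset.Ico lo (0:ℤ)) (Finset.Ico 1 hi) := by
        apply Finset.disjoint_left.mpr
        intro a ha hb
        simp only [Finset.mem_Ico] at ha hb
        omega
      rw [← Finset.sum_union hdisj]
      apply Finset.sum_congr _ (fun _ _ => rfl)
      ext j
      simp only [Finset.mem_erase, Finset.mem_Ico, Finset.mem_union]
      omega
    rw [hJN, h1]
    have h2 : ∑ j ∈ Finset.Ico (1:ℤ) hi, F j = ∑ i ∈ Finset.range mpos, g ((i:ℝ) + 1) := by
      have : hi = (mpos : ℤ) + 1 := by omega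
      rw [this, sum_Ico_pos]
      apply Finset.sum_congr rfl
      intro i _
      rw [hF]
      simp only
      rw [hFg]
      push_cast
      ring_nf
    have h3 : ∑ j ∈ Finset.Ico lo (0:ℤ), F j = ∑ i ∈ Finset.range mneg, g ((i:ℝ) + 1) := by
      have : lo = -(mneg : ℤ) := by omega
      rw [this, sum_Ico_neg]
      apply Finset.sum_congr rfl
      intro i _
      rw [hF]
      simp only
      rw [hFg]
      push_cast
      simp only [hgdef]
      ring_nf
    rw [h2, h3]
  -- transform the integral
  have hint_eq : (∫ ξ in (-(π / T))..(π / T), Real.exp (-2 * d * ξ ^ 2 * t))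
      = h * ((∫ x in (0:ℝ)..B, g x) + ∫ x in (0:ℝ)..B, g x) := by
    have hsub : (h • ∫ x in (-B)..B, (fun ξ => Real.exp (-2 * d * ξ ^ 2 * t)) (h * x))
        = ∫ ξ in (h * (-B))..(h * B), Real.exp (-2 * d * ξ ^ 2 * t) :=
      intervalIntegral.smul_integral_comp_mul_left
        (a := -B) (b := B) (f := fun ξ => Real.exp (-2 * d * ξ ^ 2 * t)) h
    have hhB : h * B = π / T := by
      rw [hh, hB]; field_simp
    have hcomp : ∀ x : ℝ, Real.exp (-2 * d * (h * x) ^ 2 * t) = g x := by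
      intro x; simp only [hgdef, hc]; congr 1; ring
    have hint1 : (∫ x in (-B)..B, g x)
        = (∫ x in (-B)..(0:ℝ), g x) + ∫ x in (0:ℝ)..B, g x :=
      (intervalIntegral.integral_add_adjacent_intervals
        ((Continuous.intervalIntegrable (by fun_prop) _ _))
        ((Continuous.intervalIntegrable (by fun_prop) _ _))).symm
    have hrefl : (∫ x in (-B)..(0:ℝ), g x) = ∫ x in (0:ℝ)..B, g x := by
      have := intervalIntegral.integral_comp_neg (a := (0:ℝ)) (b := B) (f := g)
      have hev : (fun x => g (-x)) = g := by
        funext x; simp only [hgdef]; ring_nf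
      rw [hev] at this
      simp only [neg_zero] at this
      exact this.symm
    rw [show (-(π / T)) = h * (-B) by rw [← hhB]; ring, ← hhB, ← hsub]
    simp only [smul_eq_mul]
    have : (∫ x in (-B)..B, Real.exp (-2 * d * (h * x) ^ 2 * t)) = ∫ x in (-B)..B, g x := by
      apply intervalIntegral.integral_congr
      intro x _
      exact hcomp x
    rw [this, hint1, hrefl]
  -- endpoint inequalities
  have hceil_lt : ((hi : ℝ)) < (N:ℝ)/2 + 1 := by
    rw [hhi]; exact Int.ceil_lt_add_one _
  have hmposB1 : (mpos : ℝ) ≤ B := by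
    have : ((mpos : ℤ) : ℝ) = (hi : ℝ) - 1 := by exact_mod_cast hmposZ
    push_cast at this ⊢
    rw [hB]
    linarith
  have hmposB2 : B ≤ (mpos : ℝ) + 1 := by
    have h1 : ((mpos : ℤ) : ℝ) = (hi : ℝ) - 1 := by exact_mod_cast hmposZ
    have h2 : (N:ℝ)/2 ≤ (hi : ℝ) := by rw [hhi]; exact Int.le_ceil _
    push_cast at h1 ⊢
    rw [hB]
    linarith
  have hmnegB1 : (mneg : ℝ) ≤ B := by
    have h1 : ((mneg : ℤ) : ℝ) = -(lo : ℝ) := by exact_mod_cast hmnegZ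
    have h2 : -((N:ℝ)/2) ≤ (lo : ℝ) := by
      rw [hlo]
      have := Int.le_ceil (-(N : ℝ) / 2)
      push_cast at this ⊢
      linarith
    push_cast at h1 ⊢
    rw [hB]
    linarith
  have hmnegB2 : B ≤ (mneg : ℝ) + 1 := by
    have h1 : ((mneg : ℤ) : ℝ) = -(lo : ℝ) := by exact_mod_cast hmnegZ
    have h2 : (lo : ℝ) < -(N : ℝ) / 2 + 1 := by
      rw [hlo]
      have := Int.ceil_lt_add_one (-(N : ℝ) / 2)
      push_cast at this ⊢
      linarith
    push_cast at h1 ⊢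
    rw [hB]
    linarith
  have key1 := gauss_key hcpos mpos B hmposB1 hmposB2
  have key2 := gauss_key hcpos mneg B hmnegB1 hmnegB2
  rw [hsum_split, hint_eq]
  set S1 : ℝ := ∑ i ∈ Finset.range mneg, g ((i:ℝ) + 1)
  set S2 : ℝ := ∑ i ∈ Finset.range mpos, g ((i:ℝ) + 1)
  set I : ℝ := ∫ x in (0:ℝ)..B, g x
  have expand : h * (S1 + S2) - h * (I + I) = h * ((S2 - I) + (S1 - I)) := by ring
  rw [expand, abs_mul, abs_of_pos hhpos]
  have habs : |(S2 - I) + (S1 - I)| ≤ 2 := by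
    calc |(S2 - I) + (S1 - I)| ≤ |S2 - I| + |S1 - I| := abs_add_le _ _
    _ ≤ 2 := by
      have k1 : |S2 - I| ≤ 1 := key1
      have k2 : |S1 - I| ≤ 1 := key2
      linarith
  calc h * |(S2 - I) + (S1 - I)| ≤ h * 2 := by
        exact mul_le_mul_of_nonneg_left habs hhpos.le
  _ = 4 * π / T / N := by rw [hh]; field_simp; ring
end

section
/- Let T > 0 and d > 0. There exists a constant C > 0 such that for every integer N ≥ 1 and every t > 0 one has | (2π/(NT)) · ∑_{j ∈ J_N} ξ_j² exp(−2d ξ_j² t) − ∫_{−π/T}^{π/T} ξ² exp(−2d ξ² t) dξ | ≤ C / (N(1+t)), where ξ_j = 2πj/(NT). -/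
open Real Finset MeasureTheory

namespace SharpAux

noncomputable def fd (d t ξ : ℝ) : ℝ := ξ ^ 2 * Real.exp (-2 * d * ξ ^ 2 * t)
noncomputable def fd' (d t ξ : ℝ) : ℝ :=
  (2 * ξ - 4 * d * t * ξ ^ 3) * Real.exp (-2 * d * ξ ^ 2 * t)
noncomputable def gb (d t ξ : ℝ) : ℝ :=
  (2 * |ξ| + 4 * d * t * |ξ| ^ 3) * Real.exp (-2 * d * ξ ^ 2 * t)

lemma cont_fd (d t : ℝ) : Continuous (fd d t) := by unfold fd; fun_prop
lemma cont_fd' (d t : ℝ) : Continuous (fd' d t) := by unfold fd'; fun_prop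
lemma cont_gb (d t : ℝ) : Continuous (gb d t) := by unfold gb; fun_prop

lemma gb_nonneg (d t : ℝ) (hd : 0 ≤ d) (ht : 0 ≤ t) (ξ : ℝ) : 0 ≤ gb d t ξ := by
  unfold gb; positivity

lemma fd_nonneg (d t ξ : ℝ) : 0 ≤ fd d t ξ := by unfold fd; positivity

lemma fd_hasDeriv (d t ξ : ℝ) : HasDerivAt (fd d t) (fd' d t ξ) ξ := by
  have h1 : HasDerivAt (fun x : ℝ => x ^ 2) (2 * ξ) ξ := by
    simpa using hasDerivAt_pow 2 ξ
  have h2 : HasDerivAt (fun x : ℝ => -2 * d * x ^ 2 * t) (-2 * d * (2 * ξ) * t) ξ :=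
    (h1.const_mul (-2 * d)).mul_const t
  have h3 := h1.mul h2.exp
  have : fd' d t ξ = 2 * ξ * Real.exp (-2 * d * ξ ^ 2 * t) +
      ξ ^ 2 * (Real.exp (-2 * d * ξ ^ 2 * t) * (-2 * d * (2 * ξ) * t)) := by
    unfold fd'; ring
  rw [this]; exact h3

lemma abs_fd'_le (d t : ℝ) (hd : 0 ≤ d) (ht : 0 ≤ t) (ξ : ℝ) : |fd' d t ξ| ≤ gb d t ξ := by
  unfold fd' gb
  rw [abs_mul, Real.abs_exp]
  apply mul_le_mul_of_nonneg_right _ (Real.exp_pos _).le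
  have h1 : |2 * ξ - 4 * d * t * ξ ^ 3| ≤ |2 * ξ| + |4 * d * t * ξ ^ 3| := abs_sub _ _
  have h2 : |2 * ξ| = 2 * |ξ| := by rw [abs_mul]; norm_num
  have h3 : |4 * d * t * ξ ^ 3| = 4 * d * t * |ξ| ^ 3 := by
    rw [abs_mul, abs_pow, abs_of_nonneg (by positivity : (0:ℝ) ≤ 4 * d * t)]
  linarith

lemma fd_le_inv (d t : ℝ) (hd : 0 < d) (ht : 0 < t) (ξ : ℝ) : fd d t ξ ≤ 1 / (2 * d * t) := by
  unfold fd
  have hexp : 2 * d * t * ξ ^ 2 ≤ Real.exp (2 * d * t * ξ ^ 2) := by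
    have := Real.add_one_le_exp (2 * d * t * ξ ^ 2); linarith
  have hpos : 0 < 2 * d * t := by positivity
  rw [show -2 * d * ξ ^ 2 * t = -(2 * d * t * ξ ^ 2) by ring, Real.exp_neg, ← one_div,
    mul_one_div, div_le_div_iff₀ (Real.exp_pos _) hpos]
  nlinarith [Real.exp_pos (2 * d * t * ξ ^ 2)]

lemma fd_le_sq (d t : ℝ) (hd : 0 ≤ d) (ht : 0 ≤ t) {A ξ : ℝ} (hξ : |ξ| ≤ A) :
    fd d t ξ ≤ A ^ 2 := by
  unfold fd
  have h1 : Real.exp (-2 * d * ξ ^ 2 * t) ≤ 1 := by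
    apply Real.exp_le_one_iff.mpr
    have h0 : 0 ≤ d * ξ ^ 2 * t := mul_nonneg (mul_nonneg hd (sq_nonneg ξ)) ht
    linarith
  have h2 : ξ ^ 2 ≤ A ^ 2 := by nlinarith [sq_abs ξ, abs_nonneg ξ]
  nlinarith [sq_nonneg ξ]

lemma fd_bound (d t : ℝ) (hd : 0 < d) (ht : 0 < t) {A ξ : ℝ} (hA : 0 < A) (hξ : |ξ| ≤ A) :
    fd d t ξ ≤ (2 * A ^ 2 + 1 / d) / (1 + t) := by
  have h1d : (0:ℝ) ≤ 1 / d := by positivity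
  rw [le_div_iff₀ (by linarith : (0:ℝ) < 1 + t)]
  rcases le_total t 1 with h | h
  · have h2 := fd_le_sq d t hd.le ht.le hξ
    have h0 := fd_nonneg d t ξ
    nlinarith
  · have h2 := fd_le_inv d t hd ht ξ
    have h0 := fd_nonneg d t ξ
    have key : (1 / (2 * d * t)) * (1 + t) ≤ 1 / d := by
      rw [div_mul_eq_mul_div, div_le_div_iff₀ (by positivity) hd]
      nlinarith
    nlinarith [mul_le_mul_of_nonneg_right h2 (by linarith : (0:ℝ) ≤ 1 + t)]


/-- Antiderivative computation: `∫_0^A gb ≤ 1/(d t)`. -/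
lemma gb_int_right (d t : ℝ) (hd : 0 < d) (ht : 0 < t) {A : ℝ} (hA : 0 ≤ A) :
    ∫ ξ in (0:ℝ)..A, gb d t ξ ≤ 1 / (d * t) := by
  set H : ℝ → ℝ := fun x => -((1 / (d * t) + x ^ 2) * Real.exp (-2 * d * x ^ 2 * t)) with hH
  have key : ∀ x ∈ Set.uIcc (0:ℝ) A, HasDerivAt H (gb d t x) x := by
    intro x hx
    rw [Set.uIcc_of_le hA] at hx
    have hx0 : 0 ≤ x := hx.1
    have h1 : HasDerivAt (fun y : ℝ => 1 / (d * t) + y ^ 2) (2 * x) x := by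
      simpa using (hasDerivAt_pow 2 x).const_add (1 / (d * t))
    have hsq : HasDerivAt (fun y : ℝ => y ^ 2) (2 * x) x := by
      simpa using hasDerivAt_pow 2 x
    have h2 : HasDerivAt (fun y : ℝ => -2 * d * y ^ 2 * t) (-2 * d * (2 * x) * t) x :=
      (hsq.const_mul (-2 * d)).mul_const t
    have h3 := (h1.mul h2.exp).neg
    have heq : gb d t x = -(2 * x * Real.exp (-2 * d * x ^ 2 * t) +
        (1 / (d * t) + x ^ 2) * (Real.exp (-2 * d * x ^ 2 * t) * (-2 * d * (2 * x) * t))) := by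
      unfold gb
      rw [abs_of_nonneg hx0]
      field_simp
      ring
    rw [heq]; exact h3
  have hint := intervalIntegral.integral_eq_sub_of_hasDerivAt key
    ((cont_gb d t).intervalIntegrable _ _)
  rw [hint, hH]
  simp only []
  have hE : 0 ≤ (1 / (d * t) + A ^ 2) * Real.exp (-2 * d * A ^ 2 * t) := by positivity
  have hE0 : -((1 / (d * t) + (0:ℝ) ^ 2) * Real.exp (-2 * d * (0:ℝ) ^ 2 * t)) = -(1/(d*t)) := by
    norm_num
  rw [hE0]
  linarith

lemma gb_even (d t x : ℝ) : gb d t (-x) = gb d t x := by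
  unfold gb; rw [abs_neg, neg_sq]

lemma gb_int_sym (d t : ℝ) (hd : 0 < d) (ht : 0 < t) {A : ℝ} (hA : 0 ≤ A) :
    ∫ ξ in (-A)..A, gb d t ξ ≤ 2 / (d * t) := by
  have h1 : ∫ ξ in (-A)..(0:ℝ), gb d t ξ = ∫ ξ in (0:ℝ)..A, gb d t ξ := by
    have h2 := intervalIntegral.integral_comp_neg (a := (0:ℝ)) (b := A) (gb d t)
    simp only [neg_zero] at h2
    rw [← h2]
    apply intervalIntegral.integral_congr
    intro x _
    exact gb_even d t x
  have h3 : ∫ ξ in (-A)..A, gb d t ξ =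
      (∫ ξ in (-A)..(0:ℝ), gb d t ξ) + ∫ ξ in (0:ℝ)..A, gb d t ξ :=
    (intervalIntegral.integral_add_adjacent_intervals
      ((cont_gb d t).intervalIntegrable _ _) ((cont_gb d t).intervalIntegrable _ _)).symm
  have h4 := gb_int_right d t hd ht hA
  rw [h3, h1]
  have : 2 / (d * t) = 1 / (d * t) + 1 / (d * t) := by ring
  linarith

lemma gb_sup (d t : ℝ) (hd : 0 ≤ d) (ht1 : 0 ≤ t) (ht : t ≤ 1) {A ξ : ℝ} (hA : 0 ≤ A)
    (hξ : |ξ| ≤ A) : gb d t ξ ≤ 2 * A + 4 * d * A ^ 3 := by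
  unfold gb
  have h1 : Real.exp (-2 * d * ξ ^ 2 * t) ≤ 1 := by
    apply Real.exp_le_one_iff.mpr
    have h0 : 0 ≤ d * ξ ^ 2 * t := mul_nonneg (mul_nonneg hd (sq_nonneg ξ)) ht1
    linarith
  have h2 : |ξ| ^ 3 ≤ A ^ 3 := pow_le_pow_left₀ (abs_nonneg ξ) hξ 3
  have h3 : 0 ≤ |ξ| := abs_nonneg ξ
  have e1 : d * t * |ξ| ^ 3 ≤ d * |ξ| ^ 3 := by nlinarith [mul_nonneg hd (pow_nonneg h3 3)]
  have e2 : d * |ξ| ^ 3 ≤ d * A ^ 3 := mul_le_mul_of_nonneg_left h2 hd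
  have hb : 2 * |ξ| + 4 * d * t * |ξ| ^ 3 ≤ 2 * A + 4 * d * A ^ 3 := by linarith
  have hnn : 0 ≤ 2 * |ξ| + 4 * d * t * |ξ| ^ 3 := by positivity
  nlinarith [Real.exp_pos (-2 * d * ξ ^ 2 * t)]

lemma gb_integral_le (d t : ℝ) (hd : 0 < d) (ht : 0 < t) {A : ℝ} (hA : 0 < A) :
    ∫ ξ in (-A)..A, gb d t ξ ≤ (4 * A * (2 * A + 4 * d * A ^ 3) + 4 / d) / (1 + t) := by
  have hconstnn : (0:ℝ) ≤ 2 * A + 4 * d * A ^ 3 := by positivity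
  rw [le_div_iff₀ (by linarith : (0:ℝ) < 1 + t)]
  rcases le_total t 1 with h | h
  · have hsup : ∀ x ∈ Set.uIoc (-A) A, ‖gb d t x‖ ≤ 2 * A + 4 * d * A ^ 3 := by
      intro x hx
      rw [Set.uIoc_of_le (by linarith : -A ≤ A)] at hx
      rw [Real.norm_eq_abs, abs_of_nonneg (gb_nonneg d t hd.le ht.le x)]
      exact gb_sup d t hd.le ht.le h hA.le (abs_le.mpr ⟨hx.1.le, hx.2⟩)
    have hb := intervalIntegral.norm_integral_le_of_norm_le_const hsup
    rw [Real.norm_eq_abs] at hb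
    have hb2 : ∫ ξ in (-A)..A, gb d t ξ ≤ (2 * A + 4 * d * A ^ 3) * (2 * A) := by
      calc ∫ ξ in (-A)..A, gb d t ξ ≤ |∫ ξ in (-A)..A, gb d t ξ| := le_abs_self _
        _ ≤ (2 * A + 4 * d * A ^ 3) * |A - (-A)| := hb
        _ = (2 * A + 4 * d * A ^ 3) * (2 * A) := by
            rw [show A - (-A) = 2 * A by ring, abs_of_nonneg (by linarith)]
    have h4d : (0:ℝ) ≤ 4 / d := by positivity
    nlinarith [mul_nonneg hconstnn (by linarith : (0:ℝ) ≤ 2 * A)]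
  · have hb := gb_int_sym d t hd ht hA.le
    have key : (2 / (d * t)) * (1 + t) ≤ 4 / d := by
      rw [div_mul_eq_mul_div, div_le_div_iff₀ (by positivity) hd]
      nlinarith
    have hnnI : (0:ℝ) ≤ 1 + t := by linarith
    have hAA : (0:ℝ) ≤ 4 * A * (2 * A + 4 * d * A ^ 3) := by positivity
    nlinarith [mul_le_mul_of_nonneg_right hb hnnI]


lemma interval_err (d t : ℝ) (hd : 0 < d) (ht : 0 < t) {c δ : ℝ} (hδ : 0 ≤ δ) :
    |(∫ ξ in c..(c + δ), fd d t ξ) - δ * fd d t c| ≤ δ * ∫ ξ in c..(c + δ), gb d t ξ := by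
  have hfi : IntervalIntegrable (fd d t) volume c (c + δ) := (cont_fd d t).intervalIntegrable _ _
  have hgi : IntervalIntegrable (gb d t) volume c (c + δ) := (cont_gb d t).intervalIntegrable _ _
  have hrw : (∫ ξ in c..(c + δ), fd d t ξ) - δ * fd d t c
      = ∫ ξ in c..(c + δ), (fd d t ξ - fd d t c) := by
    rw [intervalIntegral.integral_sub hfi (intervalIntegrable_const),
      intervalIntegral.integral_const, show c + δ - c = δ by ring, smul_eq_mul]
  rw [hrw]
  have key : ∀ x ∈ Set.uIoc c (c + δ), ‖fd d t x - fd d t c‖ ≤ ∫ ξ in c..(c + δ), gb d t ξ := by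
    intro x hx
    rw [Set.uIoc_of_le (by linarith : c ≤ c + δ)] at hx
    have hxc : c ≤ x := hx.1.le
    have hxd : x ≤ c + δ := hx.2
    have hftc : fd d t x - fd d t c = ∫ u in c..x, fd' d t u :=
      (intervalIntegral.integral_eq_sub_of_hasDerivAt (fun u _ => fd_hasDeriv d t u)
        ((cont_fd' d t).intervalIntegrable _ _)).symm
    rw [Real.norm_eq_abs, hftc]
    calc |∫ u in c..x, fd' d t u| ≤ ∫ u in c..x, |fd' d t u| :=
          intervalIntegral.abs_integral_le_integral_abs hxc
      _ ≤ ∫ u in c..x, gb d t u := by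
          apply intervalIntegral.integral_mono_on hxc
            (((cont_fd' d t).abs).intervalIntegrable _ _)
            ((cont_gb d t).intervalIntegrable _ _)
          exact fun u _ => abs_fd'_le d t hd.le ht.le u
      _ ≤ ∫ ξ in c..(c + δ), gb d t ξ := by
          apply intervalIntegral.integral_mono_interval (le_refl c) hxc hxd
            (MeasureTheory.ae_of_all _ (fun u => gb_nonneg d t hd.le ht.le u)) hgi
  have h2 := intervalIntegral.norm_integral_le_of_norm_le_const key
  rw [Real.norm_eq_abs] at h2
  calc |∫ ξ in c..(c + δ), (fd d t ξ - fd d t c)|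
      ≤ (∫ ξ in c..(c + δ), gb d t ξ) * |c + δ - c| := h2
    _ = δ * ∫ ξ in c..(c + δ), gb d t ξ := by
        rw [show c + δ - c = δ by ring, abs_of_nonneg hδ]; ring

lemma sum_Ico_int (mm : ℤ) (h : ℤ → ℝ) (N : ℕ) :
    ∑ j ∈ Finset.Ico mm (mm + (N : ℤ)), h j = ∑ k ∈ Finset.range N, h (mm + (k : ℤ)) := by
  induction N with
  | zero => simp
  | succ n ih =>
    rw [Finset.sum_range_succ, ← ih]
    have hins : Finset.Ico mm (mm + ((n + 1 : ℕ) : ℤ)) = insert (mm + (n : ℤ))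
        (Finset.Ico mm (mm + (n : ℤ))) := by
      ext x; simp only [Finset.mem_Ico, Finset.mem_insert]; omega
    rw [hins, Finset.sum_insert (by simp [Finset.mem_Ico])]
    ring

end SharpAux

open SharpAux

set_option maxHeartbeats 2000000 in
/-- Second estimate of Proposition 5.1: the weighted Riemann sum
`(2π/(NT)) ∑_{j ∈ J_N} ξ_j² e^{-2d ξ_j² t}` approximates the integral
`∫_{-π/T}^{π/T} ξ² e^{-2dξ²t} dξ` with error at most `C/(N(1+t))`. -/
theorem sharp_sum_integral_comparison_weighted (T d : ℝ) (hT : 0 < T) (hd : 0 < d) :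
    ∃ C : ℝ, 0 < C ∧ ∀ N : ℕ, 1 ≤ N → ∀ t : ℝ, 0 < t →
      |2 * π / (N * T) *
            ∑ j ∈ JN N,
              (2 * π * (j : ℝ) / (N * T)) ^ 2 *
                Real.exp (-2 * d * (2 * π * (j : ℝ) / (N * T)) ^ 2 * t) -
          ∫ ξ in (-(π / T))..(π / T), ξ ^ 2 * Real.exp (-2 * d * ξ ^ 2 * t)|
        ≤ C / (N * (1 + t)) := by
  have hπ := Real.pi_pos
  set A : ℝ := 3 * π / T with hA_def
  have hA : 0 < A := by positivity
  set C₂ : ℝ := 4 * A * (2 * A + 4 * d * A ^ 3) + 4 / d with hC2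
  set C₃ : ℝ := 2 * A ^ 2 + 1 / d with hC3
  have hC2pos : 0 < C₂ := by rw [hC2]; positivity
  have hC3pos : 0 < C₃ := by rw [hC3]; positivity
  refine ⟨2 * π / T * (C₂ + 2 * C₃), by positivity, ?_⟩
  intro N hN t ht
  have hN0 : (0:ℝ) < N := by exact_mod_cast hN
  have hN1 : (1:ℝ) ≤ N := by exact_mod_cast hN
  have hT' : T ≠ 0 := ne_of_gt hT
  have hN' : (N:ℝ) ≠ 0 := ne_of_gt hN0
  set Δ : ℝ := 2 * π / (N * T) with hΔ_def
  have hΔpos : 0 < Δ := by rw [hΔ_def]; positivity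
  set p : ℝ := π / T with hp_def
  have hppos : 0 < p := by rw [hp_def]; positivity
  have hNΔ : (N:ℝ) * Δ = 2 * p := by rw [hΔ_def, hp_def]; field_simp
  have h3pA : 3 * p = A := by rw [hp_def, hA_def]; ring
  have hpA : p ≤ A := by linarith
  have hΔle : Δ ≤ 2 * p := by nlinarith
  set m : ℤ := ⌈-(N : ℝ) / 2⌉ with hm
  have hm1 : -(N:ℝ) / 2 ≤ (m:ℝ) := Int.le_ceil _
  have hm2 : (m:ℝ) < -(N:ℝ) / 2 + 1 := by rw [hm]; exact Int.ceil_lt_add_one _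
  have hJN : JN N = Finset.Ico m (m + (N:ℤ)) := by
    unfold JN
    congr 1
    rw [show (N:ℝ) / 2 = -(N:ℝ) / 2 + ((N:ℤ):ℝ) by push_cast; ring, Int.ceil_add_intCast, hm]
  set a : ℕ → ℝ := fun k => Δ * ((m:ℝ) + k) with ha_def
  have ha0 : a 0 = Δ * (m:ℝ) := by rw [ha_def]; norm_num
  have haN : a N = Δ * (m:ℝ) + 2 * p := by
    have : a N = Δ * (m:ℝ) + (N:ℝ) * Δ := by rw [ha_def]; push_cast; ring
    rw [this, hNΔ]
  have hstep : ∀ k : ℕ, a (k + 1) = a k + Δ := by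
    intro k; rw [ha_def]; push_cast; ring
  -- endpoint bounds
  have hΔm_lb : -p ≤ Δ * (m:ℝ) := by
    have h1 := mul_le_mul_of_nonneg_left hm1 hΔpos.le
    nlinarith
  have hΔm_ub : Δ * (m:ℝ) ≤ -p + Δ := by
    have h1 := mul_le_mul_of_nonneg_left hm2.le hΔpos.le
    nlinarith
  have ha0_lb : -A ≤ a 0 := by rw [ha0]; linarith
  have ha0aN : a 0 ≤ a N := by rw [ha0, haN]; linarith
  have haN_ub : a N ≤ A := by rw [haN]; linarith
  -- integrability
  have hfi : ∀ x y : ℝ, IntervalIntegrable (fd d t) volume x y :=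
    fun x y => (cont_fd d t).intervalIntegrable x y
  have hgi : ∀ x y : ℝ, IntervalIntegrable (gb d t) volume x y :=
    fun x y => (cont_gb d t).intervalIntegrable x y
  -- rewrite sum
  have hterm : ∀ x : ℝ, (2 * π * x / (N * T)) ^ 2 *
      Real.exp (-2 * d * (2 * π * x / (N * T)) ^ 2 * t) = fd d t (Δ * x) := by
    intro x
    unfold fd
    rw [show Δ * x = 2 * π * x / ((N:ℝ) * T) by rw [hΔ_def]; ring]
  have hsum_eq : (∑ j ∈ JN N, (2 * π * (j:ℝ) / (N * T)) ^ 2 *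
      Real.exp (-2 * d * (2 * π * (j:ℝ) / (N * T)) ^ 2 * t))
      = ∑ k ∈ Finset.range N, fd d t (a k) := by
    rw [hJN, sum_Ico_int m (fun j => (2 * π * (j:ℝ) / (N * T)) ^ 2 *
      Real.exp (-2 * d * (2 * π * (j:ℝ) / (N * T)) ^ 2 * t)) N]
    apply Finset.sum_congr rfl
    intro k _
    have : ((m + (k:ℤ) : ℤ) : ℝ) = (m:ℝ) + (k:ℕ) := by push_cast; ring
    rw [this, hterm ((m:ℝ) + (k:ℕ))]
  rw [hsum_eq]
  set S : ℝ := ∑ k ∈ Finset.range N, fd d t (a k) with hS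
  set I : ℝ := ∫ ξ in (-p)..p, ξ ^ 2 * Real.exp (-2 * d * ξ ^ 2 * t) with hI
  have hI_fd : I = ∫ ξ in (-p)..p, fd d t ξ := rfl
  set I₁ : ℝ := ∫ ξ in (a 0)..(a N), fd d t ξ with hI1
  have hIa : ∑ k ∈ Finset.range N, ∫ ξ in (a k)..(a (k+1)), fd d t ξ = I₁ :=
    intervalIntegral.sum_integral_adjacent_intervals (fun k _ => hfi _ _)
  have hIg : ∑ k ∈ Finset.range N, ∫ ξ in (a k)..(a (k+1)), gb d t ξ =
      ∫ ξ in (a 0)..(a N), gb d t ξ :=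
    intervalIntegral.sum_integral_adjacent_intervals (fun k _ => hgi _ _)
  -- bound 1
  have h1 : |Δ * S - I₁| ≤ Δ * ((∫ ξ in (-A)..A, gb d t ξ)) := by
    rw [← hIa, hS, Finset.mul_sum, ← Finset.sum_sub_distrib]
    calc |∑ k ∈ Finset.range N, (Δ * fd d t (a k) - ∫ ξ in (a k)..(a (k+1)), fd d t ξ)|
        ≤ ∑ k ∈ Finset.range N, |Δ * fd d t (a k) - ∫ ξ in (a k)..(a (k+1)), fd d t ξ| :=
          Finset.abs_sum_le_sum_abs _ _
      _ ≤ ∑ k ∈ Finset.range N, Δ * ∫ ξ in (a k)..(a (k+1)), gb d t ξ := by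
          apply Finset.sum_le_sum
          intro k _
          have h := interval_err d t hd ht (c := a k) hΔpos.le
          rw [← hstep k] at h
          rw [abs_sub_comm]
          exact h
      _ = Δ * ∫ ξ in (a 0)..(a N), gb d t ξ := by rw [← Finset.mul_sum, hIg]
      _ ≤ Δ * ((∫ ξ in (-A)..A, gb d t ξ)) := by
          apply mul_le_mul_of_nonneg_left _ hΔpos.le
          exact intervalIntegral.integral_mono_interval ha0_lb ha0aN haN_ub
            (MeasureTheory.ae_of_all _ (fun u => gb_nonneg d t hd.le ht.le u)) (hgi _ _)
  -- bound 2 (shift)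
  have hsplit1 : I₁ = (∫ ξ in (a 0)..p, fd d t ξ) + ∫ ξ in p..(a N), fd d t ξ :=
    (intervalIntegral.integral_add_adjacent_intervals (hfi _ _) (hfi _ _)).symm
  have hsplit2 : I = (∫ ξ in (-p)..(a 0), fd d t ξ) + ∫ ξ in (a 0)..p, fd d t ξ := by
    rw [hI_fd]
    exact (intervalIntegral.integral_add_adjacent_intervals (hfi _ _) (hfi _ _)).symm
  have hMb : ∀ x : ℝ, -A ≤ x → x ≤ A → ‖fd d t x‖ ≤ C₃ / (1 + t) := by
    intro x hx1 hx2
    rw [Real.norm_eq_abs, abs_of_nonneg (fd_nonneg d t x)]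
    exact fd_bound d t hd ht hA (abs_le.mpr ⟨hx1, hx2⟩)
  have hb2a : |∫ ξ in p..(a N), fd d t ξ| ≤ (C₃ / (1 + t)) * Δ := by
    have hpaN : p ≤ a N := by rw [haN]; linarith
    have key : ∀ x ∈ Set.uIoc p (a N), ‖fd d t x‖ ≤ C₃ / (1 + t) := by
      intro x hx
      rw [Set.uIoc_of_le hpaN] at hx
      exact hMb x (by linarith [hx.1.le]) (by linarith [hx.2])
    have h := intervalIntegral.norm_integral_le_of_norm_le_const key
    rw [Real.norm_eq_abs] at h
    calc |∫ ξ in p..(a N), fd d t ξ| ≤ C₃ / (1 + t) * |a N - p| := h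
      _ ≤ (C₃ / (1 + t)) * Δ := by
          apply mul_le_mul_of_nonneg_left _ (div_nonneg hC3pos.le (by linarith))
          rw [haN, abs_of_nonneg (by linarith)]
          linarith
  have hb2b : |∫ ξ in (-p)..(a 0), fd d t ξ| ≤ (C₃ / (1 + t)) * Δ := by
    have hpa0 : -p ≤ a 0 := by rw [ha0]; exact hΔm_lb
    have key : ∀ x ∈ Set.uIoc (-p) (a 0), ‖fd d t x‖ ≤ C₃ / (1 + t) := by
      intro x hx
      rw [Set.uIoc_of_le hpa0] at hx
      have hx2 : x ≤ a 0 := hx.2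
      exact hMb x (by linarith [hx.1.le]) (by rw [ha0] at hx2; linarith)
    have h := intervalIntegral.norm_integral_le_of_norm_le_const key
    rw [Real.norm_eq_abs] at h
    calc |∫ ξ in (-p)..(a 0), fd d t ξ| ≤ C₃ / (1 + t) * |a 0 - (-p)| := h
      _ ≤ (C₃ / (1 + t)) * Δ := by
          apply mul_le_mul_of_nonneg_left _ (div_nonneg hC3pos.le (by linarith))
          rw [ha0, abs_of_nonneg (by linarith)]
          linarith
  have h2 : |I₁ - I| ≤ 2 * ((C₃ / (1 + t)) * Δ) := by
    have : I₁ - I = (∫ ξ in p..(a N), fd d t ξ) - ∫ ξ in (-p)..(a 0), fd d t ξ := by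
      rw [hsplit1, hsplit2]; ring
    rw [this]
    calc |(∫ ξ in p..(a N), fd d t ξ) - ∫ ξ in (-p)..(a 0), fd d t ξ|
        ≤ |∫ ξ in p..(a N), fd d t ξ| + |∫ ξ in (-p)..(a 0), fd d t ξ| := abs_sub _ _
      _ ≤ 2 * ((C₃ / (1 + t)) * Δ) := by linarith
  -- combine
  have hGb := gb_integral_le d t hd ht hA
  have htri : |Δ * S - I| ≤ |Δ * S - I₁| + |I₁ - I| := by
    have : Δ * S - I = (Δ * S - I₁) + (I₁ - I) := by ring
    rw [this]; exact abs_add_le _ _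
  have htotal : |Δ * S - I| ≤ Δ * (C₂ / (1 + t)) + 2 * ((C₃ / (1 + t)) * Δ) := by
    have hh : Δ * ((∫ ξ in (-A)..A, gb d t ξ)) ≤ Δ * (C₂ / (1 + t)) :=
      mul_le_mul_of_nonneg_left hGb hΔpos.le
    linarith
  have hfinal : Δ * (C₂ / (1 + t)) + 2 * ((C₃ / (1 + t)) * Δ)
      = 2 * π / T * (C₂ + 2 * C₃) / ((N:ℝ) * (1 + t)) := by
    rw [hΔ_def]
    field_simp
  rw [← hfinal]
  exact htotal
end

section
/- Let T > 0 and d > 0. For every integer N ≥ 2 and every t ≥ 1 one has the explicit bound | (2π√t/(NT)) · ∑_{j ∈ J_N, j ≠ 0} exp(−2d ξ_j² t) − ∫_{−π√t/T}^{π√t/T} exp(−2d z²) dz | ≤ 4π√t/(NT), where ξ_j = 2πj/(NT) (so that exp(−2d ξ_j² t) = exp(−2d z_j²) with z_j = ξ_j √t). -/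
open Real Finset

lemma myCont (d : ℝ) : Continuous (fun z : ℝ => Real.exp (-2*d*z^2)) := by
  continuity

lemma step_le (d : ℝ) (hd : 0 < d) {u v : ℝ} (hu : 0 ≤ u) (huv : u ≤ v) :
    (v - u) * Real.exp (-2*d*v^2) ≤ ∫ z in u..v, Real.exp (-2*d*z^2) ∧
    (∫ z in u..v, Real.exp (-2*d*z^2)) ≤ (v - u) * Real.exp (-2*d*u^2) := by
  have hint : IntervalIntegrable (fun z : ℝ => Real.exp (-2*d*z^2)) MeasureTheory.volume u v :=
    (myCont d).intervalIntegrable u v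
  constructor
  · have h1 : (∫ _ in u..v, Real.exp (-2*d*v^2)) ≤ ∫ z in u..v, Real.exp (-2*d*z^2) := by
      apply intervalIntegral.integral_mono_on huv (by simp [_root_.intervalIntegrable_const]) hint
      intro x hx
      apply Real.exp_le_exp.2
      have h2 : x^2 ≤ v^2 := pow_le_pow_left₀ (hu.trans hx.1) hx.2 2
      nlinarith
    simpa using h1
  · have h1 : (∫ z in u..v, Real.exp (-2*d*z^2)) ≤ ∫ _ in u..v, Real.exp (-2*d*u^2) := by
      apply intervalIntegral.integral_mono_on huv hint (by simp [_root_.intervalIntegrable_const])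
      intro x hx
      apply Real.exp_le_exp.2
      have h2 : u^2 ≤ x^2 := pow_le_pow_left₀ hu hx.1 2
      nlinarith
    simpa using h1

lemma sum_le_int (d h : ℝ) (hd : 0 < d) (hh : 0 < h) : ∀ M : ℕ,
    ∑ j ∈ Finset.range M, h * Real.exp (-2*d*(h*((j:ℝ)+1))^2) ≤
      ∫ z in (0:ℝ)..(h*(M:ℝ)), Real.exp (-2*d*z^2) := by
  intro M
  induction M with
  | zero => simp
  | succ M ih =>
    rw [Finset.sum_range_succ]
    have hsplit : (∫ z in (0:ℝ)..(h*((M:ℝ)+1)), Real.exp (-2*d*z^2)) =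
        (∫ z in (0:ℝ)..(h*(M:ℝ)), Real.exp (-2*d*z^2)) +
        ∫ z in (h*(M:ℝ))..(h*((M:ℝ)+1)), Real.exp (-2*d*z^2) :=
      (intervalIntegral.integral_add_adjacent_intervals
        ((myCont d).intervalIntegrable _ _) ((myCont d).intervalIntegrable _ _)).symm
    have hstep := (step_le d hd (u := h*(M:ℝ)) (v := h*((M:ℝ)+1))
      (by positivity) (by nlinarith)).1
    push_cast
    rw [hsplit]
    have : h * ((M:ℝ)+1) - h * (M:ℝ) = h := by ring
    rw [this] at hstep
    linarith

lemma int_le_sum (d h : ℝ) (hd : 0 < d) (hh : 0 < h) : ∀ M : ℕ,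
    (∫ z in (0:ℝ)..(h*(M:ℝ)), Real.exp (-2*d*z^2)) ≤
      ∑ j ∈ Finset.range M, h * Real.exp (-2*d*(h*(j:ℝ))^2) := by
  intro M
  induction M with
  | zero => simp
  | succ M ih =>
    rw [Finset.sum_range_succ]
    have hsplit : (∫ z in (0:ℝ)..(h*((M:ℝ)+1)), Real.exp (-2*d*z^2)) =
        (∫ z in (0:ℝ)..(h*(M:ℝ)), Real.exp (-2*d*z^2)) +
        ∫ z in (h*(M:ℝ))..(h*((M:ℝ)+1)), Real.exp (-2*d*z^2) :=
      (intervalIntegral.integral_add_adjacent_intervals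
        ((myCont d).intervalIntegrable _ _) ((myCont d).intervalIntegrable _ _)).symm
    have hstep := (step_le d hd (u := h*(M:ℝ)) (v := h*((M:ℝ)+1))
      (by positivity) (by nlinarith)).2
    push_cast
    rw [hsplit]
    have : h * ((M:ℝ)+1) - h * (M:ℝ) = h := by ring
    rw [this] at hstep
    linarith

lemma half_bound (d h a : ℝ) (hd : 0 < d) (hh : 0 < h) (M : ℕ)
    (h1 : h*(M:ℝ) ≤ a) (h2 : a ≤ h*((M:ℝ)+1)) :
    |h * (∑ j ∈ Finset.range M, Real.exp (-2*d*(h*((j:ℝ)+1))^2)) -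
      ∫ z in (0:ℝ)..a, Real.exp (-2*d*z^2)| ≤ h := by
  have ha : 0 ≤ a := le_trans (by positivity) h1
  set S := ∑ j ∈ Finset.range M, Real.exp (-2*d*(h*((j:ℝ)+1))^2) with hS
  have hmul : h * S = ∑ j ∈ Finset.range M, h * Real.exp (-2*d*(h*((j:ℝ)+1))^2) := by
    rw [Finset.mul_sum]
  -- lower: h*S ≤ ∫_0^{hM} ≤ ∫_0^a
  have hsplit1 : (∫ z in (0:ℝ)..a, Real.exp (-2*d*z^2)) =
      (∫ z in (0:ℝ)..(h*(M:ℝ)), Real.exp (-2*d*z^2)) +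
      ∫ z in (h*(M:ℝ))..a, Real.exp (-2*d*z^2) :=
    (intervalIntegral.integral_add_adjacent_intervals
      ((myCont d).intervalIntegrable _ _) ((myCont d).intervalIntegrable _ _)).symm
  have hnn1 : 0 ≤ ∫ z in (h*(M:ℝ))..a, Real.exp (-2*d*z^2) :=
    intervalIntegral.integral_nonneg h1 (fun x _ => (Real.exp_pos _).le)
  have hlow : h * S ≤ ∫ z in (0:ℝ)..a, Real.exp (-2*d*z^2) := by
    rw [hmul, hsplit1]
    have := sum_le_int d h hd hh M
    linarith
  -- upper: ∫_0^a ≤ ∫_0^{h(M+1)} ≤ h + h*S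
  have hsplit2 : (∫ z in (0:ℝ)..(h*((M:ℝ)+1)), Real.exp (-2*d*z^2)) =
      (∫ z in (0:ℝ)..a, Real.exp (-2*d*z^2)) +
      ∫ z in a..(h*((M:ℝ)+1)), Real.exp (-2*d*z^2) :=
    (intervalIntegral.integral_add_adjacent_intervals
      ((myCont d).intervalIntegrable _ _) ((myCont d).intervalIntegrable _ _)).symm
  have hnn2 : 0 ≤ ∫ z in a..(h*((M:ℝ)+1)), Real.exp (-2*d*z^2) :=
    intervalIntegral.integral_nonneg h2 (fun x _ => (Real.exp_pos _).le)
  have hsum : (∫ z in (0:ℝ)..(h*((M+1:ℕ):ℝ)), Real.exp (-2*d*z^2)) ≤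
      ∑ j ∈ Finset.range (M+1), h * Real.exp (-2*d*(h*(j:ℝ))^2) := int_le_sum d h hd hh (M+1)
  have hre : ∑ j ∈ Finset.range (M+1), h * Real.exp (-2*d*(h*(j:ℝ))^2) = h + h * S := by
    rw [Finset.sum_range_succ']
    push_cast
    simp [hS, Finset.mul_sum]
    ring
  have hup : (∫ z in (0:ℝ)..a, Real.exp (-2*d*z^2)) ≤ h + h * S := by
    push_cast at hsum
    rw [hsplit2] at hsum
    linarith [hre ▸ hsum]
  rw [abs_le]
  constructor <;> linarith


/-- The explicit Riemann-sum estimate (e:Rsum_bound2) from the Appendix: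
for `N ≥ 2` and `t ≥ 1`,
`|(2π√t/(NT)) ∑_{j ∈ J_N, j ≠ 0} e^{-2d ξ_j² t} - ∫_{-π√t/T}^{π√t/T} e^{-2dz²} dz| ≤ 4π√t/(NT)`,
where `ξ_j = 2πj/(NT)`. -/
theorem explicit_rescaled_riemann_bound (T d : ℝ) (hT : 0 < T) (hd : 0 < d) :
    ∀ N : ℕ, 2 ≤ N → ∀ t : ℝ, 1 ≤ t →
      |2 * π * Real.sqrt t / (N * T) *
            ∑ j ∈ (JN N).erase 0,
              Real.exp (-2 * d * (2 * π * (j : ℝ) / (N * T)) ^ 2 * t) -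
          ∫ z in (-(π * Real.sqrt t / T))..(π * Real.sqrt t / T),
            Real.exp (-2 * d * z ^ 2)|
        ≤ 4 * π * Real.sqrt t / (N * T) := by
  intro N hN t ht
  have hNpos : (0:ℝ) < N := by positivity
  have ht0 : (0:ℝ) < t := by linarith
  have hst : 0 < Real.sqrt t := Real.sqrt_pos.2 ht0
  set h : ℝ := 2 * π * Real.sqrt t / (N * T) with hdef
  have hh : 0 < h := by positivity
  set a : ℝ := π * Real.sqrt t / T with hadef
  have ha_eq : a = h * ((N:ℝ)/2) := by
    rw [hadef, hdef]; field_simp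
  set lo : ℤ := ⌈-(N : ℝ) / 2⌉ with hlodef
  set hi : ℤ := ⌈(N : ℝ) / 2⌉ with hhidef
  have hloR : -(N:ℝ)/2 ≤ (lo:ℝ) := Int.le_ceil _
  have hloR2 : (lo:ℝ) < -(N:ℝ)/2 + 1 := Int.ceil_lt_add_one _
  have hhiR : (N:ℝ)/2 ≤ (hi:ℝ) := Int.le_ceil _
  have hhiR2 : (hi:ℝ) < (N:ℝ)/2 + 1 := Int.ceil_lt_add_one _
  have hN2 : (2:ℝ) ≤ (N:ℝ) := by exact_mod_cast hN
  have hlo1 : lo ≤ -1 := Int.ceil_le.2 (by push_cast; linarith)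
  have hhi1 : 1 ≤ hi := by
    have : (1:ℝ) ≤ (hi:ℝ) := by linarith
    exact_mod_cast this
  set Mp : ℕ := (hi - 1).toNat with hMpdef
  set Mm : ℕ := (-lo).toNat with hMmdef
  have hMpR : (Mp:ℝ) = (hi:ℝ) - 1 := by
    have : ((hi - 1).toNat : ℤ) = hi - 1 := Int.toNat_of_nonneg (by omega)
    rw [hMpdef]; exact_mod_cast this
  have hMmR : (Mm:ℝ) = -(lo:ℝ) := by
    have : ((-lo).toNat : ℤ) = -lo := Int.toNat_of_nonneg (by omega)
    rw [hMmdef]; exact_mod_cast this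
  -- key: summand rewrite
  have hsq : Real.sqrt t ^ 2 = t := Real.sq_sqrt ht0.le
  have hNT : (N:ℝ) * T ≠ 0 := by positivity
  have key : ∀ x : ℝ, -2 * d * (2 * π * x / ((N:ℝ) * T)) ^ 2 * t = -2*d*(h*x)^2 := by
    intro x
    rw [hdef]
    field_simp
    ring_nf
    rw [hsq]
  -- set splitting
  have hsplitset : (JN N).erase 0 = (Finset.Ico lo (0:ℤ)) ∪ (Finset.Ico (1:ℤ) hi) := by
    ext j
    simp only [JN, Finset.mem_erase, Finset.mem_Ico, Finset.mem_union]
    rw [← hlodef, ← hhidef]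
    omega
  have himp : Finset.Ico (1:ℤ) hi = Finset.image (fun n : ℕ => 1 + (n:ℤ)) (Finset.range Mp) := by
    ext j
    simp only [Finset.mem_Ico, Finset.mem_image, Finset.mem_range, hMpdef]
    constructor
    · rintro ⟨h1, h2⟩; exact ⟨(j-1).toNat, by omega, by omega⟩
    · rintro ⟨n, hn, rfl⟩; omega
  have himm : Finset.Ico lo (0:ℤ) = Finset.image (fun n : ℕ => -1 - (n:ℤ)) (Finset.range Mm) := by
    ext j
    simp only [Finset.mem_Ico, Finset.mem_image, Finset.mem_range, hMmdef]
    constructor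
    · rintro ⟨h1, h2⟩; exact ⟨(-1-j).toNat, by omega, by omega⟩
    · rintro ⟨n, hn, rfl⟩; omega
  have hdisj : Disjoint (Finset.Ico lo (0:ℤ)) (Finset.Ico (1:ℤ) hi) := by
    rw [Finset.disjoint_left]
    intro j hj1 hj2
    simp only [Finset.mem_Ico] at hj1 hj2
    omega
  have hsum : (∑ j ∈ (JN N).erase 0, Real.exp (-2 * d * (2 * π * (j : ℝ) / ((N:ℝ) * T)) ^ 2 * t))
      = (∑ n ∈ Finset.range Mm, Real.exp (-2*d*(h*((n:ℝ)+1))^2))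
        + ∑ n ∈ Finset.range Mp, Real.exp (-2*d*(h*((n:ℝ)+1))^2) := by
    rw [hsplitset, Finset.sum_union hdisj, himp, himm,
      Finset.sum_image (fun x _ y _ hxy => by omega),
      Finset.sum_image (fun x _ y _ hxy => by omega)]
    congr 1
    · apply Finset.sum_congr rfl
      intro n _
      have e1 : ((-1 - (n:ℤ) : ℤ) : ℝ) = -((n:ℝ)+1) := by push_cast; ring
      rw [e1, key (-((n:ℝ)+1))]
      congr 1
      ring
    · apply Finset.sum_congr rfl
      intro n _
      have e1 : ((1 + (n:ℤ) : ℤ) : ℝ) = ((n:ℝ)+1) := by push_cast; ring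
      rw [e1, key ((n:ℝ)+1)]
  -- integral split and evenness
  have heven : (∫ z in (-a)..(0:ℝ), Real.exp (-2*d*z^2)) = ∫ z in (0:ℝ)..a, Real.exp (-2*d*z^2) := by
    have hc := intervalIntegral.integral_comp_neg (a := (0:ℝ)) (b := a) (fun z => Real.exp (-2*d*z^2))
    simp only [neg_sq, neg_zero] at hc
    simpa using hc.symm
  have hint2 : (∫ z in (-a)..a, Real.exp (-2*d*z^2)) =
      (∫ z in (0:ℝ)..a, Real.exp (-2*d*z^2)) + ∫ z in (0:ℝ)..a, Real.exp (-2*d*z^2) := by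
    have hi1 : IntervalIntegrable (fun z : ℝ => Real.exp (-2*d*z^2)) MeasureTheory.volume (-a) 0 :=
      (myCont d).intervalIntegrable _ _
    have hi2 : IntervalIntegrable (fun z : ℝ => Real.exp (-2*d*z^2)) MeasureTheory.volume 0 a :=
      (myCont d).intervalIntegrable _ _
    have hadd := intervalIntegral.integral_add_adjacent_intervals hi1 hi2
    rw [← hadd, heven]
  -- bounds for the two halves
  have hp1 : h*(Mp:ℝ) ≤ a := by
    rw [ha_eq, hMpR]
    apply mul_le_mul_of_nonneg_left _ hh.le
    linarith
  have hp2 : a ≤ h*((Mp:ℝ)+1) := by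
    rw [ha_eq, hMpR]
    apply mul_le_mul_of_nonneg_left _ hh.le
    linarith
  have hm1 : h*(Mm:ℝ) ≤ a := by
    rw [ha_eq, hMmR]
    apply mul_le_mul_of_nonneg_left _ hh.le
    linarith
  have hm2 : a ≤ h*((Mm:ℝ)+1) := by
    rw [ha_eq, hMmR]
    apply mul_le_mul_of_nonneg_left _ hh.le
    linarith
  have hbp := half_bound d h a hd hh Mp hp1 hp2
  have hbm := half_bound d h a hd hh Mm hm1 hm2
  rw [hsum, hint2]
  set Sm := ∑ n ∈ Finset.range Mm, Real.exp (-2*d*(h*((n:ℝ)+1))^2) with hSm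
  set Sp := ∑ n ∈ Finset.range Mp, Real.exp (-2*d*(h*((n:ℝ)+1))^2) with hSp
  set I := ∫ z in (0:ℝ)..a, Real.exp (-2*d*z^2) with hI
  have hrw : h * (Sm + Sp) - (I + I) = (h*Sm - I) + (h*Sp - I) := by ring
  calc |h * (Sm + Sp) - (I + I)| = |(h*Sm - I) + (h*Sp - I)| := by rw [hrw]
    _ ≤ |h*Sm - I| + |h*Sp - I| := abs_add_le _ _
    _ ≤ h + h := add_le_add hbm hbp
    _ = 4 * π * Real.sqrt t / ((N:ℝ) * T) := by rw [hdef]; ring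
end

section
/- Let T > 0 and d > 0. There exists a constant C > 0 such that for every integer N ≥ 2 and every t ≥ 1 one has | t^{3/2} · (2π/(NT)) · ∑_{j ∈ J_N} ξ_j² exp(−2d ξ_j² t) − ∫_{−π√t/T}^{π√t/T} z² exp(−2d z²) dz | ≤ C √t / N, where ξ_j = 2πj/(NT). -/
open Real Finset MeasureTheory

namespace RsumAux

/-- The rescaled integrand. -/
noncomputable def Fd (d z : ℝ) : ℝ := z ^ 2 * Real.exp (-2 * d * z ^ 2)

/-- Its derivative. -/
noncomputable def Fd' (d z : ℝ) : ℝ :=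
  (2 * z - 4 * d * z ^ 3) * Real.exp (-2 * d * z ^ 2)

lemma hasDerivAt_Fd (d x : ℝ) : HasDerivAt (Fd d) (Fd' d x) x := by
  have h1 : HasDerivAt (fun y : ℝ => -2 * d * y ^ 2) (-2 * d * (2 * x)) x := by
    simpa using (hasDerivAt_pow 2 x).const_mul (-2 * d)
  have h3 := (hasDerivAt_pow 2 x).mul h1.exp
  refine h3.congr_deriv ?_
  unfold Fd'
  beta_reduce
  ring

lemma continuous_Fd (d : ℝ) : Continuous (Fd d) := by
  unfold Fd; fun_prop

lemma continuous_Fd' (d : ℝ) : Continuous (Fd' d) := by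
  unfold Fd'; fun_prop

lemma integrable_Fd' (d : ℝ) (hd : 0 < d) : Integrable (Fd' d) := by
  have hb : (0:ℝ) < 2 * d := by positivity
  have h1 : Integrable (fun x : ℝ => x * Real.exp (-(2 * d) * x ^ 2)) :=
    integrable_mul_exp_neg_mul_sq hb
  have h3 : Integrable (fun x : ℝ => x ^ (3:ℝ) * Real.exp (-(2 * d) * x ^ 2)) :=
    integrable_rpow_mul_exp_neg_mul_sq hb (by norm_num)
  have h3' : Integrable (fun x : ℝ => x ^ (3:ℕ) * Real.exp (-(2 * d) * x ^ 2)) := by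
    refine h3.congr (Filter.Eventually.of_forall fun x => ?_)
    have hx3 : x ^ (3:ℝ) = x ^ (3:ℕ) := by
      rw [← Real.rpow_natCast x 3]; norm_num
    simp only [hx3]
  have hsub := (h1.const_mul 2).sub (h3'.const_mul (4 * d))
  refine hsub.congr (Filter.Eventually.of_forall fun x => ?_)
  have harg : ∀ y : ℝ, Real.exp (-(2 * d) * y ^ 2) = Real.exp (-2 * d * y ^ 2) := by
    intro y; congr 1; ring
  simp only [Pi.sub_apply, Fd', harg]
  ring

lemma Fd_bound (d : ℝ) (hd : 0 < d) (x : ℝ) : |Fd d x| ≤ 1 / (2 * d) := by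
  have hE : (0:ℝ) < Real.exp (-2 * d * x ^ 2) := Real.exp_pos _
  have h0 : 0 ≤ Fd d x := by unfold Fd; positivity
  rw [abs_of_nonneg h0, le_div_iff₀ (by positivity : (0:ℝ) < 2 * d)]
  have hu : 2 * d * x ^ 2 ≤ Real.exp (2 * d * x ^ 2) := by
    linarith [Real.add_one_le_exp (2 * d * x ^ 2)]
  have key : 2 * d * x ^ 2 * Real.exp (-2 * d * x ^ 2) ≤ 1 := by
    calc 2 * d * x ^ 2 * Real.exp (-2 * d * x ^ 2)
        ≤ Real.exp (2 * d * x ^ 2) * Real.exp (-2 * d * x ^ 2) :=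
          mul_le_mul_of_nonneg_right hu hE.le
      _ = 1 := by rw [← Real.exp_add]; ring_nf; exact Real.exp_zero
  calc Fd d x * (2 * d) = 2 * d * x ^ 2 * Real.exp (-2 * d * x ^ 2) := by
        unfold Fd; ring
    _ ≤ 1 := key

/-- Single-cell Riemann sum error bound. -/
lemma cell_bound (F F' : ℝ → ℝ) (hF : ∀ x, HasDerivAt F (F' x) x)
    (hF'c : Continuous F') (c Δ : ℝ) (hΔ : 0 ≤ Δ) :
    |Δ * F c - ∫ x in c..(c + Δ), F x| ≤ Δ * ∫ x in c..(c + Δ), |F' x| := by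
  have hFd : Differentiable ℝ F := fun x => (hF x).differentiableAt
  have hFc : Continuous F := hFd.continuous
  set K := ∫ x in c..(c + Δ), |F' x| with hK
  have habs : ∀ x ∈ Set.uIoc c (c + Δ), |F x - F c| ≤ K := by
    intro x hx
    rw [Set.uIoc_of_le (by linarith)] at hx
    have hcx : c ≤ x := hx.1.le
    have hxΔ : x ≤ c + Δ := hx.2
    have hftc : ∫ y in c..x, F' y = F x - F c :=
      intervalIntegral.integral_eq_sub_of_hasDerivAt (fun y _ => hF y)
        (hF'c.intervalIntegrable _ _)
    rw [← hftc]
    calc |∫ y in c..x, F' y| ≤ ∫ y in c..x, |F' y| :=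
          intervalIntegral.abs_integral_le_integral_abs hcx
      _ ≤ K :=
          intervalIntegral.integral_mono_interval le_rfl hcx hxΔ
            (Filter.Eventually.of_forall fun y => abs_nonneg _)
            ((hF'c.abs).intervalIntegrable _ _)
  have h1 : |∫ x in c..(c + Δ), (F x - F c)| ≤ K * |c + Δ - c| := by
    have := intervalIntegral.norm_integral_le_of_norm_le_const
      (a := c) (b := c + Δ) (C := K) (f := fun x => F x - F c)
      (fun x hx => by simpa using habs x hx)
    simpa [Real.norm_eq_abs] using this
  rw [intervalIntegral.integral_sub (hFc.intervalIntegrable _ _)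
    (intervalIntegrable_const)] at h1
  rw [intervalIntegral.integral_const] at h1
  have h2 : |c + Δ - c| = Δ := by
    rw [add_sub_cancel_left, abs_of_nonneg hΔ]
  rw [h2, add_sub_cancel_left] at h1
  have h3 : |Δ * F c - ∫ x in c..(c + Δ), F x|
      = |(∫ x in c..(c + Δ), F x) - Δ • F c| := by
    rw [abs_sub_comm, smul_eq_mul]
  rw [h3]
  linarith [h1]

/-- Riemann sum vs. integral over an integer interval. -/
lemma riemann_core (F F' : ℝ → ℝ) (hF : ∀ x, HasDerivAt F (F' x) x)
    (hF'c : Continuous F') (Δ : ℝ) (hΔ : 0 < Δ) (a : ℤ) :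
    ∀ b : ℤ, a ≤ b →
    |(∑ j ∈ Finset.Ico a b, Δ * F ((j : ℝ) * Δ)) -
        ∫ x in ((a:ℝ) * Δ)..((b:ℝ) * Δ), F x|
      ≤ Δ * ∫ x in ((a:ℝ) * Δ)..((b:ℝ) * Δ), |F' x| := by
  have hFd : Differentiable ℝ F := fun x => (hF x).differentiableAt
  have hFc : Continuous F := hFd.continuous
  refine Int.le_induction ?_ ?_
  · simp
  · intro b hab ih
    have hIco : Finset.Ico a (b + 1) = insert b (Finset.Ico a b) := by
      ext x; simp only [Finset.mem_Ico, Finset.mem_insert]; omega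
    have hnot : b ∉ Finset.Ico a b := by simp
    have hcast : ((b + 1 : ℤ) : ℝ) * Δ = (b : ℝ) * Δ + Δ := by push_cast; ring
    have hsplitF : (∫ x in ((a:ℝ) * Δ)..((b:ℝ) * Δ), F x)
        + ∫ x in ((b:ℝ) * Δ)..((b:ℝ) * Δ + Δ), F x
        = ∫ x in ((a:ℝ) * Δ)..((b:ℝ) * Δ + Δ), F x :=
      intervalIntegral.integral_add_adjacent_intervals
        (hFc.intervalIntegrable _ _) (hFc.intervalIntegrable _ _)
    have hsplitF' : (∫ x in ((a:ℝ) * Δ)..((b:ℝ) * Δ), |F' x|)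
        + ∫ x in ((b:ℝ) * Δ)..((b:ℝ) * Δ + Δ), |F' x|
        = ∫ x in ((a:ℝ) * Δ)..((b:ℝ) * Δ + Δ), |F' x| :=
      intervalIntegral.integral_add_adjacent_intervals
        ((hF'c.abs).intervalIntegrable _ _) ((hF'c.abs).intervalIntegrable _ _)
    have hcell := cell_bound F F' hF hF'c ((b : ℝ) * Δ) Δ hΔ.le
    rw [hIco, Finset.sum_insert hnot, hcast, ← hsplitF, ← hsplitF']
    calc |(Δ * F ((b:ℝ) * Δ) + ∑ j ∈ Finset.Ico a b, Δ * F ((j : ℝ) * Δ)) -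
            ((∫ x in ((a:ℝ) * Δ)..((b:ℝ) * Δ), F x)
              + ∫ x in ((b:ℝ) * Δ)..((b:ℝ) * Δ + Δ), F x)|
        = |((∑ j ∈ Finset.Ico a b, Δ * F ((j : ℝ) * Δ)) -
              ∫ x in ((a:ℝ) * Δ)..((b:ℝ) * Δ), F x)
            + (Δ * F ((b:ℝ) * Δ) -
              ∫ x in ((b:ℝ) * Δ)..((b:ℝ) * Δ + Δ), F x)| := by
          congr 1; ring
      _ ≤ |(∑ j ∈ Finset.Ico a b, Δ * F ((j : ℝ) * Δ)) -
              ∫ x in ((a:ℝ) * Δ)..((b:ℝ) * Δ), F x|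
            + |Δ * F ((b:ℝ) * Δ) -
              ∫ x in ((b:ℝ) * Δ)..((b:ℝ) * Δ + Δ), F x| := abs_add_le _ _
      _ ≤ Δ * (∫ x in ((a:ℝ) * Δ)..((b:ℝ) * Δ), |F' x|)
            + Δ * ∫ x in ((b:ℝ) * Δ)..((b:ℝ) * Δ + Δ), |F' x| :=
          add_le_add ih hcell
      _ = Δ * ((∫ x in ((a:ℝ) * Δ)..((b:ℝ) * Δ), |F' x|)
            + ∫ x in ((b:ℝ) * Δ)..((b:ℝ) * Δ + Δ), |F' x|) := by ring

end RsumAux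

open RsumAux

/-- The key Riemann-sum estimate (e:Rsum_bound) from the Appendix: for `N ≥ 2`, `t ≥ 1`,
`|t^{3/2} (2π/(NT)) ∑_{j ∈ J_N} ξ_j² e^{-2d ξ_j² t} - ∫_{-π√t/T}^{π√t/T} z² e^{-2dz²} dz|
  ≤ C √t / N`, where `ξ_j = 2πj/(NT)` and `C` is independent of `N` and `t`. -/
theorem rescaled_riemann_bound_weighted (T d : ℝ) (hT : 0 < T) (hd : 0 < d) :
    ∃ C : ℝ, 0 < C ∧ ∀ N : ℕ, 2 ≤ N → ∀ t : ℝ, 1 ≤ t →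
      |t ^ (3 / 2 : ℝ) * (2 * π / (N * T)) *
            ∑ j ∈ JN N,
              (2 * π * (j : ℝ) / (N * T)) ^ 2 *
                Real.exp (-2 * d * (2 * π * (j : ℝ) / (N * T)) ^ 2 * t) -
          ∫ z in (-(π * Real.sqrt t / T))..(π * Real.sqrt t / T),
            z ^ 2 * Real.exp (-2 * d * z ^ 2)|
        ≤ C * Real.sqrt t / N := by
  have hπ := Real.pi_pos
  set I₁ : ℝ := ∫ x, |Fd' d x| with hI1
  have hI1nonneg : 0 ≤ I₁ := integral_nonneg fun x => abs_nonneg _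
  refine ⟨2 * π / T * (I₁ + 1 / d), by positivity, ?_⟩
  intro N hN t ht
  have ht0 : (0:ℝ) < t := lt_of_lt_of_le one_pos ht
  set s := Real.sqrt t with hs_def
  have hs1 : 1 ≤ s := by
    rw [hs_def, show (1:ℝ) = Real.sqrt 1 from (Real.sqrt_one).symm]
    exact Real.sqrt_le_sqrt ht
  have hs0 : 0 < s := lt_of_lt_of_le one_pos hs1
  have hts : t = s ^ 2 := (Real.sq_sqrt ht0.le).symm
  have hN0 : (0:ℝ) < (N : ℝ) := by
    have : (2:ℝ) ≤ (N:ℝ) := by exact_mod_cast hN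
    linarith
  have hN' : (N:ℝ) ≠ 0 := ne_of_gt hN0
  have hT' : T ≠ 0 := ne_of_gt hT
  set Δ : ℝ := 2 * π * s / ((N : ℝ) * T) with hΔdef
  have hΔ : 0 < Δ := by rw [hΔdef]; positivity
  set a : ℤ := ⌈-(N : ℝ) / 2⌉ with ha
  set b : ℤ := ⌈(N : ℝ) / 2⌉ with hb
  have hJN : JN N = Finset.Ico a b := by simp only [JN, ha, hb]
  have hab : a ≤ b := by
    rw [ha, hb]
    exact Int.ceil_le_ceil (by linarith [hN0] : -(N:ℝ)/2 ≤ (N:ℝ)/2)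
  -- the sum equals the Riemann sum of Fd
  have h32 : t ^ (3/2 : ℝ) = t * s := by
    rw [hs_def, show (3/2 : ℝ) = 1 + 1/2 by norm_num, Real.rpow_add ht0,
      Real.rpow_one, ← Real.sqrt_eq_rpow]
  have key : t ^ (3/2:ℝ) * (2 * π / ((N:ℝ) * T)) *
      ∑ j ∈ JN N, (2 * π * (j:ℝ) / ((N:ℝ) * T)) ^ 2 *
        Real.exp (-2 * d * (2 * π * (j:ℝ) / ((N:ℝ) * T)) ^ 2 * t)
      = ∑ j ∈ Finset.Ico a b, Δ * Fd d ((j:ℝ) * Δ) := by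
    rw [hJN, Finset.mul_sum]
    refine Finset.sum_congr rfl fun j _ => ?_
    have hexp : -2 * d * (2 * π * (j:ℝ) / ((N:ℝ) * T)) ^ 2 * t
        = -2 * d * ((j:ℝ) * Δ) ^ 2 := by
      rw [hts, hΔdef]
      field_simp
    rw [h32, hexp, hts]
    simp only [Fd, hΔdef]
    field_simp
  rw [key]
  -- core estimate
  have hcore := riemann_core (Fd d) (Fd' d) (hasDerivAt_Fd d) (continuous_Fd' d)
    Δ hΔ a b hab
  have habR : ((a:ℝ)) * Δ ≤ ((b:ℝ)) * Δ := by
    have : (a:ℝ) ≤ (b:ℝ) := by exact_mod_cast hab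
    exact mul_le_mul_of_nonneg_right this hΔ.le
  have hmid : ∫ x in ((a:ℝ) * Δ)..((b:ℝ) * Δ), |Fd' d x| ≤ I₁ := by
    rw [intervalIntegral.integral_of_le habR, hI1]
    exact setIntegral_le_integral ((integrable_Fd' d hd).abs)
      (Filter.Eventually.of_forall fun x => abs_nonneg _)
  -- location of endpoints
  have hNΔ : (N:ℝ)/2 * Δ = π * s / T := by
    rw [hΔdef]; field_simp
  have haL : -(π * s / T) ≤ (a:ℝ) * Δ := by
    have h1 : -((N:ℝ)/2) ≤ (a:ℝ) := by
      rw [ha]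
      calc -((N:ℝ)/2) = -(N:ℝ)/2 := by ring
        _ ≤ (⌈-(N:ℝ)/2⌉ : ℝ) := Int.le_ceil _
    calc -(π * s / T) = -((N:ℝ)/2) * Δ := by rw [← hNΔ]; ring
      _ ≤ (a:ℝ) * Δ := mul_le_mul_of_nonneg_right h1 hΔ.le
  have haU : (a:ℝ) * Δ ≤ -(π * s / T) + Δ := by
    have h1 : (a:ℝ) ≤ -((N:ℝ)/2) + 1 := by
      rw [ha]
      have := Int.ceil_lt_add_one (-(N:ℝ)/2)
      have h2 : -(N:ℝ)/2 = -((N:ℝ)/2) := by ring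
      linarith [this]
    calc (a:ℝ) * Δ ≤ (-((N:ℝ)/2) + 1) * Δ := mul_le_mul_of_nonneg_right h1 hΔ.le
      _ = -((N:ℝ)/2 * Δ) + Δ := by ring
      _ = -(π * s / T) + Δ := by rw [hNΔ]
  have hbL : π * s / T ≤ (b:ℝ) * Δ := by
    have h1 : (N:ℝ)/2 ≤ (b:ℝ) := by rw [hb]; exact Int.le_ceil _
    calc π * s / T = (N:ℝ)/2 * Δ := hNΔ.symm
      _ ≤ (b:ℝ) * Δ := mul_le_mul_of_nonneg_right h1 hΔ.le
  have hbU : (b:ℝ) * Δ ≤ π * s / T + Δ := by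
    have h1 : (b:ℝ) ≤ (N:ℝ)/2 + 1 := by
      rw [hb]; linarith [Int.ceil_lt_add_one ((N:ℝ)/2)]
    calc (b:ℝ) * Δ ≤ ((N:ℝ)/2 + 1) * Δ := mul_le_mul_of_nonneg_right h1 hΔ.le
      _ = (N:ℝ)/2 * Δ + Δ := by ring
      _ = π * s / T + Δ := by rw [hNΔ]
  -- split the target integral
  have hFi : ∀ u v : ℝ, IntervalIntegrable (Fd d) volume u v :=
    fun u v => (continuous_Fd d).intervalIntegrable u v
  have e1 := intervalIntegral.integral_add_adjacent_intervals
    (hFi (-(π * s / T)) ((a:ℝ) * Δ)) (hFi ((a:ℝ) * Δ) ((b:ℝ) * Δ))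
  have e2 := intervalIntegral.integral_add_adjacent_intervals
    (hFi (-(π * s / T)) ((b:ℝ) * Δ)) (hFi ((b:ℝ) * Δ) (π * s / T))
  -- edge bounds
  have hedge : ∀ u v : ℝ, |v - u| ≤ Δ →
      |∫ z in u..v, Fd d z| ≤ 1/(2*d) * Δ := by
    intro u v huv
    have h := intervalIntegral.norm_integral_le_of_norm_le_const
      (a := u) (b := v) (C := 1/(2*d)) (f := Fd d)
      (fun x _ => by rw [Real.norm_eq_abs]; exact Fd_bound d hd x)
    rw [Real.norm_eq_abs] at h
    calc |∫ z in u..v, Fd d z| ≤ 1/(2*d) * |v - u| := h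
      _ ≤ 1/(2*d) * Δ := by
          apply mul_le_mul_of_nonneg_left huv
          positivity
  have hedge1 : |∫ z in (-(π * s / T))..((a:ℝ) * Δ), Fd d z| ≤ 1/(2*d) * Δ := by
    apply hedge
    rw [abs_of_nonneg (by linarith)]
    linarith
  have hedge2 : |∫ z in ((b:ℝ) * Δ)..(π * s / T), Fd d z| ≤ 1/(2*d) * Δ := by
    apply hedge
    rw [abs_of_nonpos (by linarith)]
    linarith
  -- the target integral is of Fd
  have hint : (∫ z in (-(π * s / T))..(π * s / T),
      z ^ 2 * Real.exp (-2 * d * z ^ 2)) = ∫ z in (-(π * s / T))..(π * s / T), Fd d z := rfl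
  rw [hint]
  -- assemble
  have hmain : |(∑ j ∈ Finset.Ico a b, Δ * Fd d ((j:ℝ) * Δ)) -
      ∫ z in (-(π * s / T))..(π * s / T), Fd d z| ≤ Δ * (I₁ + 1/d) := by
    have htri : |(∑ j ∈ Finset.Ico a b, Δ * Fd d ((j:ℝ) * Δ)) -
        ∫ z in (-(π * s / T))..(π * s / T), Fd d z|
        ≤ |(∑ j ∈ Finset.Ico a b, Δ * Fd d ((j:ℝ) * Δ)) -
            ∫ x in ((a:ℝ) * Δ)..((b:ℝ) * Δ), Fd d x|
          + |∫ z in (-(π * s / T))..((a:ℝ) * Δ), Fd d z|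
          + |∫ z in ((b:ℝ) * Δ)..(π * s / T), Fd d z| := by
      have hdecomp : (∫ z in (-(π * s / T))..(π * s / T), Fd d z)
          = (∫ z in (-(π * s / T))..((a:ℝ) * Δ), Fd d z)
            + (∫ x in ((a:ℝ) * Δ)..((b:ℝ) * Δ), Fd d x)
            + ∫ z in ((b:ℝ) * Δ)..(π * s / T), Fd d z := by
        rw [← e2, ← e1]
      rw [hdecomp]
      calc |(∑ j ∈ Finset.Ico a b, Δ * Fd d ((j:ℝ) * Δ)) -
          ((∫ z in (-(π * s / T))..((a:ℝ) * Δ), Fd d z)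
            + (∫ x in ((a:ℝ) * Δ)..((b:ℝ) * Δ), Fd d x)
            + ∫ z in ((b:ℝ) * Δ)..(π * s / T), Fd d z)|
          = |((∑ j ∈ Finset.Ico a b, Δ * Fd d ((j:ℝ) * Δ)) -
              ∫ x in ((a:ℝ) * Δ)..((b:ℝ) * Δ), Fd d x)
            + (-(∫ z in (-(π * s / T))..((a:ℝ) * Δ), Fd d z))
            + (-(∫ z in ((b:ℝ) * Δ)..(π * s / T), Fd d z))| := by
            congr 1; ring
        _ ≤ |((∑ j ∈ Finset.Ico a b, Δ * Fd d ((j:ℝ) * Δ)) -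
              ∫ x in ((a:ℝ) * Δ)..((b:ℝ) * Δ), Fd d x)
            + (-(∫ z in (-(π * s / T))..((a:ℝ) * Δ), Fd d z))|
            + |(-(∫ z in ((b:ℝ) * Δ)..(π * s / T), Fd d z))| := abs_add_le _ _
        _ ≤ |(∑ j ∈ Finset.Ico a b, Δ * Fd d ((j:ℝ) * Δ)) -
              ∫ x in ((a:ℝ) * Δ)..((b:ℝ) * Δ), Fd d x|
            + |(-(∫ z in (-(π * s / T))..((a:ℝ) * Δ), Fd d z))|
            + |(-(∫ z in ((b:ℝ) * Δ)..(π * s / T), Fd d z))| := by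
            gcongr
            exact abs_add_le _ _
        _ = |(∑ j ∈ Finset.Ico a b, Δ * Fd d ((j:ℝ) * Δ)) -
              ∫ x in ((a:ℝ) * Δ)..((b:ℝ) * Δ), Fd d x|
            + |∫ z in (-(π * s / T))..((a:ℝ) * Δ), Fd d z|
            + |∫ z in ((b:ℝ) * Δ)..(π * s / T), Fd d z| := by
            rw [abs_neg, abs_neg]
    have h1 : |(∑ j ∈ Finset.Ico a b, Δ * Fd d ((j:ℝ) * Δ)) -
        ∫ x in ((a:ℝ) * Δ)..((b:ℝ) * Δ), Fd d x| ≤ Δ * I₁ := by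
      calc |(∑ j ∈ Finset.Ico a b, Δ * Fd d ((j:ℝ) * Δ)) -
          ∫ x in ((a:ℝ) * Δ)..((b:ℝ) * Δ), Fd d x|
          ≤ Δ * ∫ x in ((a:ℝ) * Δ)..((b:ℝ) * Δ), |Fd' d x| := hcore
        _ ≤ Δ * I₁ := mul_le_mul_of_nonneg_left hmid hΔ.le
    have hfinal : Δ * I₁ + 1/(2*d) * Δ + 1/(2*d) * Δ = Δ * (I₁ + 1/d) := by
      field_simp
      ring
    linarith [htri, h1, hedge1, hedge2]
  have hCeq : Δ * (I₁ + 1/d) = 2 * π / T * (I₁ + 1 / d) * s / (N:ℝ) := by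
    rw [hΔdef]
    field_simp
  calc |(∑ j ∈ Finset.Ico a b, Δ * Fd d ((j:ℝ) * Δ)) -
      ∫ z in (-(π * s / T))..(π * s / T), Fd d z| ≤ Δ * (I₁ + 1/d) := hmain
    _ = 2 * π / T * (I₁ + 1 / d) * s / (N:ℝ) := hCeq
end

section
/- Let T > 0 and N ≥ 1 an integer. Let f, g : ℝ → ℂ be continuous NT-periodic functions whose Fourier coefficient sequences (f̂(2πk/(NT)))_{k∈ℤ} and (ĝ(2πk/(NT)))_{k∈ℤ} are absolutely summable, where ĥ(ζ) = ∫_0^{NT} e^{−iζy} h(y) dy. Then ∫_0^{NT} conj(f(x)) g(x) dx = (1/(NT²)) · ∑_{ξ ∈ Ω_N} ∫_0^T conj(B_T(f)(ξ,x)) · B_T(g)(ξ,x) dx. -/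
open Real Finset

/-- Fourier transform on the torus of period `P`: `ĥ(ζ) = ∫_0^P e^{-iζy} h(y) dy`. -/
noncomputable def fhat (P : ℝ) (h : ℝ → ℂ) (ζ : ℝ) : ℂ :=
  ∫ y in (0:ℝ)..P, Complex.exp (-(Complex.I * (ζ : ℂ) * (y : ℂ))) * h y

/-- The `T`-periodic Bloch transform of a `P`-periodic function `g`:
`B_T(g)(ξ,x) = ∑_{ℓ ∈ ℤ} e^{2πiℓx/T} ĝ(ξ + 2πℓ/T)`. -/
noncomputable def blochT (T P : ℝ) (g : ℝ → ℂ) (ξ x : ℝ) : ℂ :=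
  ∑' ℓ : ℤ, Complex.exp (2 * (Real.pi : ℂ) * Complex.I * (ℓ : ℂ) * (x : ℂ) / (T : ℂ)) *
    fhat P g (ξ + 2 * Real.pi * (ℓ : ℝ) / T)

open MeasureTheory

/-- The basic character `e^{2πiℓx/T}`, written with a real exponent times `I`. -/
noncomputable def Efun (T : ℝ) (ℓ : ℤ) (x : ℝ) : ℂ :=
  Complex.exp (((2 * π * (ℓ:ℝ) * x / T : ℝ) : ℂ) * Complex.I)

lemma Efun_continuous (T : ℝ) (ℓ : ℤ) : Continuous (Efun T ℓ) := by
  unfold Efun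
  exact Complex.continuous_exp.comp
    ((Complex.continuous_ofReal.comp (by fun_prop)).mul continuous_const)

lemma Efun_norm (T : ℝ) (ℓ : ℤ) (x : ℝ) : ‖Efun T ℓ x‖ = 1 :=
  Complex.norm_exp_ofReal_mul_I _

lemma Efun_conj_mul (T : ℝ) (ℓ m : ℤ) (x : ℝ) :
    (starRingEnd ℂ) (Efun T ℓ x) * Efun T m x = Efun T (m - ℓ) x := by
  unfold Efun
  rw [← Complex.exp_conj, ← Complex.exp_add]
  congr 1
  simp only [map_mul, Complex.conj_ofReal, Complex.conj_I]
  push_cast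
  ring

lemma orth (T : ℝ) (hT : 0 < T) (n : ℤ) :
    ∫ x in (0:ℝ)..T, Efun T n x = if n = 0 then (T:ℂ) else 0 := by
  unfold Efun
  rcases eq_or_ne n 0 with rfl | hn
  · simp
  · rw [if_neg hn]
    have hc : (2 * (π:ℂ) * Complex.I * (n:ℂ) / (T:ℂ)) ≠ 0 := by
      apply div_ne_zero
      · exact mul_ne_zero (mul_ne_zero (mul_ne_zero two_ne_zero
          (Complex.ofReal_ne_zero.2 Real.pi_ne_zero)) Complex.I_ne_zero)
          (Int.cast_ne_zero.2 hn)
      · exact Complex.ofReal_ne_zero.2 hT.ne'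
    have h1 : (fun x : ℝ => Complex.exp (((2 * π * (n:ℝ) * x / T : ℝ) : ℂ) * Complex.I))
        = fun x : ℝ => Complex.exp ((2 * (π:ℂ) * Complex.I * (n:ℂ) / (T:ℂ)) * (x:ℂ)) := by
      funext x; congr 1; push_cast; ring
    rw [show (∫ x in (0:ℝ)..T, Complex.exp (((2 * π * (n:ℝ) * x / T : ℝ) : ℂ) * Complex.I))
        = ∫ x in (0:ℝ)..T, Complex.exp ((2 * (π:ℂ) * Complex.I * (n:ℂ) / (T:ℂ)) * (x:ℂ)) from by
      rw [h1]]
    rw [integral_exp_mul_complex hc]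
    have h2 : (2 * (π:ℂ) * Complex.I * (n:ℂ) / (T:ℂ)) * (T:ℂ)
        = (n:ℂ) * (2 * (π:ℂ) * Complex.I) := by
      rw [div_mul_cancel₀ _ (Complex.ofReal_ne_zero.2 hT.ne')]
      ring
    rw [h2, Complex.exp_int_mul_two_pi_mul_I]
    simp

lemma interval_conj (a b : ℝ) (f : ℝ → ℂ) :
    ∫ x in a..b, (starRingEnd ℂ) (f x) = (starRingEnd ℂ) (∫ x in a..b, f x) := by
  unfold intervalIntegral
  rw [integral_conj, integral_conj, map_sub]

lemma swap_sum_integral {ι : Type*} [Countable ι] {A B : ℝ} (hAB : A ≤ B)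
    {F : ι → ℝ → ℂ} (hF : ∀ i, Continuous (F i)) {b : ι → ℝ} (hb : Summable b)
    (hbd : ∀ i, ∀ x ∈ Set.Ioc A B, ‖F i x‖ ≤ b i) :
    HasSum (fun i => ∫ x in A..B, F i x) (∫ x in A..B, ∑' i, F i x) := by
  have hint : ∀ i, IntegrableOn (F i) (Set.Ioc A B) volume := fun i => (hF i).integrableOn_Ioc
  have hsum : Summable fun i => ∫ x in Set.Ioc A B, ‖F i x‖ := by
    apply Summable.of_nonneg_of_le (fun i => integral_nonneg (fun x => norm_nonneg _))
      (fun i => ?_) (hb.mul_right (B - A))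
    calc ∫ x in Set.Ioc A B, ‖F i x‖
        ≤ ∫ _x in Set.Ioc A B, b i := by
          exact setIntegral_mono_on (hint i).norm
            (integrableOn_const measure_Ioc_lt_top.ne) measurableSet_Ioc (hbd i)
      _ = b i * (B - A) := by
          simp [Real.volume_Ioc, ENNReal.toReal_ofReal (sub_nonneg.2 hAB), mul_comm, hAB]
  simp_rw [intervalIntegral.integral_of_le hAB]
  exact MeasureTheory.hasSum_integral_of_summable_integral_norm hint hsum

lemma fourier_expand {P : ℝ} (hP : 0 < P) {h : ℝ → ℂ} (hc : Continuous h)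
    (hp : Function.Periodic h P)
    (hs : Summable fun k : ℤ => ‖fhat P h (2 * π * (k : ℝ) / P)‖) (x : ℝ) :
    HasSum (fun k : ℤ => (1 / (P:ℂ)) * fhat P h (2 * π * (k:ℝ) / P) * Efun P k x) (h x) := by
  haveI : Fact (0 < P) := ⟨hP⟩
  have hcont : Continuous (hp.lift) := hc.quotient_liftOn' _
  set H : C(AddCircle P, ℂ) := ⟨hp.lift, hcont⟩ with hH
  have key : ∀ k : ℤ, fourierCoeff (⇑H) k = (1 / (P:ℂ)) * fhat P h (2 * π * (k:ℝ) / P) := by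
    intro k
    rw [fourierCoeff_eq_intervalIntegral (⇑H) k 0, zero_add]
    have : (∫ y in (0:ℝ)..P, fourier (-k) (y : AddCircle P) • H (y : AddCircle P))
        = fhat P h (2 * π * (k:ℝ) / P) := by
      rw [fhat]
      apply intervalIntegral.integral_congr
      intro y _
      show fourier (-k) (y : AddCircle P) • H (y : AddCircle P) = _
      rw [fourier_coe_apply, smul_eq_mul]
      congr 1
      · push_cast; ring
    rw [this, Complex.real_smul]
    congr 1
    push_cast
    ring_nf
  have hsum : Summable (fourierCoeff (⇑H)) := by
    apply Summable.of_norm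
    have : (fun k : ℤ => ‖fourierCoeff (⇑H) k‖)
        = fun k : ℤ => ‖(1/(P:ℂ))‖ * ‖fhat P h (2 * π * (k:ℝ) / P)‖ := by
      funext k; rw [key k, norm_mul]
    rw [this]
    exact hs.mul_left _
  have hps := has_pointwise_sum_fourier_series_of_summable hsum (x : AddCircle P)
  have hHx : H (x : AddCircle P) = h x := rfl
  rw [hHx] at hps
  unfold Efun
  convert hps using 2 with k
  rw [smul_eq_mul, key k, fourier_coe_apply]
  congr 1
  push_cast
  ring_nf

lemma sum_shift {N : ℕ} (hN : 1 ≤ N) {A : ℤ → ℂ} (hA : Summable A) :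
    ∑ j ∈ JN N, ∑' ℓ : ℤ, A (j + N * ℓ) = ∑' k : ℤ, A k := by
  have hN0 : (0:ℤ) < (N:ℤ) := by exact_mod_cast hN
  set a : ℤ := ⌈-(N:ℝ) / 2⌉ with ha
  have hb : ⌈(N:ℝ) / 2⌉ = a + N := by
    have h1 : (N:ℝ) / 2 = -(N:ℝ) / 2 + ((N:ℤ) : ℝ) := by push_cast; ring
    rw [h1, Int.ceil_add_intCast]
  have hJ : JN N = Finset.Ico a (a + N) := by rw [JN, hb]
  have hinj : ∀ c : ℤ, Function.Injective (fun ℓ : ℤ => c + (N:ℤ) * ℓ) := by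
    intro c ℓ ℓ' hh
    simp only [] at hh
    exact mul_left_cancel₀ hN0.ne' (by linarith)
  let e : {j // j ∈ Finset.Ico a (a + (N:ℤ))} × ℤ ≃ ℤ :=
    { toFun := fun p => p.1.1 + N * p.2
      invFun := fun k => (⟨a + (k - a) % N, by
        rw [Finset.mem_Ico]
        have h1 := Int.emod_nonneg (k - a) hN0.ne'
        have h2 := Int.emod_lt_of_pos (k - a) hN0
        omega⟩, (k - a) / N)
      left_inv := fun p => by
        obtain ⟨⟨j, hj⟩, ℓ⟩ := p
        rw [Finset.mem_Ico] at hj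
        have h1 : j + (N:ℤ) * ℓ - a = (j - a) + N * ℓ := by ring
        have h2 : (j - a) % (N:ℤ) = j - a := Int.emod_eq_of_lt (by omega) (by omega)
        have h3 : ((j - a) + (N:ℤ) * ℓ) % N = j - a := by
          rw [Int.add_mul_emod_self_left, h2]
        have h4 : ((j - a) + (N:ℤ) * ℓ) / N = ℓ := by
          rw [Int.add_mul_ediv_left _ _ hN0.ne',
            Int.ediv_eq_zero_of_lt (by omega) (by omega), zero_add]
        refine Prod.ext (Subtype.ext ?_) ?_
        · show a + (j + (N:ℤ) * ℓ - a) % N = j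
          rw [h1, h3]; omega
        · show (j + (N:ℤ) * ℓ - a) / N = ℓ
          rw [h1, h4]
      right_inv := fun k => by
        have h3 := Int.emod_add_mul_ediv (k - a) (N:ℤ)
        show a + (k - a) % ↑N + ↑N * ((k - a) / ↑N) = k
        linarith [h3] }
  have hsum : Summable fun p : {j // j ∈ Finset.Ico a (a + (N:ℤ))} × ℤ => A (p.1.1 + N * p.2) :=
    e.summable_iff.2 hA
  calc ∑ j ∈ JN N, ∑' ℓ : ℤ, A (j + N * ℓ)
      = ∑ j ∈ (Finset.Ico a (a + (N:ℤ))).attach, ∑' ℓ : ℤ, A (j.1 + N * ℓ) := by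
        rw [hJ]; exact (Finset.sum_attach _ _).symm
    _ = ∑' j : {j // j ∈ Finset.Ico a (a + (N:ℤ))}, ∑' ℓ : ℤ, A (j.1 + N * ℓ) := by
        rw [tsum_fintype, Finset.univ_eq_attach]
    _ = ∑' p : {j // j ∈ Finset.Ico a (a + (N:ℤ))} × ℤ, A (p.1.1 + N * p.2) := by
        rw [Summable.tsum_prod' hsum (fun j => hA.comp_injective (hinj j.1))]
    _ = ∑' k : ℤ, A k := e.tsum_eq A

set_option maxHeartbeats 1600000 in
/-- The subharmonic Parseval identity (e:parseval_per) of Section 2.2: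
`∫_0^{NT} conj(f) g = (1/(NT²)) ∑_{ξ ∈ Ω_N} ∫_0^T conj(B_T f(ξ,·)) B_T g(ξ,·)`. -/
theorem subharmonic_parseval (T : ℝ) (hT : 0 < T) (N : ℕ) (hN : 1 ≤ N) (f g : ℝ → ℂ)
    (hfc : Continuous f) (hgc : Continuous g)
    (hfp : Function.Periodic f (N * T)) (hgp : Function.Periodic g (N * T))
    (hfs : Summable fun k : ℤ => ‖fhat (N * T) f (2 * π * (k : ℝ) / (N * T))‖)
    (hgs : Summable fun k : ℤ => ‖fhat (N * T) g (2 * π * (k : ℝ) / (N * T))‖) :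
    (∫ x in (0:ℝ)..(N * T), starRingEnd ℂ (f x) * g x) =
      (1 / ((N : ℂ) * (T : ℂ) ^ 2)) *
        ∑ j ∈ JN N,
          ∫ x in (0:ℝ)..T,
            starRingEnd ℂ (blochT T (N * T) f (2 * π * (j : ℝ) / (N * T)) x) *
              blochT T (N * T) g (2 * π * (j : ℝ) / (N * T)) x := by
  have hNR : (0:ℝ) < (N:ℝ) := by exact_mod_cast Nat.lt_of_lt_of_le Nat.zero_lt_one hN
  have hP : (0:ℝ) < (N:ℝ) * T := mul_pos hNR hT
  set cf : ℤ → ℂ := fun k => fhat ((N:ℝ) * T) f (2 * π * (k:ℝ) / ((N:ℝ) * T)) with hcf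
  set cg : ℤ → ℂ := fun k => fhat ((N:ℝ) * T) g (2 * π * (k:ℝ) / ((N:ℝ) * T)) with hcg
  -- Part 1 : LHS = ∑' k, (1/P) * cg k * conj (cf k)
  obtain ⟨Mf, hMf⟩ := (isCompact_Icc (a := (0:ℝ)) (b := (N:ℝ)*T)).exists_bound_of_continuousOn
    hfc.continuousOn
  set F1 : ℤ → ℝ → ℂ := fun k x =>
    (starRingEnd ℂ) (f x) * ((1 / (((N:ℝ)*T : ℝ):ℂ)) * cg k * Efun ((N:ℝ)*T) k x) with hF1
  have hF1c : ∀ k, Continuous (F1 k) := by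
    intro k
    apply Continuous.mul
    · exact Complex.continuous_conj.comp hfc
    · exact continuous_const.mul (Efun_continuous _ _)
  have hb1 : Summable fun k : ℤ => Mf * (‖(1 / (((N:ℝ)*T : ℝ):ℂ))‖ * ‖cg k‖) :=
    ((hgs.mul_left _).mul_left Mf)
  have hbd1 : ∀ k : ℤ, ∀ x ∈ Set.Ioc (0:ℝ) ((N:ℝ)*T),
      ‖F1 k x‖ ≤ Mf * (‖(1 / (((N:ℝ)*T : ℝ):ℂ))‖ * ‖cg k‖) := by
    intro k x hx
    have hx' : x ∈ Set.Icc (0:ℝ) ((N:ℝ)*T) := ⟨hx.1.le, hx.2⟩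
    have : ‖F1 k x‖ = ‖f x‖ * (‖(1 / (((N:ℝ)*T : ℝ):ℂ))‖ * ‖cg k‖) := by
      simp only [hF1, norm_mul, RCLike.norm_conj, Efun_norm, mul_one]
    rw [this]
    exact mul_le_mul_of_nonneg_right (hMf x hx') (by positivity)
  have hswap1 := swap_sum_integral hP.le hF1c hb1 hbd1
  have hgx : ∀ x : ℝ, ∑' k : ℤ, F1 k x = (starRingEnd ℂ) (f x) * g x := fun x =>
    ((fourier_expand hP hgc hgp hgs x).mul_left _).tsum_eq
  have e1 : (∫ x in (0:ℝ)..((N:ℝ)*T), ∑' k : ℤ, F1 k x)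
      = ∫ x in (0:ℝ)..((N:ℝ)*T), (starRingEnd ℂ) (f x) * g x :=
    intervalIntegral.integral_congr (fun x _ => hgx x)
  have hI1 : ∀ k : ℤ, (∫ x in (0:ℝ)..((N:ℝ)*T), F1 k x)
      = (1 / (((N:ℝ)*T : ℝ):ℂ)) * cg k * (starRingEnd ℂ) (cf k) := by
    intro k
    have hpt : ∀ x : ℝ, F1 k x = (1 / (((N:ℝ)*T : ℝ):ℂ)) * cg k *
        ((starRingEnd ℂ) (f x) * Efun ((N:ℝ)*T) k x) := by
      intro x; simp only [hF1]; ring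
    rw [intervalIntegral.integral_congr (fun x _ => hpt x),
      intervalIntegral.integral_const_mul]
    congr 1
    rw [hcf]
    simp only []
    rw [fhat, ← interval_conj]
    apply intervalIntegral.integral_congr
    intro x _
    dsimp only
    rw [map_mul, mul_comm]
    congr 1
    unfold Efun
    rw [← Complex.exp_conj]
    congr 1
    simp only [map_neg, map_mul, Complex.conj_I, Complex.conj_ofReal]
    push_cast
    ring
  have hL : (∫ x in (0:ℝ)..((N:ℝ)*T), (starRingEnd ℂ) (f x) * g x)
      = ∑' k : ℤ, (1 / (((N:ℝ)*T : ℝ):ℂ)) * cg k * (starRingEnd ℂ) (cf k) := by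
    rw [← e1, ← hswap1.tsum_eq]
    exact tsum_congr hI1
  -- Part 2 : each Bloch integral
  have hNZ : (N:ℤ) ≠ 0 := by exact_mod_cast (by omega : N ≠ 0)
  have hinjN : ∀ j : ℤ, Function.Injective (fun ℓ : ℤ => j + (N:ℤ) * ℓ) := by
    intro j ℓ ℓ' hh
    simp only [] at hh
    exact mul_left_cancel₀ hNZ (by linarith)
  have hRj : ∀ j : ℤ,
      (∫ x in (0:ℝ)..T,
        (starRingEnd ℂ) (blochT T ((N:ℝ) * T) f (2 * π * (j:ℝ) / ((N:ℝ) * T)) x) *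
          blochT T ((N:ℝ) * T) g (2 * π * (j:ℝ) / ((N:ℝ) * T)) x)
      = (T:ℂ) * ∑' ℓ : ℤ, (starRingEnd ℂ) (cf (j + N * ℓ)) * cg (j + N * ℓ) := by
    intro j
    have harg : ∀ ℓ : ℤ, 2 * π * (j:ℝ) / ((N:ℝ) * T) + 2 * π * (ℓ:ℝ) / T
        = 2 * π * (((j + N * ℓ : ℤ)):ℝ) / ((N:ℝ) * T) := by
      intro ℓ
      push_cast
      field_simp
    have hbl : ∀ (h : ℝ → ℂ) (x : ℝ), blochT T ((N:ℝ) * T) h (2 * π * (j:ℝ) / ((N:ℝ) * T)) x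
        = ∑' ℓ : ℤ, Efun T ℓ x * fhat ((N:ℝ)*T) h (2 * π * (((j + N * ℓ : ℤ)):ℝ) / ((N:ℝ) * T)) := by
      intro h x
      rw [blochT]
      apply tsum_congr
      intro ℓ
      rw [harg ℓ]
      congr 1
      unfold Efun
      congr 1
      push_cast
      ring
    have hsf : Summable fun ℓ : ℤ => ‖cf (j + N * ℓ)‖ := hfs.comp_injective (hinjN j)
    have hsg : Summable fun ℓ : ℤ => ‖cg (j + N * ℓ)‖ := hgs.comp_injective (hinjN j)
    set F2 : ℤ × ℤ → ℝ → ℂ := fun p x =>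
      (starRingEnd ℂ) (Efun T p.1 x * cf (j + N * p.1)) * (Efun T p.2 x * cg (j + N * p.2))
      with hF2
    have hprod : ∀ x : ℝ,
        (starRingEnd ℂ) (blochT T ((N:ℝ) * T) f (2 * π * (j:ℝ) / ((N:ℝ) * T)) x) *
          blochT T ((N:ℝ) * T) g (2 * π * (j:ℝ) / ((N:ℝ) * T)) x
        = ∑' p : ℤ × ℤ, F2 p x := by
      intro x
      rw [hbl f x, hbl g x]
      rw [show (starRingEnd ℂ) (∑' ℓ : ℤ, Efun T ℓ x *
          fhat ((N:ℝ)*T) f (2 * π * (((j + N * ℓ : ℤ)):ℝ) / ((N:ℝ) * T)))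
          = ∑' ℓ : ℤ, (starRingEnd ℂ) (Efun T ℓ x * cf (j + N * ℓ)) from by
        simp only [starRingEnd_apply]
        exact tsum_star]
      apply tsum_mul_tsum_of_summable_norm
      · exact hsf.congr (fun ℓ => (by
          rw [starRingEnd_apply, norm_star, norm_mul, Efun_norm, one_mul] :
            ‖(starRingEnd ℂ) (Efun T ℓ x * cf (j + N * ℓ))‖ = ‖cf (j + N * ℓ)‖).symm)
      · exact hsg.congr (fun ℓ => (by
          rw [norm_mul, Efun_norm, one_mul] :
            ‖Efun T ℓ x * cg (j + N * ℓ)‖ = ‖cg (j + N * ℓ)‖).symm)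
    have hF2c : ∀ p : ℤ × ℤ, Continuous (F2 p) := by
      intro p
      apply Continuous.mul
      · exact
          (Complex.continuous_conj.comp ((Efun_continuous T p.1).mul continuous_const))
      · exact (Efun_continuous T p.2).mul continuous_const
    have hb2 : Summable fun p : ℤ × ℤ => ‖cf (j + N * p.1)‖ * ‖cg (j + N * p.2)‖ :=
      hsf.mul_of_nonneg hsg (fun ℓ => norm_nonneg _) (fun ℓ => norm_nonneg _)
    have hbd2 : ∀ p : ℤ × ℤ, ∀ x ∈ Set.Ioc (0:ℝ) T,
        ‖F2 p x‖ ≤ ‖cf (j + N * p.1)‖ * ‖cg (j + N * p.2)‖ := by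
      intro p x _
      apply le_of_eq
      simp only [hF2, starRingEnd_apply, norm_mul, norm_star, Efun_norm, one_mul]
    have hswap2 := swap_sum_integral hT.le hF2c hb2 hbd2
    have e2 : (∫ x in (0:ℝ)..T, ∑' p : ℤ × ℤ, F2 p x)
        = ∫ x in (0:ℝ)..T,
            (starRingEnd ℂ) (blochT T ((N:ℝ) * T) f (2 * π * (j:ℝ) / ((N:ℝ) * T)) x) *
              blochT T ((N:ℝ) * T) g (2 * π * (j:ℝ) / ((N:ℝ) * T)) x :=
      intervalIntegral.integral_congr (fun x _ => (hprod x).symm)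
    have hI2 : ∀ p : ℤ × ℤ, (∫ x in (0:ℝ)..T, F2 p x)
        = if p.1 = p.2 then
            (T:ℂ) * ((starRingEnd ℂ) (cf (j + N * p.1)) * cg (j + N * p.1)) else 0 := by
      rintro ⟨ℓ, m⟩
      have hpt : ∀ x : ℝ, F2 (ℓ, m) x
          = ((starRingEnd ℂ) (cf (j + N * ℓ)) * cg (j + N * m)) * Efun T (m - ℓ) x := by
        intro x
        simp only [hF2, map_mul]
        rw [show (starRingEnd ℂ) (Efun T ℓ x) * (starRingEnd ℂ) (cf (j + N * ℓ)) *
            (Efun T m x * cg (j + N * m))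
            = ((starRingEnd ℂ) (cf (j + N * ℓ)) * cg (j + N * m)) *
              ((starRingEnd ℂ) (Efun T ℓ x) * Efun T m x) from by ring,
          Efun_conj_mul]
      rw [intervalIntegral.integral_congr (fun x _ => hpt x),
        intervalIntegral.integral_const_mul, orth T hT (m - ℓ)]
      rcases eq_or_ne ℓ m with rfl | hlm
      · rw [if_pos rfl, if_pos (sub_self ℓ)]
        ring
      · rw [if_neg (fun hh => hlm (by omega)), if_neg hlm, mul_zero]
    have hdiaginj : Function.Injective (fun ℓ : ℤ => ((ℓ, ℓ) : ℤ × ℤ)) :=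
      fun p q hh => (Prod.ext_iff.1 hh).1
    calc (∫ x in (0:ℝ)..T,
            (starRingEnd ℂ) (blochT T ((N:ℝ) * T) f (2 * π * (j:ℝ) / ((N:ℝ) * T)) x) *
              blochT T ((N:ℝ) * T) g (2 * π * (j:ℝ) / ((N:ℝ) * T)) x)
        = ∑' p : ℤ × ℤ, ∫ x in (0:ℝ)..T, F2 p x := by rw [← e2, hswap2.tsum_eq]
      _ = ∑' p : ℤ × ℤ, (if p.1 = p.2 then
            (T:ℂ) * ((starRingEnd ℂ) (cf (j + N * p.1)) * cg (j + N * p.1)) else 0) :=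
          tsum_congr hI2
      _ = ∑' ℓ : ℤ, (if ℓ = ℓ then
            (T:ℂ) * ((starRingEnd ℂ) (cf (j + N * ℓ)) * cg (j + N * ℓ)) else 0) := by
          refine (hdiaginj.tsum_eq ?_).symm
          intro p hp
          rcases eq_or_ne p.1 p.2 with hq | hq
          · exact ⟨p.1, by rw [Prod.ext_iff]; exact ⟨rfl, hq⟩⟩
          · exact absurd (if_neg hq) hp
      _ = ∑' ℓ : ℤ, (T:ℂ) * ((starRingEnd ℂ) (cf (j + N * ℓ)) * cg (j + N * ℓ)) := by
          simp
      _ = (T:ℂ) * ∑' ℓ : ℤ, (starRingEnd ℂ) (cf (j + N * ℓ)) * cg (j + N * ℓ) :=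
          tsum_mul_left
  -- Part 3 : combine
  have hAsum : Summable fun k : ℤ => (starRingEnd ℂ) (cf k) * cg k := by
    apply Summable.of_norm
    have hbd : ∀ k : ℤ, ‖(starRingEnd ℂ) (cf k) * cg k‖
        ≤ (∑' i : ℤ, ‖cf i‖) * ‖cg k‖ := by
      intro k
      rw [norm_mul, starRingEnd_apply, norm_star]
      exact mul_le_mul_of_nonneg_right
        (Summable.le_tsum hfs k (fun i _ => norm_nonneg _)) (norm_nonneg _)
    exact Summable.of_nonneg_of_le (fun k => norm_nonneg _) hbd (hgs.mul_left _)
  rw [hL, Finset.sum_congr rfl (fun j _ => hRj j), ← Finset.mul_sum,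
    sum_shift hN hAsum]
  rw [tsum_congr (fun k : ℤ => show (1 / (((N:ℝ)*T : ℝ):ℂ)) * cg k * (starRingEnd ℂ) (cf k)
      = (1 / (((N:ℝ)*T : ℝ):ℂ)) * ((starRingEnd ℂ) (cf k) * cg k) from by ring),
    tsum_mul_left]
  have hcast : (((N:ℝ)*T : ℝ):ℂ) = (N:ℂ) * (T:ℂ) := by push_cast; ring
  rw [hcast]
  have hNC : (N:ℂ) ≠ 0 := by
    exact_mod_cast Nat.cast_ne_zero.2 (by omega)
  have hTC : (T:ℂ) ≠ 0 := Complex.ofReal_ne_zero.2 hT.ne'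
  field_simp
end

section
/- Let T > 0 and N ≥ 1 an integer. Let f : ℝ → ℂ be a continuous T-periodic function with absolutely summable T-Fourier coefficients (f̂_T(2πk/T))_{k∈ℤ}, where f̂_T(2πk/T) = ∫_0^T e^{−2πiky/T} f(y) dy, and let g : ℝ → ℂ be a continuous NT-periodic function with absolutely summable NT-Fourier coefficients. Then for every ξ ∈ Ω_N and every x ∈ ℝ, B_T(fg)(ξ,x) = f(x) · B_T(g)(ξ,x). -/
open Real Finset

open MeasureTheory
open scoped ENNReal NNReal

/-- Fourier inversion for a continuous `T`-periodic function with absolutely summable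
Fourier coefficients. -/
lemma fourier_inversion (T : ℝ) (hT : 0 < T) (f : ℝ → ℂ) (hfc : Continuous f)
    (hfp : Function.Periodic f T)
    (hfs : Summable fun k : ℤ => ‖fhat T f (2 * π * (k : ℝ) / T)‖) (x : ℝ) :
    HasSum (fun k : ℤ =>
      (1/(T:ℂ)) * fhat T f (2 * π * (k:ℝ) / T) *
        Complex.exp (2 * (π:ℂ) * Complex.I * (k:ℂ) * (x:ℂ) / (T:ℂ))) (f x) := by
  haveI : Fact (0 < T) := ⟨hT⟩
  have hlift : Continuous hfp.lift :=
    hfc.quotient_liftOn' _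
  set F : C(AddCircle T, ℂ) := ⟨hfp.lift, hlift⟩ with hF
  have hFcoe : ∀ y : ℝ, F (y : AddCircle T) = f y := fun y => rfl
  have hcoeff : ∀ k : ℤ, fourierCoeff (F : AddCircle T → ℂ) k
      = (1/(T:ℂ)) * fhat T f (2 * π * (k:ℝ) / T) := by
    intro k
    rw [fourierCoeff_eq_intervalIntegral _ k 0, zero_add]
    have h1 : Set.EqOn (fun y : ℝ => (fourier (-k) (y : AddCircle T) : ℂ) • (F (y : AddCircle T)))
        (fun y : ℝ => Complex.exp (-(Complex.I * ((2 * π * (k:ℝ) / T : ℝ):ℂ) * (y:ℂ))) * f y)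
        (Set.uIcc 0 T) := by
      intro y _
      simp only [smul_eq_mul, fourier_coe_apply, hFcoe]
      congr 1
      push_cast
      ring
    rw [intervalIntegral.integral_congr h1, fhat]
    rw [Complex.real_smul]
    push_cast
    ring_nf
  have hsc : Summable (fourierCoeff (F : AddCircle T → ℂ)) := by
    apply Summable.congr _ (fun k => (hcoeff k).symm)
    exact (hfs.of_norm).mul_left _
  have h := has_pointwise_sum_fourier_series_of_summable hsc (x : AddCircle T)
  rw [hFcoe x] at h
  have heq : (fun k : ℤ => fourierCoeff (F : AddCircle T → ℂ) k • fourier k (x : AddCircle T))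
      = fun k : ℤ => (1/(T:ℂ)) * fhat T f (2 * π * (k:ℝ) / T) *
        Complex.exp (2 * (π:ℂ) * Complex.I * (k:ℂ) * (x:ℂ) / (T:ℂ)) := by
    funext k
    rw [hcoeff k, smul_eq_mul, fourier_coe_apply]
  rwa [heq] at h

/-- Fourier transform of the product of a `T`-periodic function by a `P`-periodic one. -/
lemma fhat_mul (T : ℝ) (hT : 0 < T) (P : ℝ) (hP : 0 < P) (f g : ℝ → ℂ)
    (hfc : Continuous f) (hgc : Continuous g)
    (hfp : Function.Periodic f T) (hgp : Function.Periodic g P)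
    (hfs : Summable fun k : ℤ => ‖fhat T f (2 * π * (k : ℝ) / T)‖) (ζ : ℝ) :
    fhat P (fun y => f y * g y) ζ
      = ∑' k : ℤ, (1/(T:ℂ)) * fhat T f (2 * π * (k:ℝ) / T)
          * fhat P g (ζ - 2 * π * (k:ℝ) / T) := by
  -- global bound for g
  obtain ⟨C, hC⟩ : ∃ C : ℝ, ∀ y ∈ Set.Icc (0:ℝ) P, ‖g y‖ ≤ C :=
    isCompact_Icc.exists_bound_of_continuousOn hgc.continuousOn
  have hCg : ∀ y : ℝ, ‖g y‖ ≤ C := by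
    intro y
    obtain ⟨z, hz, hgz⟩ := hgp.exists_mem_Ico₀ hP y
    rw [hgz]
    exact hC z ⟨hz.1, hz.2.le⟩
  have hC0 : 0 ≤ C := le_trans (norm_nonneg _) (hCg 0)
  set c : ℤ → ℂ := fun k => fhat T f (2 * π * (k:ℝ) / T) with hc
  set Fk : ℤ → ℝ → ℂ := fun k y =>
    (1/(T:ℂ)) * c k * Complex.exp (2 * (π:ℂ) * Complex.I * (k:ℂ) * (y:ℂ) / (T:ℂ)) *
      (Complex.exp (-(Complex.I * (ζ:ℂ) * (y:ℂ))) * g y) with hFk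
  have key : ∀ y : ℝ, HasSum (fun k => Fk k y)
      (Complex.exp (-(Complex.I * (ζ:ℂ) * (y:ℂ))) * (f y * g y)) := by
    intro y
    have := (fourier_inversion T hT f hfc hfp hfs y).mul_right
      (Complex.exp (-(Complex.I * (ζ:ℂ) * (y:ℂ))) * g y)
    convert this using 1
    · rfl
    ring
  have hnorm : ∀ k y, ‖Fk k y‖ ≤ 1/T * ‖c k‖ * C := by
    intro k y
    have e1 : ‖Complex.exp (2 * (π:ℂ) * Complex.I * (k:ℂ) * (y:ℂ) / (T:ℂ))‖ = 1 := by
      rw [show (2 * (π:ℂ) * Complex.I * (k:ℂ) * (y:ℂ) / (T:ℂ))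
          = ((2*π*(k:ℝ)*y/T : ℝ):ℂ) * Complex.I by push_cast; ring,
        Complex.norm_exp_ofReal_mul_I]
    have e2 : ‖Complex.exp (-(Complex.I * (ζ:ℂ) * (y:ℂ)))‖ = 1 := by
      rw [show (-(Complex.I * (ζ:ℂ) * (y:ℂ))) = ((-(ζ*y) : ℝ):ℂ) * Complex.I by
          push_cast; ring, Complex.norm_exp_ofReal_mul_I]
    have e3 : ‖(1/(T:ℂ))‖ = 1/T := by
      rw [show (1/(T:ℂ)) = ((1/T : ℝ) : ℂ) by push_cast; ring, Complex.norm_real,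
        Real.norm_of_nonneg (by positivity)]
    calc ‖Fk k y‖ = 1/T * ‖c k‖ * ‖g y‖ := by
          simp only [hFk, norm_mul, e1, e2, e3]; ring
      _ ≤ 1/T * ‖c k‖ * C := by
          apply mul_le_mul_of_nonneg_left (hCg y) (by positivity)
  have hmeas : ∀ k : ℤ, AEStronglyMeasurable (Fk k) (volume.restrict (Set.Ioc 0 P)) := by
    intro k
    apply Continuous.aestronglyMeasurable
    fun_prop
  have hlint : (∑' k : ℤ, ∫⁻ y in Set.Ioc (0:ℝ) P, (‖Fk k y‖₊ : ℝ≥0∞)) ≠ ⊤ := by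
    have hb : ∀ k : ℤ, ∫⁻ y in Set.Ioc (0:ℝ) P, ‖Fk k y‖₊
        ≤ ENNReal.ofReal (1/T * ‖c k‖ * C) * ENNReal.ofReal P := by
      intro k
      calc ∫⁻ y in Set.Ioc (0:ℝ) P, (‖Fk k y‖₊ : ℝ≥0∞)
          ≤ ∫⁻ _ in Set.Ioc (0:ℝ) P, ENNReal.ofReal (1/T * ‖c k‖ * C) := by
            apply lintegral_mono
            intro y
            show (‖Fk k y‖₊ : ℝ≥0∞) ≤ _
            rw [show (‖Fk k y‖₊ : ℝ≥0∞) = ENNReal.ofReal ‖Fk k y‖ from (ofReal_norm _).symm]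
            exact ENNReal.ofReal_le_ofReal (hnorm k y)
        _ = ENNReal.ofReal (1/T * ‖c k‖ * C) * ENNReal.ofReal P := by
            rw [lintegral_const, Measure.restrict_apply_univ, Real.volume_Ioc, sub_zero]
    refine ne_top_of_le_ne_top ?_ (ENNReal.tsum_le_tsum hb)
    rw [ENNReal.tsum_mul_right]
    apply ENNReal.mul_ne_top _ ENNReal.ofReal_ne_top
    rw [← ENNReal.ofReal_tsum_of_nonneg (fun k => by positivity)
      (((hfs.mul_left (1/T)).mul_right C))]
    exact ENNReal.ofReal_ne_top
  have hswap : ∫ y in Set.Ioc (0:ℝ) P, (∑' k : ℤ, Fk k y)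
      = ∑' k : ℤ, ∫ y in Set.Ioc (0:ℝ) P, Fk k y := integral_tsum hmeas hlint
  have lhs1 : fhat P (fun y => f y * g y) ζ = ∫ y in Set.Ioc (0:ℝ) P, (∑' k : ℤ, Fk k y) := by
    rw [fhat, intervalIntegral.integral_of_le hP.le]
    apply setIntegral_congr_fun measurableSet_Ioc
    intro y _
    exact ((key y).tsum_eq).symm
  rw [lhs1, hswap]
  apply tsum_congr
  intro k
  rw [show ∫ y in Set.Ioc (0:ℝ) P, Fk k y = ∫ y in (0:ℝ)..P, Fk k y from
    (intervalIntegral.integral_of_le hP.le).symm]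
  have : ∀ y : ℝ, Fk k y = (1/(T:ℂ)) * c k *
      (Complex.exp (-(Complex.I * ((ζ - 2 * π * (k:ℝ) / T : ℝ):ℂ) * (y:ℂ))) * g y) := by
    intro y
    have harg : Complex.exp (2 * (π:ℂ) * Complex.I * (k:ℂ) * (y:ℂ) / (T:ℂ)) *
        Complex.exp (-(Complex.I * (ζ:ℂ) * (y:ℂ)))
        = Complex.exp (-(Complex.I * ((ζ - 2 * π * (k:ℝ) / T : ℝ):ℂ) * (y:ℂ))) := by
      rw [← Complex.exp_add]
      congr 1
      push_cast
      ring
    simp only [hFk]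
    rw [← harg]
    ring
  rw [intervalIntegral.integral_congr (fun y _ => this y), fhat]
  rw [intervalIntegral.integral_const_mul]
  simp only [hc, fhat]

lemma norm_eT (T x : ℝ) (hT : 0 < T) (k : ℤ) :
    ‖Complex.exp (2 * (π:ℂ) * Complex.I * (k:ℂ) * (x:ℂ) / (T:ℂ))‖ = 1 := by
  rw [show (2 * (π:ℂ) * Complex.I * (k:ℂ) * (x:ℂ) / (T:ℂ))
      = ((2*π*(k:ℝ)*x/T : ℝ):ℂ) * Complex.I by push_cast; ring,
    Complex.norm_exp_ofReal_mul_I]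

/-- First identity of Lemma 2.1: for `f` a `T`-periodic function and `g` an `NT`-periodic
function, `B_T(fg)(ξ,x) = f(x) B_T(g)(ξ,x)` for every Bloch frequency `ξ ∈ Ω_N`. -/
theorem bloch_mul (T : ℝ) (hT : 0 < T) (N : ℕ) (hN : 1 ≤ N) (f g : ℝ → ℂ)
    (hfc : Continuous f) (hgc : Continuous g)
    (hfp : Function.Periodic f T) (hgp : Function.Periodic g (N * T))
    (hfs : Summable fun k : ℤ => ‖fhat T f (2 * π * (k : ℝ) / T)‖)
    (hgs : Summable fun k : ℤ => ‖fhat (N * T) g (2 * π * (k : ℝ) / (N * T))‖) :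
    ∀ j ∈ JN N, ∀ x : ℝ,
      blochT T (N * T) (fun y => f y * g y) (2 * π * (j : ℝ) / (N * T)) x =
        f x * blochT T (N * T) g (2 * π * (j : ℝ) / (N * T)) x := by
  intro j _ x
  have hNR : (0:ℝ) < (N:ℝ) := by exact_mod_cast Nat.lt_of_lt_of_le Nat.zero_lt_one hN
  have hP : (0:ℝ) < (N:ℝ) * T := mul_pos hNR hT
  have hTne : (T:ℝ) ≠ 0 := hT.ne'
  have hNne : ((N:ℝ)) ≠ 0 := hNR.ne'
  set ξ : ℝ := 2 * π * (j : ℝ) / ((N:ℝ) * T) with hξ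
  set E : ℤ → ℂ := fun ℓ =>
    Complex.exp (2 * (π:ℂ) * Complex.I * (ℓ:ℂ) * (x:ℂ) / (T:ℂ)) with hE
  set c : ℤ → ℂ := fun k => fhat T f (2 * π * (k:ℝ) / T) with hc
  set d : ℤ → ℂ := fun k => fhat ((N:ℝ) * T) g (2 * π * (k:ℝ) / ((N:ℝ) * T)) with hd
  set a : ℤ → ℂ := fun k => E k * ((1/(T:ℂ)) * c k) with ha
  set b : ℤ → ℂ := fun m => E m * d (j + N * m) with hb
  -- norms
  have hna : ∀ k, ‖a k‖ = 1/T * ‖c k‖ := by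
    intro k
    simp only [ha, hE, norm_mul, norm_eT T x hT, one_mul,
      show ‖(1/(T:ℂ))‖ = 1/T by
        rw [show (1/(T:ℂ)) = ((1/T : ℝ):ℂ) by push_cast; ring, Complex.norm_real,
          Real.norm_of_nonneg (by positivity)]]
  have hnb : ∀ m, ‖b m‖ = ‖d (j + N * m)‖ := by
    intro m
    simp only [hb, hE, norm_mul, norm_eT T x hT, one_mul]
  have Sa : Summable fun k => ‖a k‖ := by
    apply Summable.congr _ (fun k => (hna k).symm)
    exact hfs.mul_left _
  have Sb : Summable fun m => ‖b m‖ := by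
    apply Summable.congr _ (fun m => (hnb m).symm)
    have hinj : Function.Injective (fun m : ℤ => j + (N:ℤ) * m) := by
      intro m1 m2 h
      simp only [add_right_inj] at h
      exact mul_left_cancel₀ (by exact_mod_cast hNR.ne') h
    exact Summable.comp_injective (f := fun k : ℤ => ‖d k‖) hgs hinj
  have SabC : Summable fun p : ℤ × ℤ => a p.1 * b p.2 :=
    Summable.of_norm (Summable.mul_norm Sa Sb)
  -- the shear equivalence
  set e : ℤ × ℤ ≃ ℤ × ℤ :=
    ⟨fun p => (p.2 + p.1, p.1), fun q => (q.2, q.1 - q.2),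
      fun p => by simp, fun q => by simp⟩ with he
  have Sh : Summable fun p : ℤ × ℤ => a p.2 * b (p.1 - p.2) := by
    have : (fun p : ℤ × ℤ => a p.2 * b (p.1 - p.2))
        = (fun p : ℤ × ℤ => a p.1 * b p.2) ∘ ⇑e.symm := rfl
    rw [this]
    exact SabC.comp_injective e.symm.injective
  -- key term identity
  have hterm : ∀ ℓ k : ℤ,
      E ℓ * ((1/(T:ℂ)) * c k * fhat ((N:ℝ)*T) g (ξ + 2 * π * (ℓ:ℝ) / T - 2 * π * (k:ℝ) / T))
        = a k * b (ℓ - k) := by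
    intro ℓ k
    have hEsplit : E ℓ = E k * E (ℓ - k) := by
      simp only [hE, ← Complex.exp_add]
      congr 1
      push_cast
      ring
    have harg : ξ + 2 * π * (ℓ:ℝ) / T - 2 * π * (k:ℝ) / T
        = 2 * π * (((j + N * (ℓ - k)) : ℤ) : ℝ) / ((N:ℝ) * T) := by
      rw [hξ]
      push_cast
      field_simp
      ring
    rw [hEsplit, harg]
    simp only [ha, hb, hd]
    ring
  -- chain of equalities
  have step1 : blochT T ((N:ℝ) * T) (fun y => f y * g y) ξ x
      = ∑' ℓ : ℤ, ∑' k : ℤ, a k * b (ℓ - k) := by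
    rw [blochT]
    apply tsum_congr
    intro ℓ
    rw [fhat_mul T hT ((N:ℝ)*T) hP f g hfc hgc hfp (by exact_mod_cast hgp) hfs]
    rw [← tsum_mul_left]
    apply tsum_congr
    intro k
    rw [← hterm ℓ k]
  have step2 : (∑' ℓ : ℤ, ∑' k : ℤ, a k * b (ℓ - k))
      = ∑' p : ℤ × ℤ, a p.2 * b (p.1 - p.2) :=
    (Summable.tsum_prod' Sh (fun ℓ => Sh.prod_factor ℓ)).symm
  have step3 : (∑' p : ℤ × ℤ, a p.2 * b (p.1 - p.2)) = ∑' p : ℤ × ℤ, a p.1 * b p.2 := by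
    rw [← e.tsum_eq (fun p : ℤ × ℤ => a p.2 * b (p.1 - p.2))]
    apply tsum_congr
    rintro ⟨k, m⟩
    simp [he]
  have step4 : (∑' p : ℤ × ℤ, a p.1 * b p.2) = (∑' k, a k) * (∑' m, b m) := by
    rw [Summable.tsum_prod' SabC (fun k => SabC.prod_factor k)]
    calc ∑' k, ∑' m, a k * b m = ∑' k, a k * ∑' m, b m := by
          apply tsum_congr; intro k; exact tsum_mul_left
      _ = (∑' k, a k) * ∑' m, b m := tsum_mul_right
  have hfx : (∑' k, a k) = f x := by
    rw [← (fourier_inversion T hT f hfc hfp hfs x).tsum_eq]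
    apply tsum_congr
    intro k
    simp only [ha]
    ring
  have hbx : (∑' m, b m) = blochT T ((N:ℝ) * T) g ξ x := by
    rw [blochT]
    apply tsum_congr
    intro m
    simp only [hb, hd]
    congr 2
    rw [hξ]
    push_cast
    field_simp
  calc blochT T ((N:ℝ) * T) (fun y => f y * g y) ξ x
      = ∑' ℓ : ℤ, ∑' k : ℤ, a k * b (ℓ - k) := step1
    _ = ∑' p : ℤ × ℤ, a p.2 * b (p.1 - p.2) := step2
    _ = ∑' p : ℤ × ℤ, a p.1 * b p.2 := step3
    _ = (∑' k, a k) * (∑' m, b m) := step4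
    _ = f x * blochT T ((N:ℝ) * T) g ξ x := by rw [hfx, hbx]
end

section
/- Let T > 0 and N ≥ 1 an integer, and let g : ℝ → ℂ be a continuous NT-periodic function with absolutely summable NT-Fourier coefficients. Then for every x ∈ ℝ, g(x) = (1/(NT)) · ∑_{ξ ∈ Ω_N} e^{iξx} · B_T(g)(ξ,x). -/
open Real Finset

lemma mem_JN_iff (N : ℕ) (j : ℤ) :
    j ∈ JN N ↔ ⌈-(N : ℝ) / 2⌉ ≤ j ∧ j < ⌈-(N : ℝ) / 2⌉ + N := by
  have hc : ⌈(N : ℝ) / 2⌉ = ⌈-(N : ℝ) / 2⌉ + N := by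
    have h1 : (N : ℝ) / 2 = -(N : ℝ) / 2 + (N : ℤ) := by push_cast; ring
    rw [h1, Int.ceil_add_intCast]
  simp [JN, Finset.mem_Ico, hc]

/-- The reindexing equivalence `J_N × ℤ ≃ ℤ`, `(j, ℓ) ↦ j + Nℓ`. -/
noncomputable def blochEquiv (N : ℕ) (hN : 1 ≤ N) : {j : ℤ // j ∈ JN N} × ℤ ≃ ℤ where
  toFun p := (p.1 : ℤ) + N * p.2
  invFun k :=
    (⟨⌈-(N : ℝ) / 2⌉ + (k - ⌈-(N : ℝ) / 2⌉) % N, by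
      have hN0 : (0 : ℤ) < (N : ℤ) := by exact_mod_cast hN
      rw [mem_JN_iff]
      constructor
      · have := Int.emod_nonneg (k - ⌈-(N : ℝ) / 2⌉) (by exact_mod_cast hN0.ne' : (N : ℤ) ≠ 0)
        omega
      · have := Int.emod_lt_of_pos (k - ⌈-(N : ℝ) / 2⌉) hN0
        omega⟩, (k - ⌈-(N : ℝ) / 2⌉) / N)
  left_inv := by
    rintro ⟨⟨j, hj⟩, ℓ⟩
    have hN0 : (0 : ℤ) < (N : ℤ) := by exact_mod_cast hN
    rw [mem_JN_iff] at hj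
    set a : ℤ := ⌈-(N : ℝ) / 2⌉ with ha
    have h1 : j + (N : ℤ) * ℓ - a = (j - a) + (N : ℤ) * ℓ := by ring
    have hmod : (j + (N : ℤ) * ℓ - a) % N = j - a := by
      rw [h1, Int.add_mul_emod_self_left, Int.emod_eq_of_lt (by omega) (by omega)]
    have hdiv : (j + (N : ℤ) * ℓ - a) / N = ℓ := by
      rw [h1, Int.add_mul_ediv_left _ _ hN0.ne',
        Int.ediv_eq_zero_of_lt (by omega) (by omega), zero_add]
    ext
    · rw [ha] at hmod; simp only [hmod]; omega
    · simpa using hdiv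
  right_inv := by
    intro k
    have hN0 : (0 : ℤ) < (N : ℤ) := by exact_mod_cast hN
    have h := Int.emod_add_mul_ediv (k - ⌈-(N : ℝ) / 2⌉) (N : ℤ)
    simp only
    linarith

lemma blochEquiv_apply (N : ℕ) (hN : 1 ≤ N) (p : {j : ℤ // j ∈ JN N} × ℤ) :
    blochEquiv N hN p = (p.1 : ℤ) + N * p.2 := rfl
/-- The inverse Bloch representation formula (e:inv_b_rep) of Section 2.2:
`g(x) = (1/(NT)) ∑_{ξ ∈ Ω_N} e^{iξx} B_T(g)(ξ,x)` for `NT`-periodic `g`. -/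
theorem inverse_bloch_representation (T : ℝ) (hT : 0 < T) (N : ℕ) (hN : 1 ≤ N) (g : ℝ → ℂ)
    (hgc : Continuous g) (hgp : Function.Periodic g (N * T))
    (hgs : Summable fun k : ℤ => ‖fhat (N * T) g (2 * π * (k : ℝ) / (N * T))‖) :
    ∀ x : ℝ,
      g x = (1 / ((N : ℂ) * (T : ℂ))) *
        ∑ j ∈ JN N,
          Complex.exp (Complex.I * ((2 * π * (j : ℝ) / (N * T) : ℝ) : ℂ) * (x : ℂ)) *
            blochT T (N * T) g (2 * π * (j : ℝ) / (N * T)) x := by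
  intro x
  set T₀ : ℝ := (N : ℝ) * T with hT₀def
  have hN0 : (0 : ℝ) < N := by exact_mod_cast hN
  have hT₀ : 0 < T₀ := by positivity
  haveI : Fact (0 < T₀) := ⟨hT₀⟩
  have hNne : (N : ℂ) ≠ 0 := by exact_mod_cast hN0.ne'
  have hTne : (T : ℂ) ≠ 0 := by exact_mod_cast hT.ne'
  -- the periodic lift of `g` to the circle
  have hFc : Continuous (hgp.lift) := hgc.quotient_liftOn' _
  set F : C(AddCircle T₀, ℂ) := ⟨hgp.lift, hFc⟩ with hFdef
  -- Fourier coefficients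
  set c : ℤ → ℂ := fun k => fhat T₀ g (2 * π * (k : ℝ) / T₀) with hcdef
  have hcoeff : ∀ k : ℤ, fourierCoeff (F : AddCircle T₀ → ℂ) k = (1 / (T₀ : ℂ)) * c k := by
    intro k
    rw [fourierCoeff_eq_intervalIntegral (F : AddCircle T₀ → ℂ) k 0]
    have hpt : ∀ y : ℝ, (fourier (-k) (y : AddCircle T₀) : ℂ) • (F : AddCircle T₀ → ℂ) (y : ℝ) =
        Complex.exp (-(Complex.I * ((2 * π * (k : ℝ) / T₀ : ℝ) : ℂ) * (y : ℂ))) * g y := by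
      intro y
      have h1 : (F : AddCircle T₀ → ℂ) (y : ℝ) = g y := hgp.lift_coe y
      rw [smul_eq_mul, h1, fourier_coe_apply]
      congr 1
      have hT₀ne : (T₀ : ℂ) ≠ 0 := by exact_mod_cast hT₀.ne'
      push_cast
      field_simp
    simp_rw [hpt]
    simp only [hcdef, fhat, zero_add, Complex.real_smul]
    push_cast
    ring
  have hc : Summable c := Summable.of_norm hgs
  have hFcoeff : Summable (fourierCoeff (F : AddCircle T₀ → ℂ)) := by
    simpa only [funext hcoeff] using hc.mul_left (1 / (T₀ : ℂ))
  -- pointwise Fourier inversion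
  have hsum := has_pointwise_sum_fourier_series_of_summable hFcoeff (x : AddCircle T₀)
  have hFx : (F : AddCircle T₀ → ℂ) (x : ℝ) = g x := hgp.lift_coe x
  set f : ℤ → ℂ := fun k =>
    Complex.exp (2 * (π : ℂ) * Complex.I * (k : ℂ) * (x : ℂ) / (T₀ : ℂ)) * c k with hfdef
  have hterm : ∀ k : ℤ,
      fourierCoeff (F : AddCircle T₀ → ℂ) k • fourier k (x : AddCircle T₀) =
        (1 / (T₀ : ℂ)) * f k := by
    intro k
    rw [hcoeff k, smul_eq_mul, fourier_coe_apply, hfdef]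
    push_cast
    ring
  rw [hFx] at hsum
  simp_rw [hterm] at hsum
  -- summability of `f`
  have hfnorm : ∀ k : ℤ, ‖f k‖ = ‖c k‖ := by
    intro k
    rw [hfdef]
    simp only [norm_mul]
    have he : 2 * (π : ℂ) * Complex.I * (k : ℂ) * (x : ℂ) / (T₀ : ℂ) =
        ((2 * π * (k : ℝ) * x / T₀ : ℝ) : ℂ) * Complex.I := by push_cast; ring
    rw [he, Complex.norm_exp_ofReal_mul_I, one_mul]
  have hf : Summable f := Summable.of_norm (by simpa only [hfnorm] using hgs)
  -- `g x = (1/T₀) * ∑' f`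
  have hgx : g x = (1 / (T₀ : ℂ)) * ∑' k : ℤ, f k :=
    hsum.unique (hf.hasSum.mul_left (1 / (T₀ : ℂ)))
  -- reindex the sum via the Bloch equivalence
  set e := blochEquiv N hN with hedef
  have h1 : ∑' k : ℤ, f k = ∑' p : {j : ℤ // j ∈ JN N} × ℤ, f (e p) := (e.tsum_eq f).symm
  have hfe : Summable (f ∘ e) := hf.comp_injective e.injective
  have h2 : ∑' p : {j : ℤ // j ∈ JN N} × ℤ, f (e p) =
      ∑' j : {j : ℤ // j ∈ JN N}, ∑' ℓ : ℤ, f (e (j, ℓ)) := Summable.tsum_prod' hfe hfe.prod_factor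
  have h3 : ∑' j : {j : ℤ // j ∈ JN N}, ∑' ℓ : ℤ, f (e (j, ℓ)) =
      ∑ j ∈ JN N, ∑' ℓ : ℤ, f ((j : ℤ) + N * ℓ) := by
    rw [tsum_fintype]
    rw [← Finset.sum_coe_sort (JN N) (fun j => ∑' ℓ : ℤ, f ((j : ℤ) + N * ℓ))]
    apply Finset.sum_congr rfl
    intro j _
    apply tsum_congr
    intro ℓ
    rw [hedef, blochEquiv_apply]
  have h4 : ∀ j ∈ JN N,
      ∑' ℓ : ℤ, f ((j : ℤ) + N * ℓ) =
        Complex.exp (Complex.I * ((2 * π * (j : ℝ) / T₀ : ℝ) : ℂ) * (x : ℂ)) *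
          blochT T T₀ g (2 * π * (j : ℝ) / T₀) x := by
    intro j _
    rw [blochT, ← tsum_mul_left]
    apply tsum_congr
    intro ℓ
    have hfreq : 2 * π * (j : ℝ) / T₀ + 2 * π * (ℓ : ℝ) / T =
        2 * π * (((j : ℤ) + (N : ℤ) * ℓ : ℤ) : ℝ) / T₀ := by
      rw [hT₀def]
      push_cast
      field_simp
    rw [hfdef]
    simp only
    rw [← mul_assoc, ← Complex.exp_add, hfreq]
    simp only [hcdef]
    congr 2
    rw [hT₀def]
    push_cast
    field_simp
  have h5 : (1 / (T₀ : ℂ)) = 1 / ((N : ℂ) * (T : ℂ)) := by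
    rw [hT₀def]; push_cast; ring
  rw [hgx, h1, h2, h3, Finset.sum_congr rfl h4, h5]
end

section
/- Let T > 0, d > 0, and let N ≥ 1 be an integer. Define F_N : (0,∞) → ℝ by F_N(t) = t^{3/2} · (2π/(NT)) · ∑_{j ∈ J_N} ξ_j² exp(−2d ξ_j² t), where ξ_j = 2πj/(NT). Then F_N is differentiable on (0,∞) and for every t > 0, F_N′(t) ≤ t^{−1} · (3/2 − 8dπ²t/(N²T²)) · F_N(t). -/
open Real Finset

/-- `F_N(t) = t^{3/2} (2π/(NT)) ∑_{j ∈ J_N} ξ_j² e^{-2d ξ_j² t}` with `ξ_j = 2πj/(NT)`. -/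
noncomputable def FN (T d : ℝ) (N : ℕ) (t : ℝ) : ℝ :=
  t ^ (3 / 2 : ℝ) * (2 * Real.pi / (N * T)) *
    ∑ j ∈ JN N,
      (2 * Real.pi * (j : ℝ) / (N * T)) ^ 2 *
        Real.exp (-2 * d * (2 * Real.pi * (j : ℝ) / (N * T)) ^ 2 * t)

/-- The differential inequality for `F_N` from the end of the Appendix:
`F_N` is differentiable on `(0,∞)` and
`F_N'(t) ≤ t⁻¹ (3/2 - 8dπ²t/(N²T²)) F_N(t)` for all `t > 0`. -/
theorem FN_differential_inequality (T d : ℝ) (hT : 0 < T) (hd : 0 < d)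
    (N : ℕ) (hN : 1 ≤ N) :
    ∀ t : ℝ, 0 < t →
      DifferentiableAt ℝ (FN T d N) t ∧
        deriv (FN T d N) t ≤
          t⁻¹ * (3 / 2 - 8 * d * π ^ 2 * t / (N ^ 2 * T ^ 2)) * FN T d N t := by
  intro t ht
  have hNpos : (0 : ℝ) < N := by exact_mod_cast hN
  have hNT : (0 : ℝ) < N * T := mul_pos hNpos hT
  set a : ℤ → ℝ := fun j => (2 * Real.pi * (j : ℝ) / (N * T)) ^ 2 with ha
  have hg : HasDerivAt
      (fun u => ∑ j ∈ JN N, a j * Real.exp (-2 * d * a j * u))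
      (∑ j ∈ JN N, a j * (Real.exp (-2 * d * a j * t) * (-2 * d * a j))) t := by
    apply HasDerivAt.fun_sum
    intro j _
    have h1 : HasDerivAt (fun u : ℝ => -2 * d * a j * u) (-2 * d * a j) t := by
      simpa using (hasDerivAt_id t).const_mul (-2 * d * a j)
    exact h1.exp.const_mul (a j)
  have hpow : HasDerivAt (fun u : ℝ => u ^ (3 / 2 : ℝ) * (2 * Real.pi / (N * T)))
      ((3 / 2 : ℝ) * t ^ (3 / 2 - 1 : ℝ) * (2 * Real.pi / (N * T))) t :=
    (Real.hasDerivAt_rpow_const (Or.inl ht.ne')).mul_const _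
  have hEq : FN T d N = fun u =>
      u ^ (3 / 2 : ℝ) * (2 * Real.pi / (N * T)) *
        ∑ j ∈ JN N, a j * Real.exp (-2 * d * a j * u) := rfl
  have hF : HasDerivAt (FN T d N)
      ((3 / 2 : ℝ) * t ^ (3 / 2 - 1 : ℝ) * (2 * Real.pi / (N * T)) *
          (∑ j ∈ JN N, a j * Real.exp (-2 * d * a j * t)) +
        t ^ (3 / 2 : ℝ) * (2 * Real.pi / (N * T)) *
          (∑ j ∈ JN N, a j * (Real.exp (-2 * d * a j * t) * (-2 * d * a j)))) t := by
    rw [hEq]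
    exact hpow.mul hg
  refine ⟨hF.differentiableAt, ?_⟩
  rw [hF.deriv]
  -- key termwise inequality
  have key : (∑ j ∈ JN N, a j * (Real.exp (-2 * d * a j * t) * (-2 * d * a j)))
      ≤ (-(8 * d * π ^ 2 / ((N : ℝ) ^ 2 * T ^ 2))) *
        ∑ j ∈ JN N, a j * Real.exp (-2 * d * a j * t) := by
    have hC : (-(8 * d * π ^ 2 / ((N : ℝ) ^ 2 * T ^ 2)))
        = -2 * d * (2 * Real.pi / (N * T)) ^ 2 := by
      field_simp; ring
    rw [hC, Finset.mul_sum]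
    apply Finset.sum_le_sum
    intro j _
    have he : (0 : ℝ) < Real.exp (-2 * d * a j * t) := Real.exp_pos _
    set E := Real.exp (-2 * d * a j * t) with hE
    have hj4 : ((j : ℝ)) ^ 2 ≤ ((j : ℝ)) ^ 4 := by
      rcases eq_or_ne j 0 with rfl | hj
      · norm_num
      · have h1 : (1 : ℤ) ≤ j ^ 2 := by nlinarith [Int.one_le_abs hj, sq_abs j, abs_nonneg j]
        have h1' : (1 : ℝ) ≤ (j : ℝ) ^ 2 := by exact_mod_cast h1
        nlinarith [sq_nonneg ((j : ℝ))]
    have hnn : (0 : ℝ) ≤ 2 * d * ((2 * Real.pi / (N * T)) ^ 2) ^ 2 * E :=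
      mul_nonneg (mul_nonneg (by linarith) (sq_nonneg _)) he.le
    have h := mul_le_mul_of_nonneg_left hj4 hnn
    have haj : a j = (2 * Real.pi / (N * T)) ^ 2 * ((j : ℝ)) ^ 2 := by
      rw [ha]; ring
    rw [haj]
    nlinarith [h]
  have hsplit : t ^ (3 / 2 : ℝ) = t * t ^ (1 / 2 : ℝ) := by
    rw [show (3 / 2 : ℝ) = 1 + 1 / 2 by norm_num, Real.rpow_add ht, Real.rpow_one]
  have hsplit' : t ^ (3 / 2 - 1 : ℝ) = t ^ (1 / 2 : ℝ) := by norm_num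
  simp only [hEq]
  rw [hsplit, hsplit']
  set S1 := ∑ j ∈ JN N, a j * Real.exp (-2 * d * a j * t) with hS1
  set S2 := ∑ j ∈ JN N, a j * (Real.exp (-2 * d * a j * t) * (-2 * d * a j)) with hS2
  have hppos : (0 : ℝ) ≤ t * t ^ (1 / 2 : ℝ) * (2 * Real.pi / (N * T)) := by positivity
  have h2 := mul_le_mul_of_nonneg_left key hppos
  have hR : t⁻¹ * (3 / 2 - 8 * d * π ^ 2 * t / ((N : ℝ) ^ 2 * T ^ 2)) *
        (t * t ^ (1 / 2 : ℝ) * (2 * Real.pi / (N * T)) * S1)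
      = 3 / 2 * t ^ (1 / 2 : ℝ) * (2 * Real.pi / (N * T)) * S1 -
        8 * d * π ^ 2 / ((N : ℝ) ^ 2 * T ^ 2) *
          (t * t ^ (1 / 2 : ℝ) * (2 * Real.pi / (N * T)) * S1) := by
    field_simp
  rw [hR]
  nlinarith [h2]
end
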